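/- arXiv:math/0509544 — 3 statements merged into one kernel-verified Lean document; each statement's English description precedes it below -/
import Mathlib

section
/- Let I ⊆ k[x_1,…,x_n] be an ideal and ≺ a term order. If v ∈ C_≺(I) then the set {in_v(g) : g ∈ G_≺(I)} is the reduced Gröbner basis of the ideal in_v(I) with respect to ≺, i.e. G_≺(in_v(I)) = {in_v(g)}_{g ∈ G_≺(I)}. -/
open MvPolynomial

/-- A term order on the monomials of `k[x_1,…,x_n]`, identified with exponent
vectors in `ℕ^n`: a strict total order with `1` smallest and compatible with
multiplication of monomials. -/
structure TermOrder (n : ℕ) : Type where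
  lt : (Fin n →₀ ℕ) → (Fin n →₀ ℕ) → Prop
  irrefl : ∀ a, ¬ lt a a
  trans : ∀ a b c, lt a b → lt b c → lt a c
  total : ∀ a b, a ≠ b → lt a b ∨ lt b a
  zero_lt : ∀ a, a ≠ 0 → lt 0 a
  add_right : ∀ a b c, lt a b → lt (a + c) (b + c)

variable {n : ℕ} {k : Type*} [Field k]

/-- The exponent of the `τ`-largest term of `f` (and `0` if `f = 0`). -/
noncomputable def TermOrder.leadExp (τ : TermOrder n) (f : MvPolynomial (Fin n) k) :
    Fin n →₀ ℕ :=
  letI := Classical.propDecidable (∃ α, α ∈ f.support ∧ ∀ β ∈ f.support, β ≠ α → τ.lt β α)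
  if h : ∃ α, α ∈ f.support ∧ ∀ β ∈ f.support, β ≠ α → τ.lt β α then h.choose else 0

/-- The initial term `in_τ(f)` : the `τ`-largest term of `f` (with coefficient). -/
noncomputable def TermOrder.initialTerm (τ : TermOrder n) (f : MvPolynomial (Fin n) k) :
    MvPolynomial (Fin n) k :=
  monomial (τ.leadExp f) (f.coeff (τ.leadExp f))

/-- The initial ideal `in_τ(I) = ⟨in_τ(f) : f ∈ I \ {0}⟩`. -/
noncomputable def TermOrder.initialIdeal (τ : TermOrder n) (I : Ideal (MvPolynomial (Fin n) k)) :
    Ideal (MvPolynomial (Fin n) k) :=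
  Ideal.span {p | ∃ f ∈ I, f ≠ 0 ∧ p = τ.initialTerm f}

/-- The `ω`-degree `⟨ω,α⟩` of a monomial exponent `α`. -/
noncomputable def wdeg (ω : Fin n → ℝ) (α : Fin n →₀ ℕ) : ℝ := ∑ i, ω i * (α i : ℝ)

/-- The initial form `in_ω(f)`: the sum of the terms of `f` whose exponents
maximize `⟨ω,·⟩`. -/
noncomputable def initialForm (ω : Fin n → ℝ) (f : MvPolynomial (Fin n) k) :
    MvPolynomial (Fin n) k :=
  letI : DecidablePred fun α : Fin n →₀ ℕ => ∀ β ∈ f.support, wdeg ω β ≤ wdeg ω α :=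
    Classical.decPred _
  ∑ α ∈ f.support.filter (fun α => ∀ β ∈ f.support, wdeg ω β ≤ wdeg ω α),
    monomial α (f.coeff α)

/-- The initial ideal `in_ω(I) = ⟨in_ω(f) : f ∈ I⟩`. -/
noncomputable def initialFormIdeal (ω : Fin n → ℝ) (I : Ideal (MvPolynomial (Fin n) k)) :
    Ideal (MvPolynomial (Fin n) k) :=
  Ideal.span {p | ∃ f ∈ I, p = initialForm ω f}

/-- `C_≺(I)`: the closure of `{u : in_u(I) = in_≺(I)}` in `ℝ^n`. -/
noncomputable def Cprec (τ : TermOrder n) (I : Ideal (MvPolynomial (Fin n) k)) :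
    Set (Fin n → ℝ) :=
  closure {u : Fin n → ℝ | initialFormIdeal u I = τ.initialIdeal I}

/-- `C_v(I)`: the closure of the equivalence class `{u : in_u(I) = in_v(I)}`. -/
noncomputable def Cv (I : Ideal (MvPolynomial (Fin n) k)) (v : Fin n → ℝ) :
    Set (Fin n → ℝ) :=
  closure {u : Fin n → ℝ | initialFormIdeal u I = initialFormIdeal v I}

/-- `F` is a face of `C`: either empty or the set of maximizers over `C` of a
linear functional. -/
def IsFaceOf (C F : Set (Fin n → ℝ)) : Prop :=
  F = ∅ ∨ ∃ w : Fin n → ℝ, F = {x ∈ C | ∀ y ∈ C, ∑ i, w i * y i ≤ ∑ i, w i * x i}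

/-- The Gröbner fan of `I`: all nonempty faces of the cones `C_v(I)`, `v ∈ ℝ^n_{>0}`. -/
noncomputable def GroebnerFan (I : Ideal (MvPolynomial (Fin n) k)) :
    Set (Set (Fin n → ℝ)) :=
  {F | F.Nonempty ∧ ∃ v : Fin n → ℝ, (∀ i, 0 < v i) ∧ IsFaceOf (Cv I v) F}

/-- `G` is a (finite) Gröbner basis of `I` w.r.t. `τ`. -/
def IsGroebnerBasis (τ : TermOrder n) (I : Ideal (MvPolynomial (Fin n) k))
    (G : Set (MvPolynomial (Fin n) k)) : Prop :=
  G.Finite ∧ Ideal.span G = I ∧ τ.initialIdeal I = Ideal.span (τ.initialTerm '' G)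

/-- `G` is the reduced Gröbner basis of `I` w.r.t. `τ`. -/
def IsReducedGroebnerBasis (τ : TermOrder n) (I : Ideal (MvPolynomial (Fin n) k))
    (G : Set (MvPolynomial (Fin n) k)) : Prop :=
  IsGroebnerBasis τ I G ∧
  (∀ g ∈ G, g.coeff (τ.leadExp g) = 1) ∧
  (∀ g ∈ G, ∀ α ∈ g.support, α ≠ τ.leadExp g →
    (monomial α 1 : MvPolynomial (Fin n) k) ∉ τ.initialIdeal I) ∧
  (∀ g ∈ G, Ideal.span (τ.initialTerm '' (G \ {g})) ≠ τ.initialIdeal I)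

/-! ### Auxiliary development -/

section Aux

namespace TermOrder

variable (τ : TermOrder n)

lemma asymm {a b : Fin n →₀ ℕ} (h : τ.lt a b) : ¬ τ.lt b a :=
  fun h' => τ.irrefl a (τ.trans a b a h h')

lemma lt_of_le_of_ne' {a b : Fin n →₀ ℕ} (hab : a ≤ b) (hne : a ≠ b) : τ.lt a b := by
  obtain ⟨c, rfl⟩ := le_iff_exists_add.mp hab
  have hc : c ≠ 0 := by rintro rfl; simp at hne
  have h := τ.add_right 0 c a (τ.zero_lt c hc)
  rw [zero_add, add_comm] at h
  exact h

lemma add_left' {a b : Fin n →₀ ℕ} (c : Fin n →₀ ℕ) (h : τ.lt a b) : τ.lt (c + a) (c + b) := by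
  have h' := τ.add_right a b c h
  rwa [add_comm a c, add_comm b c] at h'

lemma wf : WellFounded τ.lt := by
  letI : IsIrrefl (Fin n →₀ ℕ) τ.lt := ⟨τ.irrefl⟩
  letI : IsTrans (Fin n →₀ ℕ) τ.lt := ⟨τ.trans⟩
  letI : IsStrictOrder (Fin n →₀ ℕ) τ.lt := { }
  rw [RelEmbedding.wellFounded_iff_isEmpty]
  constructor
  intro f
  obtain ⟨m, m', hmm', hle⟩ :=
    wellQuasiOrdered_le (α := Fin n →₀ ℕ) f
  have h1 : τ.lt (f m') (f m) := f.map_rel_iff.mpr hmm'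
  have hne : (f m : Fin n →₀ ℕ) ≠ f m' := by
    intro h
    rw [h] at h1
    exact τ.irrefl _ h1
  exact τ.asymm h1 (τ.lt_of_le_of_ne' hle hne)

lemma exists_strict_max (s : Finset (Fin n →₀ ℕ)) (hs : s.Nonempty) :
    ∃ a ∈ s, ∀ b ∈ s, b ≠ a → τ.lt b a := by
  classical
  induction s using Finset.induction_on with
  | empty => simp at hs
  | insert a t ha ih =>
    rcases t.eq_empty_or_nonempty with rfl | ht
    · refine ⟨a, by simp, ?_⟩
      intro b hb hbne
      simp only [Finset.mem_insert, Finset.notMem_empty, or_false] at hb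
      exact absurd hb hbne
    · obtain ⟨m, hm, hmax⟩ := ih ht
      have hne : a ≠ m := fun h => ha (h ▸ hm)
      rcases τ.total a m hne with h | h
      · refine ⟨m, Finset.mem_insert_of_mem hm, fun b hb hbne => ?_⟩
        rcases Finset.mem_insert.mp hb with rfl | hb'
        · exact h
        · exact hmax b hb' hbne
      · refine ⟨a, Finset.mem_insert_self a t, fun b hb hbne => ?_⟩
        rcases Finset.mem_insert.mp hb with rfl | hb'
        · exact absurd rfl hbne
        · by_cases hbm : b = m
          · exact hbm ▸ h
          · exact τ.trans b m a (hmax b hb' hbm) h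

variable {k : Type*} [Field k]

lemma leadExp_spec {f : MvPolynomial (Fin n) k} (hf : f ≠ 0) :
    τ.leadExp f ∈ f.support ∧ ∀ β ∈ f.support, β ≠ τ.leadExp f → τ.lt β (τ.leadExp f) := by
  have h : ∃ α, α ∈ f.support ∧ ∀ β ∈ f.support, β ≠ α → τ.lt β α := by
    obtain ⟨a, ha, hmax⟩ :=
      τ.exists_strict_max f.support (MvPolynomial.support_nonempty.mpr hf)
    exact ⟨a, ha, hmax⟩
  unfold TermOrder.leadExp
  rw [dif_pos h]
  exact h.choose_spec

lemma leadExp_eq {f : MvPolynomial (Fin n) k} {α : Fin n →₀ ℕ} (h1 : α ∈ f.support)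
    (h2 : ∀ β ∈ f.support, β ≠ α → τ.lt β α) : τ.leadExp f = α := by
  have hf : f ≠ 0 := fun h => by simp [h] at h1
  obtain ⟨hm, hmax⟩ := τ.leadExp_spec hf
  by_contra hne
  exact τ.asymm (h2 _ hm hne) (hmax α h1 (Ne.symm hne))

lemma coeff_leadExp_ne_zero {f : MvPolynomial (Fin n) k} (hf : f ≠ 0) :
    f.coeff (τ.leadExp f) ≠ 0 :=
  MvPolynomial.mem_support_iff.mp (τ.leadExp_spec hf).1

end TermOrder

/-! ### `wdeg` lemmas -/

lemma wdeg_add (ω : Fin n → ℝ) (a b : Fin n →₀ ℕ) :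
    wdeg ω (a + b) = wdeg ω a + wdeg ω b := by
  unfold wdeg
  rw [← Finset.sum_add_distrib]
  refine Finset.sum_congr rfl fun i _ => ?_
  rw [Finsupp.add_apply]
  push_cast
  ring

lemma wdeg_sub (ω : Fin n → ℝ) {a b : Fin n →₀ ℕ} (h : b ≤ a) :
    wdeg ω (a - b) = wdeg ω a - wdeg ω b := by
  have h2 := wdeg_add ω b (a - b)
  rw [add_tsub_cancel_of_le h] at h2
  linarith
/-! ### `initialForm` and `compv` -/

variable {k : Type*} [Field k]

lemma initialForm_zero (v : Fin n → ℝ) : initialForm v (0 : MvPolynomial (Fin n) k) = 0 := by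
  simp [initialForm]

lemma coeff_initialForm (v : Fin n → ℝ) (f : MvPolynomial (Fin n) k) (α : Fin n →₀ ℕ) :
    (initialForm v f).coeff α =
      if (∀ β ∈ f.support, wdeg v β ≤ wdeg v α) then f.coeff α else 0 := by
  classical
  unfold initialForm
  rw [Finset.filter_congr_decidable, MvPolynomial.coeff_sum]
  simp only [MvPolynomial.coeff_monomial]
  rw [Finset.sum_ite_eq']
  by_cases h1 : ∀ β ∈ f.support, wdeg v β ≤ wdeg v α
  · rw [if_pos h1]
    by_cases h2 : α ∈ f.support
    · rw [if_pos (Finset.mem_filter.mpr ⟨h2, h1⟩)]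
    · rw [if_neg (fun hmem => h2 (Finset.mem_filter.mp hmem).1)]
      exact (MvPolynomial.notMem_support_iff.mp h2).symm
  · rw [if_neg h1, if_neg (fun hmem => h1 (Finset.mem_filter.mp hmem).2)]

lemma mem_support_initialForm {v : Fin n → ℝ} {f : MvPolynomial (Fin n) k} {α : Fin n →₀ ℕ} :
    α ∈ (initialForm v f).support ↔
      α ∈ f.support ∧ ∀ β ∈ f.support, wdeg v β ≤ wdeg v α := by
  rw [MvPolynomial.mem_support_iff, coeff_initialForm]
  split_ifs with h
  · exact ⟨fun h0 => ⟨MvPolynomial.mem_support_iff.mpr h0, h⟩,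
      fun h' => MvPolynomial.mem_support_iff.mp h'.1⟩
  · exact ⟨fun h0 => absurd rfl h0, fun h' => absurd h'.2 h⟩

lemma support_initialForm_subset (v : Fin n → ℝ) (f : MvPolynomial (Fin n) k) :
    (initialForm v f).support ⊆ f.support :=
  fun _ hα => (mem_support_initialForm.mp hα).1

lemma initialForm_ne_zero {v : Fin n → ℝ} {f : MvPolynomial (Fin n) k} (hf : f ≠ 0) :
    initialForm v f ≠ 0 := by
  obtain ⟨α, hα, hmax⟩ :=
    f.support.exists_max_image (wdeg v) (MvPolynomial.support_nonempty.mpr hf)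
  have h : α ∈ (initialForm v f).support := mem_support_initialForm.mpr ⟨hα, hmax⟩
  intro h0
  rw [h0] at h
  simp at h

/-- The `v`-homogeneous component of weight `D`. -/
noncomputable def compv (v : Fin n → ℝ) (D : ℝ) (f : MvPolynomial (Fin n) k) :
    MvPolynomial (Fin n) k :=
  letI : DecidablePred fun α : Fin n →₀ ℕ => wdeg v α = D := Classical.decPred _
  ∑ α ∈ f.support.filter (fun α => wdeg v α = D), MvPolynomial.monomial α (f.coeff α)

lemma coeff_compv (v : Fin n → ℝ) (D : ℝ) (f : MvPolynomial (Fin n) k) (α : Fin n →₀ ℕ) :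
    (compv v D f).coeff α = if wdeg v α = D then f.coeff α else 0 := by
  classical
  unfold compv
  rw [Finset.filter_congr_decidable, MvPolynomial.coeff_sum]
  simp only [MvPolynomial.coeff_monomial]
  rw [Finset.sum_ite_eq']
  by_cases h1 : wdeg v α = D
  · rw [if_pos h1]
    by_cases h2 : α ∈ f.support
    · rw [if_pos (Finset.mem_filter.mpr ⟨h2, h1⟩)]
    · rw [if_neg (fun hmem => h2 (Finset.mem_filter.mp hmem).1)]
      exact (MvPolynomial.notMem_support_iff.mp h2).symm
  · rw [if_neg h1]
    rw [if_neg (show α ∉ Finset.filter (fun α => wdeg v α = D) f.support from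
      fun hmem => h1 (Finset.mem_filter.mp hmem).2)]

lemma compv_zero (v : Fin n → ℝ) (D : ℝ) : compv v D (0 : MvPolynomial (Fin n) k) = 0 := by
  unfold compv
  simp

lemma compv_add (v : Fin n → ℝ) (D : ℝ) (f g : MvPolynomial (Fin n) k) :
    compv v D (f + g) = compv v D f + compv v D g := by
  apply MvPolynomial.ext
  intro m
  simp only [coeff_compv, MvPolynomial.coeff_add]
  split_ifs with h
  · rfl
  · rw [add_zero]

lemma compv_sub (v : Fin n → ℝ) (D : ℝ) (f g : MvPolynomial (Fin n) k) :
    compv v D (f - g) = compv v D f - compv v D g := by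
  apply MvPolynomial.ext
  intro m
  simp only [coeff_compv, MvPolynomial.coeff_sub]
  split_ifs with h
  · rfl
  · rw [sub_zero]

lemma mem_support_compv {v : Fin n → ℝ} {D : ℝ} {f : MvPolynomial (Fin n) k} {α : Fin n →₀ ℕ} :
    α ∈ (compv v D f).support ↔ α ∈ f.support ∧ wdeg v α = D := by
  rw [MvPolynomial.mem_support_iff, coeff_compv]
  split_ifs with h
  · exact ⟨fun h0 => ⟨MvPolynomial.mem_support_iff.mpr h0, h⟩,
      fun h' => MvPolynomial.mem_support_iff.mp h'.1⟩
  · exact ⟨fun h0 => absurd rfl h0, fun h' => absurd h'.2 h⟩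

lemma support_compv_subset (v : Fin n → ℝ) (D : ℝ) (f : MvPolynomial (Fin n) k) :
    (compv v D f).support ⊆ f.support :=
  fun _ hα => (mem_support_compv.mp hα).1

lemma compv_eq_zero_of_ne {v : Fin n → ℝ} {D : ℝ} {f : MvPolynomial (Fin n) k}
    (h : ∀ β ∈ f.support, wdeg v β ≠ D) : compv v D f = 0 := by
  apply MvPolynomial.ext
  intro m
  rw [coeff_compv, MvPolynomial.coeff_zero]
  split_ifs with hm
  · by_cases hms : m ∈ f.support
    · exact absurd hm (h m hms)
    · exact MvPolynomial.notMem_support_iff.mp hms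
  · rfl

lemma exists_mem_of_compv_ne_zero {v : Fin n → ℝ} {D : ℝ} {f : MvPolynomial (Fin n) k}
    (h : compv v D f ≠ 0) : ∃ α ∈ f.support, wdeg v α = D := by
  obtain ⟨α, hα⟩ := MvPolynomial.support_nonempty.mpr h
  exact ⟨α, (mem_support_compv.mp hα).1, (mem_support_compv.mp hα).2⟩

lemma compv_monomial_mul (v : Fin n → ℝ) (D : ℝ) (δ : Fin n →₀ ℕ) (c : k)
    (f : MvPolynomial (Fin n) k) :
    compv v D (MvPolynomial.monomial δ c * f) =
      MvPolynomial.monomial δ c * compv v (D - wdeg v δ) f := by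
  apply MvPolynomial.ext
  intro m
  by_cases hle : δ ≤ m
  · have hw : wdeg v m = wdeg v δ + wdeg v (m - δ) := by
      have h2 := wdeg_add v δ (m - δ)
      rw [add_tsub_cancel_of_le hle] at h2
      exact h2
    by_cases hD : wdeg v m = D
    · have h2 : wdeg v (m - δ) = D - wdeg v δ := by linarith
      simp [coeff_compv, MvPolynomial.coeff_monomial_mul', hle, hD, h2]
    · have h2 : ¬ (wdeg v (m - δ) = D - wdeg v δ) := by intro hc; apply hD; linarith
      simp [coeff_compv, MvPolynomial.coeff_monomial_mul', hle, hD, h2]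
  · simp [coeff_compv, MvPolynomial.coeff_monomial_mul', hle]

lemma compv_eq_self {v : Fin n → ℝ} {D : ℝ} {f : MvPolynomial (Fin n) k}
    (h : ∀ α ∈ f.support, wdeg v α = D) : compv v D f = f := by
  apply MvPolynomial.ext
  intro m
  rw [coeff_compv]
  split_ifs with hm
  · rfl
  · by_cases hms : m ∈ f.support
    · exact absurd (h m hms) hm
    · exact (MvPolynomial.notMem_support_iff.mp hms).symm

lemma initialForm_eq_compv {v : Fin n → ℝ} {D : ℝ} {f : MvPolynomial (Fin n) k}
    (hb : ∀ β ∈ f.support, wdeg v β ≤ D) (ha : ∃ α ∈ f.support, wdeg v α = D) :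
    initialForm v f = compv v D f := by
  apply MvPolynomial.ext
  intro m
  rw [coeff_initialForm, coeff_compv]
  obtain ⟨α₀, h₀, hD₀⟩ := ha
  by_cases hm : m ∈ f.support
  · by_cases hc : wdeg v m = D
    · rw [if_pos hc, if_pos (fun β hβ => by rw [hc]; exact hb β hβ)]
    · rw [if_neg hc, if_neg]
      intro hall
      apply hc
      have h1 := hall α₀ h₀
      have h2 := hb m hm
      linarith
  · simp [MvPolynomial.notMem_support_iff.mp hm]

lemma mem_support_monomial_mul {δ : Fin n →₀ ℕ} {c : k} {f : MvPolynomial (Fin n) k}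
    {β : Fin n →₀ ℕ} (h : β ∈ (MvPolynomial.monomial δ c * f).support) :
    δ ≤ β ∧ β - δ ∈ f.support := by
  rw [MvPolynomial.mem_support_iff, MvPolynomial.coeff_monomial_mul'] at h
  by_cases hle : δ ≤ β
  · rw [if_pos hle] at h
    exact ⟨hle, MvPolynomial.mem_support_iff.mpr (fun h0 => h (by rw [h0, mul_zero]))⟩
  · rw [if_neg hle] at h
    exact absurd rfl h

lemma initialForm_monomial_mul (v : Fin n → ℝ) (δ : Fin n →₀ ℕ) {c : k} (hc : c ≠ 0)
    (f : MvPolynomial (Fin n) k) :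
    initialForm v (MvPolynomial.monomial δ c * f) =
      MvPolynomial.monomial δ c * initialForm v f := by
  by_cases hf : f = 0
  · simp [hf, initialForm_zero]
  · obtain ⟨α₀, h₀, hmax⟩ :=
      f.support.exists_max_image (wdeg v) (MvPolynomial.support_nonempty.mpr hf)
    have hb : ∀ β ∈ (MvPolynomial.monomial δ c * f).support,
        wdeg v β ≤ wdeg v δ + wdeg v α₀ := by
      intro β hβ
      obtain ⟨h1, h2⟩ := mem_support_monomial_mul hβ
      have e1 : wdeg v β = wdeg v δ + wdeg v (β - δ) := by
        have h3 := wdeg_add v δ (β - δ)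
        rw [add_tsub_cancel_of_le h1] at h3
        exact h3
      have h4 := hmax _ h2
      linarith
    have hA : δ + α₀ ∈ (MvPolynomial.monomial δ c * f).support := by
      rw [MvPolynomial.mem_support_iff, MvPolynomial.coeff_monomial_mul]
      exact mul_ne_zero hc (MvPolynomial.mem_support_iff.mp h₀)
    rw [initialForm_eq_compv hb ⟨δ + α₀, hA, (wdeg_add v δ α₀).symm ▸ rfl⟩,
        compv_monomial_mul, initialForm_eq_compv (fun β hβ => hmax β hβ) ⟨α₀, h₀, rfl⟩]
    congr 1
    rw [add_sub_cancel_left]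
/-! ### Consequences of being a reduced Gröbner basis -/

section Main

variable {k : Type*} [Field k] {τ : TermOrder n} {I : Ideal (MvPolynomial (Fin n) k)}
  {G : Set (MvPolynomial (Fin n) k)} {v : Fin n → ℝ}

lemma g_mem_I (hG : IsReducedGroebnerBasis τ I G) {g : MvPolynomial (Fin n) k} (hg : g ∈ G) :
    g ∈ I := by
  rw [← hG.1.2.1]
  exact Ideal.subset_span hg

lemma g_ne_zero (hG : IsReducedGroebnerBasis τ I G) {g : MvPolynomial (Fin n) k} (hg : g ∈ G) :
    g ≠ 0 := by
  intro h
  have h1 := hG.2.1 g hg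
  rw [h] at h1
  simp at h1

lemma initialTerm_eq (hG : IsReducedGroebnerBasis τ I G) {g : MvPolynomial (Fin n) k}
    (hg : g ∈ G) : τ.initialTerm g = MvPolynomial.monomial (τ.leadExp g) 1 := by
  rw [TermOrder.initialTerm, hG.2.1 g hg]

lemma initIdeal_eq_span_monomials (hG : IsReducedGroebnerBasis τ I G) :
    τ.initialIdeal I =
      Ideal.span ((fun s => MvPolynomial.monomial s (1 : k)) '' (τ.leadExp '' G)) := by
  rw [hG.1.2.2, Set.image_image]
  congr 1
  exact Set.image_congr fun g hg => initialTerm_eq hG hg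

lemma mem_initIdeal_iff (hG : IsReducedGroebnerBasis τ I G) {p : MvPolynomial (Fin n) k} :
    p ∈ τ.initialIdeal I ↔ ∀ α ∈ p.support, ∃ g ∈ G, τ.leadExp g ≤ α := by
  rw [initIdeal_eq_span_monomials hG, MvPolynomial.mem_ideal_span_monomial_image]
  constructor
  · intro h α hα
    obtain ⟨s, hs, hsle⟩ := h α hα
    obtain ⟨g, hg, rfl⟩ := hs
    exact ⟨g, hg, hsle⟩
  · intro h α hα
    obtain ⟨g, hg, hle⟩ := h α hα
    exact ⟨τ.leadExp g, ⟨g, hg, rfl⟩, hle⟩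

lemma monomial_mem_initIdeal_iff (hG : IsReducedGroebnerBasis τ I G) {α : Fin n →₀ ℕ} {c : k}
    (hc : c ≠ 0) :
    MvPolynomial.monomial α c ∈ τ.initialIdeal I ↔ ∃ g ∈ G, τ.leadExp g ≤ α := by
  rw [mem_initIdeal_iff hG]
  constructor
  · intro h
    exact h α (by
      rw [MvPolynomial.mem_support_iff, MvPolynomial.coeff_monomial, if_pos rfl]
      exact hc)
  · rintro ⟨g, hg, hle⟩ β hβ
    have hβα : β = α := by
      rw [MvPolynomial.mem_support_iff, MvPolynomial.coeff_monomial] at hβ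
      by_cases heq : α = β
      · exact heq.symm
      · rw [if_neg heq] at hβ
        exact absurd rfl hβ
    subst hβα
    exact ⟨g, hg, hle⟩

lemma initialTerm_mem (τ : TermOrder n) {J : Ideal (MvPolynomial (Fin n) k)}
    {f : MvPolynomial (Fin n) k} (hf : f ∈ J) (h0 : f ≠ 0) :
    τ.initialTerm f ∈ τ.initialIdeal J :=
  Ideal.subset_span ⟨f, hf, h0, rfl⟩

lemma initialForm_mem (v : Fin n → ℝ) {J : Ideal (MvPolynomial (Fin n) k)}
    {f : MvPolynomial (Fin n) k} (hf : f ∈ J) :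
    initialForm v f ∈ initialFormIdeal v J :=
  Ideal.subset_span ⟨f, hf, rfl⟩

/-- The key consequence of `v ∈ C_≺(I)`: for every `g` in the reduced Gröbner basis, the
`≺`-leading exponent of `g` maximizes the `v`-weight over the support of `g`. -/
lemma star (hG : IsReducedGroebnerBasis τ I G) (hv : v ∈ Cprec τ I) :
    ∀ g ∈ G, ∀ α ∈ g.support, wdeg v α ≤ wdeg v (τ.leadExp g) := by
  intro g hg α hα
  have hv' : v ∈ closure {u : Fin n → ℝ | initialFormIdeal u I = τ.initialIdeal I} := hv
  have hcont : ∀ γ : Fin n →₀ ℕ, Continuous fun u : Fin n → ℝ => wdeg u γ := by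
    intro γ
    show Continuous fun u : Fin n → ℝ => ∑ i, u i * (γ i : ℝ)
    exact continuous_finset_sum _ fun i _ => (continuous_apply i).mul continuous_const
  have hTclosed : IsClosed {u : Fin n → ℝ | wdeg u α ≤ wdeg u (τ.leadExp g)} :=
    isClosed_le (hcont α) (hcont (τ.leadExp g))
  have hsub : {u : Fin n → ℝ | initialFormIdeal u I = τ.initialIdeal I} ⊆
      {u : Fin n → ℝ | wdeg u α ≤ wdeg u (τ.leadExp g)} := by
    intro u hu
    have hgI : g ∈ I := g_mem_I hG hg
    have hg0 : g ≠ 0 := g_ne_zero hG hg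
    have hmem : initialForm u g ∈ τ.initialIdeal I := by
      rw [← hu]
      exact initialForm_mem u hgI
    obtain ⟨β, hβ, hβmax⟩ :=
      g.support.exists_max_image (wdeg u) (MvPolynomial.support_nonempty.mpr hg0)
    have hβin : β ∈ (initialForm u g).support := mem_support_initialForm.mpr ⟨hβ, hβmax⟩
    have hβeq : β = τ.leadExp g := by
      by_contra hne
      have h1 : MvPolynomial.monomial β (1 : k) ∈ τ.initialIdeal I := by
        rw [monomial_mem_initIdeal_iff hG one_ne_zero]
        exact (mem_initIdeal_iff hG).mp hmem β hβin
      exact hG.2.2.1 g hg β hβ hne h1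
    show wdeg u α ≤ wdeg u (τ.leadExp g)
    rw [← hβeq]
    exact hβmax α hα
  exact closure_minimal hsub hTclosed hv'

lemma leadExp_initialForm_g (hG : IsReducedGroebnerBasis τ I G) (hv : v ∈ Cprec τ I)
    {g : MvPolynomial (Fin n) k} (hg : g ∈ G) :
    τ.leadExp (initialForm v g) = τ.leadExp g := by
  have hg0 := g_ne_zero hG hg
  have hmem : τ.leadExp g ∈ (initialForm v g).support :=
    mem_support_initialForm.mpr ⟨(τ.leadExp_spec hg0).1, star hG hv g hg⟩
  apply τ.leadExp_eq hmem
  intro β hβ hne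
  exact (τ.leadExp_spec hg0).2 β (support_initialForm_subset v g hβ) hne

lemma coeff_initialForm_leadExp (hG : IsReducedGroebnerBasis τ I G) (hv : v ∈ Cprec τ I)
    {g : MvPolynomial (Fin n) k} (hg : g ∈ G) :
    (initialForm v g).coeff (τ.leadExp (initialForm v g)) = 1 := by
  rw [leadExp_initialForm_g hG hv hg, coeff_initialForm, if_pos (star hG hv g hg)]
  exact hG.2.1 g hg

lemma initialTerm_initialForm_g (hG : IsReducedGroebnerBasis τ I G) (hv : v ∈ Cprec τ I)
    {g : MvPolynomial (Fin n) k} (hg : g ∈ G) :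
    τ.initialTerm (initialForm v g) = τ.initialTerm g := by
  rw [TermOrder.initialTerm, TermOrder.initialTerm, leadExp_initialForm_g hG hv hg,
    coeff_initialForm, if_pos (star hG hv g hg)]

end Main
section Main2

variable {k : Type*} [Field k] {τ : TermOrder n} {I : Ideal (MvPolynomial (Fin n) k)}
  {G : Set (MvPolynomial (Fin n) k)} {v : Fin n → ℝ}

lemma reduce_lt (τ : TermOrder n) {f g : MvPolynomial (Fin n) k} (hf : f ≠ 0) (hg : g ≠ 0)
    (hg1 : g.coeff (τ.leadExp g) = 1) (hle : τ.leadExp g ≤ τ.leadExp f) :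
    ∀ β ∈ (f - MvPolynomial.monomial (τ.leadExp f - τ.leadExp g)
        (f.coeff (τ.leadExp f)) * g).support,
      τ.lt β (τ.leadExp f) := by
  intro β hβ
  have hδ : (τ.leadExp f - τ.leadExp g) + τ.leadExp g = τ.leadExp f := by
    rw [tsub_add_cancel_of_le hle]
  have hβne : β ≠ τ.leadExp f := by
    rintro rfl
    rw [MvPolynomial.mem_support_iff, MvPolynomial.coeff_sub] at hβ
    apply hβ
    have hcf : (MvPolynomial.monomial (τ.leadExp f - τ.leadExp g)
        (f.coeff (τ.leadExp f)) * g).coeff (τ.leadExp f) = f.coeff (τ.leadExp f) := by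
      have hmm := MvPolynomial.coeff_monomial_mul (τ.leadExp g) (τ.leadExp f - τ.leadExp g)
        (f.coeff (τ.leadExp f)) g
      rw [hδ, hg1, mul_one] at hmm
      exact hmm
    rw [hcf, sub_self]
  rw [MvPolynomial.mem_support_iff, MvPolynomial.coeff_sub] at hβ
  by_cases h1 : β ∈ f.support
  · exact (τ.leadExp_spec hf).2 β h1 hβne
  · have h2 : (MvPolynomial.monomial (τ.leadExp f - τ.leadExp g)
        (f.coeff (τ.leadExp f)) * g).coeff β ≠ 0 := by
      intro h0
      apply hβ
      rw [MvPolynomial.notMem_support_iff.mp h1, h0, sub_zero]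
    obtain ⟨hle2, hmem2⟩ := mem_support_monomial_mul (MvPolynomial.mem_support_iff.mpr h2)
    by_cases h3 : β - (τ.leadExp f - τ.leadExp g) = τ.leadExp g
    · exfalso
      apply hβne
      have h4 : (τ.leadExp f - τ.leadExp g) + (β - (τ.leadExp f - τ.leadExp g)) = β :=
        add_tsub_cancel_of_le hle2
      rw [h3] at h4
      exact h4.symm.trans hδ
    · have h4 : τ.lt (β - (τ.leadExp f - τ.leadExp g)) (τ.leadExp g) :=
        (τ.leadExp_spec hg).2 _ hmem2 h3
      have h5 := τ.add_left' (τ.leadExp f - τ.leadExp g) h4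
      rwa [add_tsub_cancel_of_le hle2, hδ] at h5

/-- The central well-founded induction: for `v ∈ C_≺(I)` and any nonzero `h ∈ I`,
the initial form `in_v(h)` lies in the span of `{in_v(g)}_{g ∈ G}`, and its
`≺`-initial term lies in `in_≺(I)`. -/
lemma main_ind (hG : IsReducedGroebnerBasis τ I G) (hv : v ∈ Cprec τ I) :
    ∀ h : MvPolynomial (Fin n) k, h ∈ I → h ≠ 0 →
      initialForm v h ∈ Ideal.span (initialForm v '' G) ∧
      τ.initialTerm (initialForm v h) ∈ τ.initialIdeal I := by
  have key : ∀ μ : Fin n →₀ ℕ, ∀ h : MvPolynomial (Fin n) k, h ∈ I → h ≠ 0 →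
      τ.leadExp h = μ →
      initialForm v h ∈ Ideal.span (initialForm v '' G) ∧
      τ.initialTerm (initialForm v h) ∈ τ.initialIdeal I := by
    intro μ
    refine τ.wf.induction
      (C := fun μ => ∀ h : MvPolynomial (Fin n) k, h ∈ I → h ≠ 0 → τ.leadExp h = μ →
        initialForm v h ∈ Ideal.span (initialForm v '' G) ∧
        τ.initialTerm (initialForm v h) ∈ τ.initialIdeal I) μ ?_
    intro μ IH h hI h0 hμ
    subst hμ
    have hcne : h.coeff (τ.leadExp h) ≠ 0 := τ.coeff_leadExp_ne_zero h0
    obtain ⟨g, hg, hgle⟩ : ∃ g ∈ G, τ.leadExp g ≤ τ.leadExp h := by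
      rw [← monomial_mem_initIdeal_iff hG hcne]
      have hmem := initialTerm_mem τ hI h0
      rwa [TermOrder.initialTerm] at hmem
    have hδ : (τ.leadExp h - τ.leadExp g) + τ.leadExp g = τ.leadExp h :=
      tsub_add_cancel_of_le hgle
    set c := h.coeff (τ.leadExp h) with hc
    set δ := τ.leadExp h - τ.leadExp g with hδdef
    set p := MvPolynomial.monomial δ c * g with hp
    have hg0 := g_ne_zero hG hg
    have hgI := g_mem_I hG hg
    have hpI : p ∈ I := Ideal.mul_mem_left _ _ hgI
    have hpsupp : ∀ β ∈ p.support, wdeg v β ≤ wdeg v (τ.leadExp h) := by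
      intro β hβ
      obtain ⟨h1, h2⟩ := mem_support_monomial_mul hβ
      have e1 : wdeg v β = wdeg v δ + wdeg v (β - δ) := by
        have h3 := wdeg_add v δ (β - δ)
        rw [add_tsub_cancel_of_le h1] at h3
        exact h3
      have e2 : wdeg v δ + wdeg v (τ.leadExp g) = wdeg v (τ.leadExp h) := by
        rw [← wdeg_add, hδ]
      have e3 := star hG hv g hg (β - δ) h2
      linarith
    obtain ⟨α₀, hα₀, hα₀max⟩ :=
      h.support.exists_max_image (wdeg v) (MvPolynomial.support_nonempty.mpr h0)
    have hμsupp : τ.leadExp h ∈ h.support := (τ.leadExp_spec h0).1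
    have hμT : wdeg v (τ.leadExp h) ≤ wdeg v α₀ := hα₀max _ hμsupp
    set T := wdeg v α₀ with hT
    set h' := h - p with hh'
    have hh'I : h' ∈ I := Ideal.sub_mem _ hI hpI
    have hh'lt : ∀ β ∈ h'.support, τ.lt β (τ.leadExp h) :=
      reduce_lt τ h0 hg0 (hG.2.1 g hg) hgle
    have hbh : ∀ β ∈ h.support, wdeg v β ≤ T := fun β hβ => hα₀max β hβ
    have hbp : ∀ β ∈ p.support, wdeg v β ≤ T := fun β hβ => le_trans (hpsupp β hβ) hμT
    have hbh' : ∀ β ∈ h'.support, wdeg v β ≤ T := by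
      intro β hβ
      rcases Finset.mem_union.mp (MvPolynomial.support_sub (Fin n) h p hβ) with h1 | h1
      · exact hbh β h1
      · exact hbp β h1
    have hvih : initialForm v h = compv v T h := initialForm_eq_compv hbh ⟨α₀, hα₀, rfl⟩
    have hch' : compv v T h' = initialForm v h - compv v T p := by
      rw [hh', compv_sub, hvih]
    by_cases hcase : ∀ β ∈ h.support, wdeg v β ≤ wdeg v (τ.leadExp h)
    · -- Case 1 : the `≺`-leading exponent is `v`-maximal in `h`.
      have hTμ : T = wdeg v (τ.leadExp h) := le_antisymm (hcase α₀ hα₀) hμT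
      have hlead : τ.leadExp (initialForm v h) = τ.leadExp h := by
        apply τ.leadExp_eq (mem_support_initialForm.mpr ⟨hμsupp, hcase⟩)
        intro β hβ hne
        exact (τ.leadExp_spec h0).2 β (support_initialForm_subset v h hβ) hne
      have hinit : τ.initialTerm (initialForm v h) ∈ τ.initialIdeal I := by
        rw [TermOrder.initialTerm, hlead, coeff_initialForm, if_pos hcase]
        rw [monomial_mem_initIdeal_iff hG hcne]
        exact ⟨g, hg, hgle⟩
      have hpμ : τ.leadExp h ∈ p.support := by
        rw [MvPolynomial.mem_support_iff, ← hδ, hp, MvPolynomial.coeff_monomial_mul,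
          hG.2.1 g hg, mul_one]
        exact hcne
      have hvp : initialForm v p = compv v T p :=
        initialForm_eq_compv hbp ⟨τ.leadExp h, hpμ, hTμ.symm⟩
      have hpspan : compv v T p ∈ Ideal.span (initialForm v '' G) := by
        rw [← hvp, hp, initialForm_monomial_mul v δ hcne g]
        exact Ideal.mul_mem_left _ _ (Ideal.subset_span ⟨g, hg, rfl⟩)
      by_cases hz : compv v T h' = 0
      · refine ⟨?_, hinit⟩
        have he : initialForm v h = compv v T p := by
          rw [hz] at hch'
          exact (sub_eq_zero.mp hch'.symm)
        rw [he]
        exact hpspan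
      · have hh'0 : h' ≠ 0 := by
          intro h00
          rw [h00, compv_zero] at hz
          exact hz rfl
        have hltlead : τ.lt (τ.leadExp h') (τ.leadExp h) := hh'lt _ (τ.leadExp_spec hh'0).1
        obtain ⟨ih1, _⟩ := IH (τ.leadExp h') hltlead h' hh'I hh'0 rfl
        have hvh' : initialForm v h' = compv v T h' :=
          initialForm_eq_compv hbh' (exists_mem_of_compv_ne_zero hz)
        refine ⟨?_, hinit⟩
        have he : initialForm v h = initialForm v h' + compv v T p := by
          rw [hvh', hch']
          ring
        rw [he]
        exact Ideal.add_mem _ ih1 hpspan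
    · -- Case 2 : some term of `h` has strictly larger `v`-weight.
      push_neg at hcase
      obtain ⟨β₁, hβ₁, hβ₁gt⟩ := hcase
      have hTgt : wdeg v (τ.leadExp h) < T := lt_of_lt_of_le hβ₁gt (hbh β₁ hβ₁)
      have hpz : compv v T p = 0 :=
        compv_eq_zero_of_ne (fun β hβ => ne_of_lt (lt_of_le_of_lt (hpsupp β hβ) hTgt))
      have hch'' : compv v T h' = initialForm v h := by rw [hch', hpz, sub_zero]
      have hz : compv v T h' ≠ 0 := by
        rw [hch'']
        exact initialForm_ne_zero h0
      have hh'0 : h' ≠ 0 := by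
        intro h00
        rw [h00, compv_zero] at hz
        exact hz rfl
      have hltlead : τ.lt (τ.leadExp h') (τ.leadExp h) := hh'lt _ (τ.leadExp_spec hh'0).1
      obtain ⟨ih1, ih2⟩ := IH (τ.leadExp h') hltlead h' hh'I hh'0 rfl
      have hvh' : initialForm v h' = initialForm v h := by
        rw [initialForm_eq_compv hbh' (exists_mem_of_compv_ne_zero hz), hch'']
      rw [← hvh']
      exact ⟨ih1, ih2⟩
  exact fun h hI h0 => key (τ.leadExp h) h hI h0 rfl

end Main2
section Main3

variable {k : Type*} [Field k] {τ : TermOrder n} {I : Ideal (MvPolynomial (Fin n) k)}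
  {G : Set (MvPolynomial (Fin n) k)} {v : Fin n → ℝ}

/-- Every `v`-homogeneous component of an element of `in_v(I)` agrees with the corresponding
component of some element of `I` whose support is `v`-bounded by that degree. -/
def Pprop (v : Fin n → ℝ) (I : Ideal (MvPolynomial (Fin n) k))
    (x : MvPolynomial (Fin n) k) : Prop :=
  ∀ D : ℝ, ∃ f ∈ I, compv v D x = compv v D f ∧ ∀ α ∈ f.support, wdeg v α ≤ D

lemma Pprop_zero : Pprop v I (0 : MvPolynomial (Fin n) k) :=
  fun D => ⟨0, Ideal.zero_mem I, rfl, by simp⟩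

lemma Pprop_add {x y : MvPolynomial (Fin n) k} (hx : Pprop v I x) (hy : Pprop v I y) :
    Pprop v I (x + y) := by
  intro D
  obtain ⟨f, hf, he, hb⟩ := hx D
  obtain ⟨f', hf', he', hb'⟩ := hy D
  refine ⟨f + f', Ideal.add_mem I hf hf', ?_, ?_⟩
  · rw [compv_add, compv_add, he, he']
  · intro α hα
    rcases Finset.mem_union.mp (MvPolynomial.support_add hα) with h1 | h1
    · exact hb α h1
    · exact hb' α h1

lemma Pprop_monomial_mul {x : MvPolynomial (Fin n) k} (β : Fin n →₀ ℕ) (c : k)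
    (hx : Pprop v I x) : Pprop v I (MvPolynomial.monomial β c * x) := by
  intro D
  obtain ⟨f, hf, he, hb⟩ := hx (D - wdeg v β)
  refine ⟨MvPolynomial.monomial β c * f, Ideal.mul_mem_left _ _ hf, ?_, ?_⟩
  · rw [compv_monomial_mul, compv_monomial_mul, he]
  · intro α hα
    obtain ⟨h1, h2⟩ := mem_support_monomial_mul hα
    have e1 : wdeg v α = wdeg v β + wdeg v (α - β) := by
      have h3 := wdeg_add v β (α - β)
      rw [add_tsub_cancel_of_le h1] at h3
      exact h3
    have h4 := hb _ h2
    linarith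

lemma Pprop_all : ∀ x ∈ initialFormIdeal v I, Pprop v I x := by
  intro x hx
  refine Submodule.span_induction (p := fun x _ => Pprop v I x) ?_ ?_ ?_ ?_ hx
  · rintro p ⟨f, hf, rfl⟩
    intro D
    by_cases hD : ∃ α ∈ (initialForm v f).support, wdeg v α = D
    · obtain ⟨α₁, hα₁, hα₁D⟩ := hD
      obtain ⟨hαf, hαmax⟩ := mem_support_initialForm.mp hα₁
      have hb : ∀ β ∈ f.support, wdeg v β ≤ D := fun β hβ => hα₁D ▸ hαmax β hβ
      have h1 : compv v D (initialForm v f) = initialForm v f := by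
        apply compv_eq_self
        intro γ hγ
        obtain ⟨hγf, hγmax⟩ := mem_support_initialForm.mp hγ
        exact le_antisymm (hb γ hγf) (by rw [← hα₁D]; exact hγmax α₁ hαf)
      refine ⟨f, hf, ?_, hb⟩
      rw [h1, initialForm_eq_compv hb ⟨α₁, hαf, hα₁D⟩]
    · push_neg at hD
      refine ⟨0, Ideal.zero_mem I, ?_, by simp⟩
      have h1 : compv v D (initialForm v f) = 0 := compv_eq_zero_of_ne hD
      rw [h1, compv_zero]
  · exact Pprop_zero
  · exact fun x y _ _ hx hy => Pprop_add hx hy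
  · intro a x hxmem hx
    rw [smul_eq_mul]
    induction a using MvPolynomial.induction_on' with
    | monomial u c => exact Pprop_monomial_mul u c hx
    | add p q hp hq =>
      rw [add_mul]
      exact Pprop_add hp hq

lemma compv_mem_eq_initialForm {x : MvPolynomial (Fin n) k}
    (hx : x ∈ initialFormIdeal v I) {D : ℝ} (h0 : compv v D x ≠ 0) :
    ∃ f ∈ I, f ≠ 0 ∧ initialForm v f = compv v D x := by
  obtain ⟨f, hf, he, hb⟩ := Pprop_all x hx D
  rw [he] at h0 ⊢
  have hf0 : f ≠ 0 := by
    rintro rfl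
    rw [compv_zero] at h0
    exact h0 rfl
  exact ⟨f, hf, hf0, initialForm_eq_compv hb (exists_mem_of_compv_ne_zero h0)⟩

lemma initIdeal_initialFormIdeal_le (hG : IsReducedGroebnerBasis τ I G) (hv : v ∈ Cprec τ I) :
    τ.initialIdeal (initialFormIdeal v I) ≤ τ.initialIdeal I := by
  refine Ideal.span_le.mpr ?_
  rintro q ⟨h, hh, h0, rfl⟩
  have hμs : τ.leadExp h ∈ h.support := (τ.leadExp_spec h0).1
  set μ := τ.leadExp h with hμdef
  set D := wdeg v μ with hD
  have hq0 : compv v D h ≠ 0 := by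
    intro hq
    have h1 := coeff_compv v D h μ
    rw [hq, MvPolynomial.coeff_zero, if_pos rfl] at h1
    exact (MvPolynomial.mem_support_iff.mp hμs) h1.symm
  obtain ⟨f, hf, hf0, hfe⟩ := compv_mem_eq_initialForm hh hq0
  have hμq : μ ∈ (compv v D h).support :=
    mem_support_compv.mpr ⟨hμs, rfl⟩
  have hlead : τ.leadExp (compv v D h) = μ := by
    apply τ.leadExp_eq hμq
    intro β hβ hne
    exact (τ.leadExp_spec h0).2 β (support_compv_subset v D h hβ) hne
  have heq : τ.initialTerm h = τ.initialTerm (compv v D h) := by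
    rw [TermOrder.initialTerm, TermOrder.initialTerm, hlead, coeff_compv, if_pos rfl]
  rw [heq, ← hfe]
  exact (main_ind hG hv f hf hf0).2

lemma spanA (hG : IsReducedGroebnerBasis τ I G) (hv : v ∈ Cprec τ I) :
    initialFormIdeal v I ≤ Ideal.span (initialForm v '' G) := by
  have key : ∀ μ : Fin n →₀ ℕ, ∀ h : MvPolynomial (Fin n) k,
      h ∈ initialFormIdeal v I → h ≠ 0 → τ.leadExp h = μ →
      h ∈ Ideal.span (initialForm v '' G) := by
    intro μ
    refine τ.wf.induction
      (C := fun μ => ∀ h : MvPolynomial (Fin n) k, h ∈ initialFormIdeal v I → h ≠ 0 →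
        τ.leadExp h = μ → h ∈ Ideal.span (initialForm v '' G)) μ ?_
    intro μ IH h hh h0 hμ
    subst hμ
    have hcne : h.coeff (τ.leadExp h) ≠ 0 := τ.coeff_leadExp_ne_zero h0
    obtain ⟨g, hg, hgle⟩ : ∃ g ∈ G, τ.leadExp g ≤ τ.leadExp h := by
      rw [← monomial_mem_initIdeal_iff hG hcne]
      apply initIdeal_initialFormIdeal_le hG hv
      have hmem := initialTerm_mem τ hh h0
      rwa [TermOrder.initialTerm] at hmem
    set w := initialForm v g with hw
    have hw0 : w ≠ 0 := initialForm_ne_zero (g_ne_zero hG hg)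
    have hwlead : τ.leadExp w = τ.leadExp g := leadExp_initialForm_g hG hv hg
    have hwc : w.coeff (τ.leadExp w) = 1 := coeff_initialForm_leadExp hG hv hg
    have hwle : τ.leadExp w ≤ τ.leadExp h := hwlead ▸ hgle
    set h' := h - MvPolynomial.monomial (τ.leadExp h - τ.leadExp w)
      (h.coeff (τ.leadExp h)) * w with hh'
    have hred := reduce_lt τ h0 hw0 hwc hwle
    have hwmem : w ∈ initialFormIdeal v I := initialForm_mem v (g_mem_I hG hg)
    have hwspan : w ∈ Ideal.span (initialForm v '' G) := Ideal.subset_span ⟨g, hg, rfl⟩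
    have hh'mem : h' ∈ initialFormIdeal v I :=
      Ideal.sub_mem _ hh (Ideal.mul_mem_left _ _ hwmem)
    by_cases hz : h' = 0
    · have he : h = MvPolynomial.monomial (τ.leadExp h - τ.leadExp w)
          (h.coeff (τ.leadExp h)) * w := sub_eq_zero.mp hz
      rw [he]
      exact Ideal.mul_mem_left _ _ hwspan
    · have hlt : τ.lt (τ.leadExp h') (τ.leadExp h) := hred _ (τ.leadExp_spec hz).1
      have hmem' := IH (τ.leadExp h') hlt h' hh'mem hz rfl
      have heq : h = h' + MvPolynomial.monomial (τ.leadExp h - τ.leadExp w)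
          (h.coeff (τ.leadExp h)) * w := by
        rw [hh']
        ring
      rw [heq]
      exact Ideal.add_mem _ hmem' (Ideal.mul_mem_left _ _ hwspan)
  intro x hx
  by_cases hx0 : x = 0
  · rw [hx0]
    exact Ideal.zero_mem _
  · exact key (τ.leadExp x) x hx hx0 rfl

lemma leadExp_injOn (hG : IsReducedGroebnerBasis τ I G) :
    ∀ g₁ ∈ G, ∀ g₂ ∈ G, τ.leadExp g₁ = τ.leadExp g₂ → g₁ = g₂ := by
  intro g₁ h₁ g₂ h₂ he
  by_contra hne
  apply hG.2.2.2 g₁ h₁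
  rw [hG.1.2.2]
  apply le_antisymm
  · exact Ideal.span_mono (Set.image_mono Set.diff_subset)
  · refine Ideal.span_le.mpr ?_
    rintro q ⟨g, hgmem, rfl⟩
    by_cases hgg : g = g₁
    · subst hgg
      have heq : τ.initialTerm g = τ.initialTerm g₂ := by
        rw [initialTerm_eq hG h₁, initialTerm_eq hG h₂, he]
      rw [heq]
      refine Ideal.subset_span ⟨g₂, ⟨h₂, ?_⟩, rfl⟩
      intro hmem
      rw [Set.mem_singleton_iff] at hmem
      exact hne (hmem ▸ rfl)
    · exact Ideal.subset_span ⟨g, ⟨hgmem, fun hmem => hgg (Set.mem_singleton_iff.mp hmem)⟩, rfl⟩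

lemma initialForm_injOn (hG : IsReducedGroebnerBasis τ I G) (hv : v ∈ Cprec τ I) :
    ∀ g₁ ∈ G, ∀ g₂ ∈ G, initialForm v g₁ = initialForm v g₂ → g₁ = g₂ := by
  intro g₁ h₁ g₂ h₂ he
  apply leadExp_injOn hG g₁ h₁ g₂ h₂
  rw [← leadExp_initialForm_g hG hv h₁, ← leadExp_initialForm_g hG hv h₂, he]

end Main3
end Aux

/-- If `v ∈ C_≺(I)` then `{in_v(g) : g ∈ G_≺(I)}` is the reduced Gröbner basis
of `in_v(I)` with respect to `≺`. -/
theorem initialForm_image_isReducedGroebnerBasis (τ : TermOrder n)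
    (I : Ideal (MvPolynomial (Fin n) k)) (v : Fin n → ℝ) (hv : v ∈ Cprec τ I)
    (G : Set (MvPolynomial (Fin n) k)) (hG : IsReducedGroebnerBasis τ I G) :
    IsReducedGroebnerBasis τ (initialFormIdeal v I) (initialForm v '' G) := by
  have hA : Ideal.span (initialForm v '' G) = initialFormIdeal v I := by
    apply le_antisymm
    · refine Ideal.span_le.mpr ?_
      rintro q ⟨g, hg, rfl⟩
      exact initialForm_mem v (g_mem_I hG hg)
    · exact spanA hG hv
  have himg : τ.initialTerm '' (initialForm v '' G) = τ.initialTerm '' G := by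
    rw [Set.image_image]
    exact Set.image_congr fun g hg => initialTerm_initialForm_g hG hv hg
  have hB : τ.initialIdeal (initialFormIdeal v I) = τ.initialIdeal I := by
    apply le_antisymm (initIdeal_initialFormIdeal_le hG hv)
    rw [hG.1.2.2]
    refine Ideal.span_le.mpr ?_
    rintro q ⟨g, hg, rfl⟩
    rw [← initialTerm_initialForm_g hG hv hg]
    exact initialTerm_mem τ (initialForm_mem v (g_mem_I hG hg))
      (initialForm_ne_zero (g_ne_zero hG hg))
  refine ⟨⟨hG.1.1.image _, hA, ?_⟩, ?_, ?_, ?_⟩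
  · rw [hB, himg]
    exact hG.1.2.2
  · rintro g' ⟨g, hg, rfl⟩
    exact coeff_initialForm_leadExp hG hv hg
  · rintro g' ⟨g, hg, rfl⟩ α hα hne
    rw [hB]
    have hαg : α ∈ g.support := support_initialForm_subset v g hα
    have hne' : α ≠ τ.leadExp g := by rwa [leadExp_initialForm_g hG hv hg] at hne
    exact hG.2.2.1 g hg α hαg hne'
  · rintro g' ⟨g, hg, rfl⟩
    rw [hB]
    have hdiff : (initialForm v '' G) \ {initialForm v g} = initialForm v '' (G \ {g}) := by
      ext q
      constructor
      · rintro ⟨⟨g₁, hg₁, rfl⟩, hq2⟩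
        refine ⟨g₁, ⟨hg₁, ?_⟩, rfl⟩
        intro hmem
        rw [Set.mem_singleton_iff] at hmem
        exact hq2 (Set.mem_singleton_iff.mpr (by rw [hmem]))
      · rintro ⟨g₁, ⟨hg₁, hg₁ne⟩, rfl⟩
        refine ⟨⟨g₁, hg₁, rfl⟩, ?_⟩
        intro hmem
        rw [Set.mem_singleton_iff] at hmem
        exact hg₁ne
          (Set.mem_singleton_iff.mpr (initialForm_injOn hG hv g₁ hg₁ g hg hmem))
    rw [hdiff]
    have himg2 : τ.initialTerm '' (initialForm v '' (G \ {g})) =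
        τ.initialTerm '' (G \ {g}) := by
      rw [Set.image_image]
      exact Set.image_congr fun g₁ hg₁ => initialTerm_initialForm_g hG hv hg₁.1
    rw [himg2]
    exact hG.2.2.2 g hg
end

section
/- Let I ⊆ k[x_1,…,x_n] be an ideal, v ∈ ℝ^n_{>0}, and C a nonempty face of the cone C_v(I) (a cone in the Gröbner fan of I). If w ∈ C and u ∈ ℝ^n satisfies in_u(I) = in_w(I), then u ∈ C. -/
open MvPolynomial

variable {n : ℕ} {k : Type*} [Field k]

namespace GFaux

open Classical in
/-- Key used to compare exponents: first the `v`-weight, then lexicographically. -/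
noncomputable def key (v : Fin n → ℝ) (α : Fin n →₀ ℕ) : ℝ ×ₗ Lex (Fin n →₀ ℕ) :=
  toLex (wdeg v α, toLex α)

theorem wdeg_add (v : Fin n → ℝ) (a b : Fin n →₀ ℕ) :
    wdeg v (a + b) = wdeg v a + wdeg v b := by
  simp only [wdeg, Finsupp.add_apply]
  rw [← Finset.sum_add_distrib]
  congr 1; ext i; push_cast; ring

theorem wdeg_nonneg {v : Fin n → ℝ} (hv : ∀ i, 0 < v i) (a : Fin n →₀ ℕ) :
    0 ≤ wdeg v a := by
  apply Finset.sum_nonneg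
  intro i _
  exact mul_nonneg (hv i).le (Nat.cast_nonneg _)

theorem key_injective (v : Fin n → ℝ) : Function.Injective (key v) := by
  intro a b h
  simpa [key, Prod.ext_iff] using congrArg (fun x => (ofLex x).2) h

theorem key_lt_iff {v : Fin n → ℝ} {a b : Fin n →₀ ℕ} :
    key v a < key v b ↔ wdeg v a < wdeg v b ∨ (wdeg v a = wdeg v b ∧ toLex a < toLex b) := by
  simp [key, Prod.Lex.lt_iff]

theorem key_le_iff {v : Fin n → ℝ} {a b : Fin n →₀ ℕ} :
    key v a ≤ key v b ↔ wdeg v a < wdeg v b ∨ (wdeg v a = wdeg v b ∧ toLex a ≤ toLex b) := by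
  simp [key, Prod.Lex.le_iff]

theorem wdeg_le_of_key_le {v : Fin n → ℝ} {a b : Fin n →₀ ℕ} (h : key v a ≤ key v b) :
    wdeg v a ≤ wdeg v b := by
  rcases key_le_iff.1 h with h | h
  · exact h.le
  · exact h.1.le

theorem key_add_lt_add_right {v : Fin n → ℝ} {a b : Fin n →₀ ℕ} (h : key v a < key v b)
    (c : Fin n →₀ ℕ) : key v (a + c) < key v (b + c) := by
  rcases key_lt_iff.1 h with h | h
  · exact key_lt_iff.2 (Or.inl (by rw [wdeg_add, wdeg_add]; linarith))
  · refine key_lt_iff.2 (Or.inr ⟨by rw [wdeg_add, wdeg_add, h.1], ?_⟩)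
    have : toLex a + toLex c < toLex b + toLex c := add_lt_add_of_lt_of_le h.2 le_rfl
    exact this

theorem key_add_le_add_right {v : Fin n → ℝ} {a b : Fin n →₀ ℕ} (h : key v a ≤ key v b)
    (c : Fin n →₀ ℕ) : key v (a + c) ≤ key v (b + c) := by
  rcases eq_or_lt_of_le h with h | h
  · exact le_of_eq (by rw [key_injective v h])
  · exact (key_add_lt_add_right h c).le

theorem key_add_le_add_left {v : Fin n → ℝ} {a b : Fin n →₀ ℕ} (h : key v a ≤ key v b)
    (c : Fin n →₀ ℕ) : key v (c + a) ≤ key v (c + b) := by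
  rw [add_comm c a, add_comm c b]; exact key_add_le_add_right h c

/-- The coefficient of a sum of monomials indexed by a finset. -/
theorem coeff_sum_monomial (s : Finset (Fin n →₀ ℕ)) (c : (Fin n →₀ ℕ) → k)
    (β : Fin n →₀ ℕ) :
    coeff β (∑ α ∈ s, monomial α (c α)) = if β ∈ s then c β else 0 := by
  rw [coeff_sum]
  by_cases hβ : β ∈ s
  · rw [if_pos hβ, Finset.sum_eq_single β]
    · simp [coeff_monomial]
    · intro b _ hb; simp [coeff_monomial, hb]
    · intro h; exact absurd hβ h
  · rw [if_neg hβ]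
    apply Finset.sum_eq_zero
    intro b hb
    have : b ≠ β := fun h => hβ (h ▸ hb)
    simp [coeff_monomial, this]

open Classical in
/-- The set of exponents of `f` maximizing the `x`-weight. -/
noncomputable def mxS (x : Fin n → ℝ) (f : MvPolynomial (Fin n) k) : Finset (Fin n →₀ ℕ) :=
  f.support.filter (fun α => ∀ β ∈ f.support, wdeg x β ≤ wdeg x α)

theorem initialForm_eq_sum (x : Fin n → ℝ) (f : MvPolynomial (Fin n) k) :
    initialForm x f = ∑ α ∈ mxS x f, monomial α (f.coeff α) := by
  rw [initialForm, mxS]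
  exact Finset.sum_congr (Finset.filter_congr_decidable _ _ _) (fun _ _ => rfl)

theorem coeff_initialForm (x : Fin n → ℝ) (f : MvPolynomial (Fin n) k) (β : Fin n →₀ ℕ) :
    coeff β (initialForm x f) = if β ∈ mxS x f then f.coeff β else 0 := by
  rw [initialForm_eq_sum, coeff_sum_monomial]

theorem support_initialForm (x : Fin n → ℝ) (f : MvPolynomial (Fin n) k) :
    (initialForm x f).support = mxS x f := by
  ext β
  simp only [MvPolynomial.mem_support_iff, coeff_initialForm]
  constructor
  · intro h
    by_contra hb
    simp [hb] at h
  · intro hb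
    have hβ : β ∈ f.support := (Finset.mem_filter.1 hb).1
    simp [hb, MvPolynomial.mem_support_iff.1 hβ]

theorem mem_mxS_iff {x : Fin n → ℝ} {f : MvPolynomial (Fin n) k} {β : Fin n →₀ ℕ} :
    β ∈ mxS x f ↔ β ∈ f.support ∧ ∀ γ ∈ f.support, wdeg x γ ≤ wdeg x β := by
  classical
  simp [mxS]

theorem initialForm_zero (x : Fin n → ℝ) : initialForm x (0 : MvPolynomial (Fin n) k) = 0 := by
  rw [initialForm_eq_sum]
  have : mxS x (0 : MvPolynomial (Fin n) k) = ∅ := by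
    simp [mxS]
  simp [this]

theorem mxS_nonempty {x : Fin n → ℝ} {f : MvPolynomial (Fin n) k} (hf : f ≠ 0) :
    (mxS x f).Nonempty := by
  obtain ⟨β, hβ, hmax⟩ := Finset.exists_max_image f.support (wdeg x)
    ((Finset.nonempty_iff_ne_empty.2 (mt MvPolynomial.support_eq_empty.1 hf)))
  exact ⟨β, mem_mxS_iff.2 ⟨hβ, hmax⟩⟩

theorem initialForm_ne_zero {x : Fin n → ℝ} {f : MvPolynomial (Fin n) k} (hf : f ≠ 0) :
    initialForm x f ≠ 0 := by
  intro h
  obtain ⟨β, hβ⟩ := mxS_nonempty (x := x) hf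
  have := support_initialForm x f
  rw [h] at this
  simp only [MvPolynomial.support_zero] at this
  rw [← this] at hβ
  exact absurd hβ (Finset.notMem_empty β)

theorem initialForm_congr {x y : Fin n → ℝ} {f : MvPolynomial (Fin n) k}
    (h : mxS x f = mxS y f) : initialForm x f = initialForm y f := by
  rw [initialForm_eq_sum, initialForm_eq_sum, h]


open Classical in
/-- The `x`-homogeneous component of degree `d`. -/
noncomputable def comp (x : Fin n → ℝ) (d : ℝ) (f : MvPolynomial (Fin n) k) :
    MvPolynomial (Fin n) k :=
  ∑ α ∈ f.support.filter (fun α => wdeg x α = d), monomial α (f.coeff α)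

theorem coeff_comp (x : Fin n → ℝ) (d : ℝ) (f : MvPolynomial (Fin n) k) (β : Fin n →₀ ℕ) :
    coeff β (comp x d f) = if wdeg x β = d then coeff β f else 0 := by
  classical
  rw [comp, coeff_sum_monomial]
  by_cases h1 : wdeg x β = d
  · by_cases h2 : β ∈ f.support
    · simp [h1, h2]
    · have : coeff β f = 0 := by simpa using h2
      simp [h1, this]
  · have : β ∉ f.support.filter (fun α => wdeg x α = d) := by
      simp [Finset.mem_filter, h1]
    simp [this, h1]

theorem support_comp_subset (x : Fin n → ℝ) (d : ℝ) (f : MvPolynomial (Fin n) k) :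
    (comp x d f).support ⊆ f.support := by
  intro β hβ
  rw [MvPolynomial.mem_support_iff] at hβ ⊢
  rw [coeff_comp] at hβ
  intro h
  apply hβ
  split <;> simp [h]

theorem wdeg_of_mem_support_comp {x : Fin n → ℝ} {d : ℝ} {f : MvPolynomial (Fin n) k}
    {β : Fin n →₀ ℕ} (hβ : β ∈ (comp x d f).support) : wdeg x β = d := by
  rw [MvPolynomial.mem_support_iff, coeff_comp] at hβ
  by_contra h
  simp [h] at hβ

theorem comp_add (x : Fin n → ℝ) (d : ℝ) (f g : MvPolynomial (Fin n) k) :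
    comp x d (f + g) = comp x d f + comp x d g := by
  ext β
  simp only [coeff_comp, MvPolynomial.coeff_add]
  split <;> simp

theorem comp_monomial_mul (x : Fin n → ℝ) (d : ℝ) (μ : Fin n →₀ ℕ) (c : k)
    (f : MvPolynomial (Fin n) k) :
    comp x d (monomial μ c * f) = monomial μ c * comp x (d - wdeg x μ) f := by
  ext β
  rw [coeff_comp, MvPolynomial.coeff_monomial_mul', MvPolynomial.coeff_monomial_mul']
  by_cases hle : μ ≤ β
  · rw [if_pos hle, if_pos hle, coeff_comp]
    have hw : wdeg x (β - μ) = wdeg x β - wdeg x μ := by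
      have : β - μ + μ = β := tsub_add_cancel_of_le hle
      have h2 := wdeg_add x (β - μ) μ
      rw [this] at h2
      linarith
    by_cases h : wdeg x β = d
    · rw [if_pos h, if_pos (by rw [hw, h])]
    · rw [if_neg h, if_neg (by rw [hw]; intro hc; apply h; linarith), mul_zero]
  · rw [if_neg hle, if_neg hle]
    simp

theorem comp_eq_zero {x : Fin n → ℝ} {d : ℝ} {f : MvPolynomial (Fin n) k}
    (h : ∀ β ∈ f.support, wdeg x β ≠ d) : comp x d f = 0 := by
  ext β
  rw [coeff_comp]
  by_cases hβ : β ∈ f.support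
  · simp [h β hβ]
  · have : coeff β f = 0 := by simpa using hβ
    simp [this]

theorem initialForm_eq_comp {x : Fin n → ℝ} {f : MvPolynomial (Fin n) k} {d : ℝ}
    (hd : ∀ β ∈ f.support, wdeg x β ≤ d) (hne : ∃ β ∈ f.support, wdeg x β = d) :
    initialForm x f = comp x d f := by
  ext β
  rw [coeff_initialForm, coeff_comp]
  obtain ⟨β₀, hβ₀, hβ₀d⟩ := hne
  by_cases hβ : β ∈ f.support
  · have : (β ∈ mxS x f) ↔ wdeg x β = d := by
      rw [mem_mxS_iff]
      constructor
      · rintro ⟨-, hmax⟩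
        exact le_antisymm (hd β hβ) (hβ₀d ▸ hmax β₀ hβ₀)
      · intro h
        exact ⟨hβ, fun γ hγ => h ▸ hd γ hγ⟩
    by_cases h : wdeg x β = d
    · rw [if_pos (this.2 h), if_pos h]
    · rw [if_neg (fun hc => h (this.1 hc)), if_neg h]
  · have hc : coeff β f = 0 := by simpa using hβ
    simp [hc]

/-- Initial form of a monomial multiple. -/
theorem initialForm_monomial_mul (x : Fin n → ℝ) (μ : Fin n →₀ ℕ) {c : k} (hc : c ≠ 0)
    (f : MvPolynomial (Fin n) k) :
    initialForm x (monomial μ c * f) = monomial μ c * initialForm x f := by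
  classical
  by_cases hf : f = 0
  · simp [hf, initialForm]
  -- pick a maximizer of wdeg x on supp f
  obtain ⟨β₀, hβ₀⟩ := Finset.exists_max_image f.support (wdeg x)
    ((Finset.nonempty_iff_ne_empty.2 (mt MvPolynomial.support_eq_empty.1 hf)))
  obtain ⟨hβ₀s, hβ₀max⟩ := hβ₀
  set D := wdeg x β₀ with hD
  have hsupp : ∀ γ ∈ (monomial μ c * f).support, μ ≤ γ ∧ γ - μ ∈ f.support := by
    intro γ hγ
    rw [MvPolynomial.mem_support_iff, MvPolynomial.coeff_monomial_mul'] at hγ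
    by_cases hle : μ ≤ γ
    · refine ⟨hle, ?_⟩
      rw [if_pos hle] at hγ
      rw [MvPolynomial.mem_support_iff]
      intro h
      exact hγ (by rw [h, mul_zero])
    · rw [if_neg hle] at hγ; exact absurd rfl hγ
  have key1 : initialForm x (monomial μ c * f) = comp x (wdeg x μ + D) (monomial μ c * f) := by
    apply initialForm_eq_comp
    · intro γ hγ
      obtain ⟨hle, hm⟩ := hsupp γ hγ
      have : γ = μ + (γ - μ) := by rw [add_comm]; exact (tsub_add_cancel_of_le hle).symm
      rw [this, wdeg_add]
      have := hβ₀max _ hm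
      linarith
    · refine ⟨μ + β₀, ?_, by rw [wdeg_add]⟩
      rw [MvPolynomial.mem_support_iff, MvPolynomial.coeff_monomial_mul]
      exact mul_ne_zero hc (MvPolynomial.mem_support_iff.1 hβ₀s)
  rw [key1, comp_monomial_mul]
  congr 1
  rw [show wdeg x μ + D - wdeg x μ = D by ring]
  exact (initialForm_eq_comp (fun β hβ => hβ₀max β hβ) ⟨β₀, hβ₀s, rfl⟩).symm

/-- The leading exponent of `f` w.r.t. the `v`-weight order (0 if `f = 0`). -/
noncomputable def vlead (v : Fin n → ℝ) (f : MvPolynomial (Fin n) k) : Fin n →₀ ℕ :=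
  if h : f.support.Nonempty then
    (Finset.exists_max_image f.support (key v) h).choose
  else 0

theorem vlead_mem {v : Fin n → ℝ} {f : MvPolynomial (Fin n) k} (hf : f ≠ 0) :
    vlead v f ∈ f.support := by
  rw [vlead]
  split
  next h => exact (Finset.exists_max_image f.support (key v) h).choose_spec.1
  next h => exact absurd ((Finset.nonempty_iff_ne_empty.2 (mt MvPolynomial.support_eq_empty.1 hf))) h

theorem key_le_vlead {v : Fin n → ℝ} {f : MvPolynomial (Fin n) k} {α : Fin n →₀ ℕ}
    (hα : α ∈ f.support) : key v α ≤ key v (vlead v f) := by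
  have hf : f.support.Nonempty := ⟨α, hα⟩
  rw [vlead]
  split
  next h => exact (Finset.exists_max_image f.support (key v) h).choose_spec.2 α hα
  next h => exact absurd hf h

theorem vlead_unique {v : Fin n → ℝ} {f : MvPolynomial (Fin n) k} {β : Fin n →₀ ℕ}
    (hβ : β ∈ f.support) (hmax : ∀ γ ∈ f.support, key v γ ≤ key v β) :
    vlead v f = β := by
  have hf : f ≠ 0 := fun h => by simp [h] at hβ
  apply key_injective v
  exact le_antisymm (hmax _ (vlead_mem hf)) (key_le_vlead hβ)

/-- Sets of exponents with bounded `v`-weight are finite, when `v > 0`. -/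
theorem finite_wdeg_le {v : Fin n → ℝ} (hv : ∀ i, 0 < v i) (c : ℝ) :
    {γ : Fin n →₀ ℕ | wdeg v γ ≤ c}.Finite := by
  classical
  by_cases hn : n = 0
  · subst hn
    exact Set.toFinite _
  -- bound: each coordinate of γ is at most M
  obtain ⟨m⟩ := Fin.pos_iff_nonempty.1 (Nat.pos_of_ne_zero hn)
  set ε : ℝ := Finset.univ.inf' (by simp [Finset.univ_nonempty_iff]; exact ⟨m⟩) v with hε
  have hε0 : 0 < ε := by
    rw [hε]
    apply (Finset.lt_inf'_iff _).2
    intro i _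
    exact hv i
  obtain ⟨M, hM⟩ := exists_nat_ge (c / ε)
  have hbound : ∀ γ : Fin n →₀ ℕ, wdeg v γ ≤ c → ∀ i, γ i ≤ M := by
    intro γ hγ i
    have h1 : (γ i : ℝ) * ε ≤ wdeg v γ := by
      have : (γ i : ℝ) * ε ≤ v i * γ i := by
        have : ε ≤ v i := Finset.inf'_le _ (Finset.mem_univ i)
        nlinarith [Nat.cast_nonneg (α := ℝ) (γ i)]
      refine le_trans this ?_
      rw [wdeg]
      have : ∀ j ∈ Finset.univ, 0 ≤ v j * (γ j : ℝ) := fun j _ =>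
        mul_nonneg (hv j).le (Nat.cast_nonneg _)
      exact Finset.single_le_sum this (Finset.mem_univ i)
    have h2 : (γ i : ℝ) ≤ c / ε := by
      rw [le_div_iff₀ hε0]
      linarith
    have h3 : (γ i : ℝ) ≤ M := le_trans h2 hM
    exact_mod_cast h3
  set B : Fin n →₀ ℕ := Finsupp.equivFunOnFinite.symm (fun _ => M) with hB
  apply Set.Finite.subset (Set.finite_Iic B)
  intro γ hγ
  simp only [Set.mem_Iic]
  intro i
  simpa [hB] using hbound γ hγ i

/-- The finite set of exponents whose key is `≤ key γ`. -/
noncomputable def KS {v : Fin n → ℝ} (hv : ∀ i, 0 < v i) (γ : Fin n →₀ ℕ) :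
    Finset (Fin n →₀ ℕ) :=
  ((finite_wdeg_le hv (wdeg v γ)).subset
    (fun δ (hδ : δ ∈ {δ : Fin n →₀ ℕ | key v δ ≤ key v γ}) => wdeg_le_of_key_le hδ)).toFinset

theorem mem_KS {v : Fin n → ℝ} (hv : ∀ i, 0 < v i) {γ δ : Fin n →₀ ℕ} :
    δ ∈ KS hv γ ↔ key v δ ≤ key v γ := by
  simp [KS]

theorem KS_card_lt {v : Fin n → ℝ} (hv : ∀ i, 0 < v i) {γ β : Fin n →₀ ℕ}
    (h : key v γ < key v β) : (KS hv γ).card < (KS hv β).card := by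
  apply Finset.card_lt_card
  rw [Finset.ssubset_iff_of_subset]
  · exact ⟨β, (mem_KS hv).2 le_rfl, fun hc => absurd ((mem_KS hv).1 hc) (not_le.2 h)⟩
  · intro δ hδ
    exact (mem_KS hv).2 (le_trans ((mem_KS hv).1 hδ) h.le)

variable (v : Fin n → ℝ) (I : Ideal (MvPolynomial (Fin n) k))

/-- The set of leading exponents of nonzero elements of `I`. -/
def LeadSet : Set (Fin n →₀ ℕ) := {α | ∃ f ∈ I, f ≠ 0 ∧ vlead v f = α}

/-- A *standard* exponent: one not divisible by any leading exponent of `I`. -/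
def Std (β : Fin n →₀ ℕ) : Prop := ¬ ∃ α ∈ LeadSet v I, α ≤ β

theorem not_std_vlead {f : MvPolynomial (Fin n) k} (hf : f ∈ I) (hf0 : f ≠ 0) :
    ¬ Std v I (vlead v f) := by
  rw [Std, not_not]
  exact ⟨vlead v f, ⟨f, hf, hf0, rfl⟩, le_rfl⟩

variable {v I}

/-- Division with remainder by the full ideal: every polynomial is congruent
mod `I` to one supported on standard exponents. -/
theorem div1 (hv : ∀ i, 0 < v i) (p : MvPolynomial (Fin n) k) :
    ∃ r, p - r ∈ I ∧ ∀ β ∈ r.support, Std v I β := by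
  classical
  suffices h : ∀ N : ℕ, ∀ p : MvPolynomial (Fin n) k,
      (∀ γ ∈ p.support, ¬ Std v I γ → (KS hv γ).card ≤ N) →
      ∃ r, p - r ∈ I ∧ ∀ β ∈ r.support, Std v I β by
    apply h (∑ γ ∈ p.support, (KS hv γ).card)
    intro γ hγ _
    exact Finset.single_le_sum (f := fun γ => (KS hv γ).card) (fun δ _ => Nat.zero_le _) hγ
  intro N
  induction N using Nat.strong_induction_on with
  | _ N IH =>
  intro p hp
  by_cases hoff : ∃ γ ∈ p.support, ¬ Std v I γ
  · -- there is an offender; pick the maximal one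
    set offs := p.support.filter (fun γ => ¬ Std v I γ) with hoffs
    have hne : offs.Nonempty := by
      obtain ⟨γ, h1, h2⟩ := hoff
      exact ⟨γ, Finset.mem_filter.2 ⟨h1, h2⟩⟩
    obtain ⟨β, hβmem, hβmax⟩ := Finset.exists_max_image offs (key v) hne
    have hβp : β ∈ p.support := (Finset.mem_filter.1 hβmem).1
    have hβstd : ¬ Std v I β := (Finset.mem_filter.1 hβmem).2
    obtain ⟨α, hαL, hαβ⟩ := not_not.1 hβstd
    obtain ⟨f, hfI, hf0, hfl⟩ := hαL
    have hαf : α ∈ f.support := hfl ▸ vlead_mem hf0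
    have hcf : coeff α f ≠ 0 := MvPolynomial.mem_support_iff.1 hαf
    set q : MvPolynomial (Fin n) k := monomial (β - α) (coeff β p / coeff α f) * f with hq
    have hqI : q ∈ I := Ideal.mul_mem_left _ _ hfI
    have hcoeffq : coeff β q = coeff β p := by
      rw [hq, MvPolynomial.coeff_monomial_mul', if_pos (tsub_le_self),
        tsub_tsub_cancel_of_le hαβ, div_mul_cancel₀ _ hcf]
    set p' := p - q with hp'
    have hcoeffβ : coeff β p' = 0 := by
      rw [hp', MvPolynomial.coeff_sub, hcoeffq, sub_self]
    -- every offender of p' has strictly smaller key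
    have hkey : ∀ γ ∈ p'.support, ¬ Std v I γ → key v γ < key v β := by
      intro γ hγ hγstd
      have hγβ : γ ≠ β := by
        intro h
        rw [h] at hγ
        exact MvPolynomial.mem_support_iff.1 hγ hcoeffβ
      have : γ ∈ p.support ∨ γ ∈ q.support := by
        by_contra hcon
        push_neg at hcon
        have h1 : coeff γ p = 0 := by simpa using hcon.1
        have h2 : coeff γ q = 0 := by simpa using hcon.2
        have : coeff γ p' = 0 := by rw [hp', MvPolynomial.coeff_sub, h1, h2, sub_self]
        exact MvPolynomial.mem_support_iff.1 hγ this
      have hle : key v γ ≤ key v β := by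
        rcases this with h | h
        · exact hβmax γ (Finset.mem_filter.2 ⟨h, hγstd⟩)
        · -- γ ∈ supp q : γ = (β - α) + δ with δ ∈ supp f
          rw [MvPolynomial.mem_support_iff, MvPolynomial.coeff_monomial_mul'] at h
          by_cases hle2 : β - α ≤ γ
          · rw [if_pos hle2] at h
            have hδ : γ - (β - α) ∈ f.support := by
              rw [MvPolynomial.mem_support_iff]
              intro hc
              rw [hc, mul_zero] at h
              exact h rfl
            have h1 : key v (γ - (β - α)) ≤ key v α := by
              have := key_le_vlead (v := v) hδ
              rwa [hfl] at this
            have h2 := key_add_le_add_right h1 (β - α)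
            rw [tsub_add_cancel_of_le hle2] at h2
            have h3 : α + (β - α) = β := by
              rw [add_comm]
              exact tsub_add_cancel_of_le hαβ
            rw [h3] at h2
            exact h2
          · rw [if_neg hle2] at h
            exact absurd rfl h
      rcases lt_or_eq_of_le hle with h | h
      · exact h
      · exact absurd (key_injective v h) hγβ
    -- recursion
    have hKSβ : 1 ≤ (KS hv β).card :=
      Finset.card_pos.2 ⟨β, (mem_KS hv).2 le_rfl⟩
    have hN : (KS hv β).card ≤ N := hp β hβp hβstd
    have hlt : (KS hv β).card - 1 < N := by omega
    obtain ⟨r, hrI, hrstd⟩ := IH ((KS hv β).card - 1) hlt p' (by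
      intro γ hγ hγstd
      have := KS_card_lt hv (hkey γ hγ hγstd)
      omega)
    refine ⟨r, ?_, hrstd⟩
    have : p - r = (p' - r) + q := by rw [hp']; ring
    rw [this]
    exact Ideal.add_mem _ hrI hqI
  · push_neg at hoff
    exact ⟨p, by simp, hoff⟩

/-- The package of properties of our reduced Gröbner basis. -/
structure GB (v : Fin n → ℝ) (I : Ideal (MvPolynomial (Fin n) k))
    (G : Finset (MvPolynomial (Fin n) k)) : Prop where
  mem : ∀ g ∈ G, g ∈ I
  ne : ∀ g ∈ G, g ≠ (0 : MvPolynomial (Fin n) k)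
  monic : ∀ g ∈ G, coeff (vlead v g) g = 1
  tail : ∀ g ∈ G, ∀ β ∈ g.support, β ≠ vlead v g → Std v I β
  red : ∀ β : Fin n →₀ ℕ, ¬ Std v I β → ∃ g ∈ G, vlead v g ≤ β

/-- Existence of a (reduced) Gröbner basis. -/
theorem exists_GB (hv : ∀ i, 0 < v i) :
    ∃ G : Finset (MvPolynomial (Fin n) k), GB v I G := by
  classical
  set Mid : Ideal (MvPolynomial (Fin n) k) :=
    Ideal.span ((fun s => (monomial s (1 : k))) '' LeadSet v I) with hMid
  obtain ⟨S, hS⟩ := (isNoetherianRing_iff_ideal_fg _).1 inferInstance Mid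
  have hsel : ∀ s ∈ (S : Set (MvPolynomial (Fin n) k)), ∃ T : Finset (Fin n →₀ ℕ),
      (↑T : Set (Fin n →₀ ℕ)) ⊆ LeadSet v I ∧
      s ∈ Ideal.span ((fun s => (monomial s (1 : k))) '' ↑T) := by
    intro s hs
    have hsmem : s ∈ Mid := by rw [← hS]; exact Ideal.subset_span hs
    rw [hMid] at hsmem
    obtain ⟨T₀, hT₀sub, hT₀mem⟩ := Submodule.mem_span_finite_of_mem_span hsmem
    have hchoice : ∀ t : {x // x ∈ T₀}, ∃ α, α ∈ LeadSet v I ∧ (monomial α (1:k)) = t.1 := by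
      intro t
      obtain ⟨α, hα1, hα2⟩ := hT₀sub t.2
      exact ⟨α, hα1, hα2⟩
    choose φ hφ1 hφ2 using hchoice
    refine ⟨T₀.attach.image φ, ?_, ?_⟩
    · intro α hα
      simp only [Finset.coe_image, Set.mem_image, Finset.mem_coe, Finset.mem_attach] at hα
      obtain ⟨t, -, ht⟩ := hα
      exact ht ▸ hφ1 t
    · refine Ideal.span_mono ?_ hT₀mem
      intro t ht
      obtain ⟨t', rfl⟩ : ∃ t' : {x // x ∈ T₀}, t'.1 = t := ⟨⟨t, ht⟩, rfl⟩
      refine ⟨φ t', ?_, hφ2 t'⟩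
      simp only [Finset.coe_image, Set.mem_image, Finset.mem_coe]
      exact ⟨t', Finset.mem_attach _ _, rfl⟩
  choose Tf hTf1 hTf2 using hsel
  set T : Finset (Fin n →₀ ℕ) := S.attach.biUnion (fun s => Tf s.1 s.2) with hT
  have hTsub : (↑T : Set (Fin n →₀ ℕ)) ⊆ LeadSet v I := by
    intro α hα
    simp only [hT, Finset.coe_biUnion, Set.mem_iUnion, Finset.mem_coe] at hα
    obtain ⟨s, -, hs⟩ := hα
    exact hTf1 s.1 s.2 hs
  have hTgen : Mid ≤ Ideal.span ((fun s => (monomial s (1 : k))) '' ↑T) := by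
    rw [← hS, Ideal.span_le]
    intro s hs
    refine Ideal.span_mono (Set.image_mono ?_) (hTf2 s hs)
    intro α hα
    simp only [hT, Finset.coe_biUnion, Set.mem_iUnion, Finset.mem_coe]
    exact ⟨⟨s, hs⟩, Finset.mem_attach _ _, hα⟩
  -- build the basis elements
  have hbuild : ∀ α ∈ T, ∃ g : MvPolynomial (Fin n) k,
      g ∈ I ∧ g ≠ 0 ∧ vlead v g = α ∧ coeff α g = 1 ∧
      ∀ β ∈ g.support, β ≠ α → Std v I β := by
    intro α hα
    obtain ⟨r, hrI, hrstd⟩ := div1 hv (monomial α (1 : k))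
    have hαnstd : ¬ Std v I α := by
      rw [Std, not_not]
      exact ⟨α, hTsub hα, le_rfl⟩
    have hαr : α ∉ r.support := fun h => hαnstd (hrstd α h)
    set g := monomial α (1 : k) - r with hg
    have hgI : g ∈ I := hrI
    have hcg : coeff α g = 1 := by
      rw [hg, MvPolynomial.coeff_sub, coeff_monomial, if_pos rfl,
        MvPolynomial.notMem_support_iff.1 hαr, sub_zero]
    have hg0 : g ≠ 0 := fun h => by simp [h] at hcg
    have hsupp : ∀ β ∈ g.support, β ≠ α → Std v I β := by
      intro β hβ hβα
      have : coeff β g ≠ 0 := MvPolynomial.mem_support_iff.1 hβ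
      rw [hg, MvPolynomial.coeff_sub, coeff_monomial, if_neg (Ne.symm hβα), zero_sub,
        neg_ne_zero] at this
      exact hrstd β (MvPolynomial.mem_support_iff.2 this)
    have hvl : vlead v g = α := by
      have h1 : vlead v g ∈ g.support := vlead_mem hg0
      by_contra hne
      have := hsupp _ h1 hne
      exact (not_std_vlead v I hgI hg0) this
    exact ⟨g, hgI, hg0, hvl, hcg, hsupp⟩
  choose gf hg1 hg2 hg3 hg4 hg5 using hbuild
  refine ⟨T.attach.image (fun α => gf α.1 α.2), ?_, ?_, ?_, ?_, ?_⟩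
  · intro g hg
    simp only [Finset.mem_image, Finset.mem_attach] at hg
    obtain ⟨α, -, rfl⟩ := hg
    exact hg1 α.1 α.2
  · intro g hg
    simp only [Finset.mem_image, Finset.mem_attach] at hg
    obtain ⟨α, -, rfl⟩ := hg
    exact hg2 α.1 α.2
  · intro g hg
    simp only [Finset.mem_image, Finset.mem_attach] at hg
    obtain ⟨α, -, rfl⟩ := hg
    rw [hg3 α.1 α.2]
    exact hg4 α.1 α.2
  · intro g hg
    simp only [Finset.mem_image, Finset.mem_attach] at hg
    obtain ⟨α, -, rfl⟩ := hg
    rw [hg3 α.1 α.2]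
    exact hg5 α.1 α.2
  · intro β hβ
    have hmon : (monomial β (1:k)) ∈ Mid := by
      rw [hMid]
      rw [Std, not_not] at hβ
      obtain ⟨α, hα1, hα2⟩ := hβ
      have : monomial β (1:k) = monomial (β - α) (1:k) * monomial α (1:k) := by
        rw [MvPolynomial.monomial_mul, one_mul, tsub_add_cancel_of_le hα2]
      rw [this]
      exact Ideal.mul_mem_left _ _ (Ideal.subset_span (Set.mem_image_of_mem _ hα1))
    have := hTgen hmon
    rw [MvPolynomial.mem_ideal_span_monomial_image] at this
    obtain ⟨α, hαT, hαβ⟩ := this β (by simp)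
    refine ⟨gf α hαT, ?_, by rw [hg3 α hαT]; exact hαβ⟩
    exact Finset.mem_image.2 ⟨⟨α, hαT⟩, Finset.mem_attach _ _, rfl⟩


variable (v : Fin n → ℝ) (I : Ideal (MvPolynomial (Fin n) k))
/-- The closed region where every `g ∈ G` has its `v`-lead exponent of maximal `x`-weight. -/
def Dbar (G : Finset (MvPolynomial (Fin n) k)) (x : Fin n → ℝ) : Prop :=
  ∀ g ∈ G, ∀ α ∈ g.support, wdeg x α ≤ wdeg x (vlead v g)

/-- A structured representation of `p` as a combination of elements of `G` plus
a standard remainder. -/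
structure DivRep (G : Finset (MvPolynomial (Fin n) k)) (p : MvPolynomial (Fin n) k)
    (L : List (k × (Fin n →₀ ℕ) × MvPolynomial (Fin n) k))
    (r : MvPolynomial (Fin n) k) : Prop where
  sum_eq : p = (L.map fun t => monomial t.2.1 t.1 * t.2.2).sum + r
  memG : ∀ t ∈ L, t.2.2 ∈ G
  cne : ∀ t ∈ L, t.1 ≠ 0
  pw : L.Pairwise (fun s t => key v (t.2.1 + vlead v t.2.2) < key v (s.2.1 + vlead v s.2.2))
  rstd : ∀ β ∈ r.support, Std v I β
  bound : ∀ x : Fin n → ℝ, Dbar v G x → ∀ t ∈ L, ∀ α ∈ t.2.2.support,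
      ∃ β ∈ p.support, wdeg x (t.2.1 + α) ≤ wdeg x β
  rbound : ∀ x : Fin n → ℝ, Dbar v G x → ∀ β ∈ r.support,
      ∃ β' ∈ p.support, wdeg x β ≤ wdeg x β'
  top : ∀ t ∈ L, ∃ γ ∈ p.support, ¬ Std v I γ ∧ key v (t.2.1 + vlead v t.2.2) ≤ key v γ

variable {v I}

theorem div2 (hv : ∀ i, 0 < v i) {G : Finset (MvPolynomial (Fin n) k)} (hG : GB v I G)
    (p : MvPolynomial (Fin n) k) : ∃ L r, DivRep v I G p L r := by
  classical
  suffices h : ∀ N : ℕ, ∀ p : MvPolynomial (Fin n) k,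
      (∀ γ ∈ p.support, ¬ Std v I γ → (KS hv γ).card ≤ N) →
      ∃ L r, DivRep v I G p L r by
    apply h (∑ γ ∈ p.support, (KS hv γ).card)
    intro γ hγ _
    exact Finset.single_le_sum (f := fun γ => (KS hv γ).card) (fun δ _ => Nat.zero_le _) hγ
  intro N
  induction N using Nat.strong_induction_on with
  | _ N IH =>
  intro p hp
  by_cases hoff : ∃ γ ∈ p.support, ¬ Std v I γ
  · set offs := p.support.filter (fun γ => ¬ Std v I γ) with hoffs
    have hne : offs.Nonempty := by
      obtain ⟨γ, h1, h2⟩ := hoff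
      exact ⟨γ, Finset.mem_filter.2 ⟨h1, h2⟩⟩
    obtain ⟨β, hβmem, hβmax⟩ := Finset.exists_max_image offs (key v) hne
    have hβp : β ∈ p.support := (Finset.mem_filter.1 hβmem).1
    have hβstd : ¬ Std v I β := (Finset.mem_filter.1 hβmem).2
    obtain ⟨g, hgG, hgβ⟩ := hG.red β hβstd
    have hg0 : g ≠ 0 := hG.ne g hgG
    set μ := β - vlead v g with hμ
    have hμβ : μ + vlead v g = β := tsub_add_cancel_of_le hgβ
    set c := coeff β p with hc
    have hc0 : c ≠ 0 := MvPolynomial.mem_support_iff.1 hβp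
    set q : MvPolynomial (Fin n) k := monomial μ c * g with hq
    have hcoeffq : coeff β q = c := by
      rw [hq, ← hμβ, MvPolynomial.coeff_monomial_mul, hG.monic g hgG, mul_one]
    set p' := p - q with hp'
    have hcoeffβ : coeff β p' = 0 := by
      rw [hp', MvPolynomial.coeff_sub, hcoeffq, hc, sub_self]
    have hsuppq : ∀ γ ∈ q.support, μ ≤ γ ∧ γ - μ ∈ g.support := by
      intro γ hγ
      rw [MvPolynomial.mem_support_iff, MvPolynomial.coeff_monomial_mul'] at hγ
      by_cases hle : μ ≤ γ
      · refine ⟨hle, MvPolynomial.mem_support_iff.2 fun hcon => ?_⟩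
        rw [if_pos hle, hcon, mul_zero] at hγ
        exact hγ rfl
      · rw [if_neg hle] at hγ; exact absurd rfl hγ
    have hqbound : ∀ x : Fin n → ℝ, Dbar v G x → ∀ γ ∈ q.support, wdeg x γ ≤ wdeg x β := by
      intro x hx γ hγ
      obtain ⟨hle, hmem⟩ := hsuppq γ hγ
      have h1 : wdeg x (γ - μ) ≤ wdeg x (vlead v g) := hx g hgG _ hmem
      have h2 : γ = μ + (γ - μ) := by rw [add_comm]; exact (tsub_add_cancel_of_le hle).symm
      calc wdeg x γ = wdeg x μ + wdeg x (γ - μ) := by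
            conv_lhs => rw [h2]
            rw [wdeg_add]
        _ ≤ wdeg x μ + wdeg x (vlead v g) := by linarith
        _ = wdeg x β := by rw [← wdeg_add, hμβ]
    have hsuppp' : ∀ γ ∈ p'.support, γ ∈ p.support ∨ γ ∈ q.support := by
      intro γ hγ
      by_contra hcon
      push_neg at hcon
      have h1 : coeff γ p = 0 := by simpa using hcon.1
      have h2 : coeff γ q = 0 := by simpa using hcon.2
      exact MvPolynomial.mem_support_iff.1 hγ (by rw [hp', MvPolynomial.coeff_sub, h1, h2, sub_self])
    have hp'bound : ∀ x : Fin n → ℝ, Dbar v G x → ∀ γ ∈ p'.support,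
        ∃ β' ∈ p.support, wdeg x γ ≤ wdeg x β' := by
      intro x hx γ hγ
      rcases hsuppp' γ hγ with h | h
      · exact ⟨γ, h, le_rfl⟩
      · exact ⟨β, hβp, hqbound x hx γ h⟩
    have hkey : ∀ γ ∈ p'.support, ¬ Std v I γ → key v γ < key v β := by
      intro γ hγ hγstd
      have hγβ : γ ≠ β := fun h => MvPolynomial.mem_support_iff.1 (h ▸ hγ) hcoeffβ
      have hle : key v γ ≤ key v β := by
        rcases hsuppp' γ hγ with h | h
        · exact hβmax γ (Finset.mem_filter.2 ⟨h, hγstd⟩)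
        · obtain ⟨hle2, hmem⟩ := hsuppq γ h
          have h1 : key v (γ - μ) ≤ key v (vlead v g) := key_le_vlead (v := v) hmem
          have h2 := key_add_le_add_right h1 μ
          rw [tsub_add_cancel_of_le hle2] at h2
          rw [add_comm (vlead v g) μ, hμβ] at h2
          exact h2
      rcases lt_or_eq_of_le hle with h | h
      · exact h
      · exact absurd (key_injective v h) hγβ
    have hKSβ : 1 ≤ (KS hv β).card := Finset.card_pos.2 ⟨β, (mem_KS hv).2 le_rfl⟩
    have hN : (KS hv β).card ≤ N := hp β hβp hβstd
    have hlt : (KS hv β).card - 1 < N := by omega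
    obtain ⟨L', r, hrep⟩ := IH ((KS hv β).card - 1) hlt p' (by
      intro γ hγ hγstd
      have := KS_card_lt hv (hkey γ hγ hγstd)
      omega)
    refine ⟨(c, μ, g) :: L', r, ?_⟩
    have hheadkey : key v (μ + vlead v g) = key v β := by rw [hμβ]
    constructor
    · -- sum_eq
      rw [List.map_cons, List.sum_cons]
      have := hrep.sum_eq
      rw [hp'] at this
      simp only []
      rw [add_assoc, ← this, hq]
      ring
    · intro t ht
      rcases List.mem_cons.1 ht with rfl | ht
      · exact hgG
      · exact hrep.memG t ht
    · intro t ht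
      rcases List.mem_cons.1 ht with rfl | ht
      · exact hc0
      · exact hrep.cne t ht
    · rw [List.pairwise_cons]
      refine ⟨?_, hrep.pw⟩
      intro t ht
      obtain ⟨γ, hγ, hγstd, hγkey⟩ := hrep.top t ht
      simp only []
      rw [hheadkey]
      exact lt_of_le_of_lt hγkey (hkey γ hγ hγstd)
    · exact hrep.rstd
    · intro x hx t ht α hα
      rcases List.mem_cons.1 ht with rfl | ht
      · refine ⟨β, hβp, ?_⟩
        simp only [] at hα ⊢
        have h1 : wdeg x α ≤ wdeg x (vlead v g) := hx g hgG _ hα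
        rw [wdeg_add, ← hμβ, wdeg_add]
        linarith
      · obtain ⟨β'', hβ'', hw⟩ := hrep.bound x hx t ht α hα
        obtain ⟨β', hβ', hw'⟩ := hp'bound x hx β'' hβ''
        exact ⟨β', hβ', le_trans hw hw'⟩
    · intro x hx β' hβ'
      obtain ⟨β'', hβ'', hw⟩ := hrep.rbound x hx β' hβ'
      obtain ⟨β''', hβ''', hw'⟩ := hp'bound x hx β'' hβ''
      exact ⟨β''', hβ''', le_trans hw hw'⟩
    · intro t ht
      rcases List.mem_cons.1 ht with rfl | ht
      · exact ⟨β, hβp, hβstd, by simp only []; rw [hheadkey]⟩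
      · obtain ⟨γ, hγ, hγstd, hγkey⟩ := hrep.top t ht
        exact ⟨β, hβp, hβstd, le_trans hγkey (hkey γ hγ hγstd).le⟩
  · push_neg at hoff
    refine ⟨[], p, ?_⟩
    constructor
    · simp
    · intro t ht; exact absurd ht List.not_mem_nil
    · intro t ht; exact absurd ht List.not_mem_nil
    · exact List.Pairwise.nil
    · exact hoff
    · intro x hx t ht; exact absurd ht List.not_mem_nil
    · intro x hx β hβ; exact ⟨β, hβ, le_rfl⟩
    · intro t ht; exact absurd ht List.not_mem_nil

theorem list_sum_mem {L : List (MvPolynomial (Fin n) k)} (h : ∀ a ∈ L, a ∈ I) :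
    L.sum ∈ I := by
  induction L with
  | nil => simpa using Ideal.zero_mem I
  | cons a L IH =>
    rw [List.sum_cons]
    exact Ideal.add_mem _ (h a (List.mem_cons_self)) (IH fun b hb => h b (List.mem_cons_of_mem a hb))

theorem comp_list_sum (x : Fin n → ℝ) (d : ℝ) (L : List (MvPolynomial (Fin n) k)) :
    comp x d L.sum = (L.map (comp x d)).sum := by
  induction L with
  | nil =>
    simp only [List.sum_nil, List.map_nil]
    ext β
    rw [coeff_comp]
    simp
  | cons a L IH =>
    rw [List.sum_cons, List.map_cons, List.sum_cons, comp_add, IH]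

theorem coeff_list_sum (β : Fin n →₀ ℕ) (L : List (MvPolynomial (Fin n) k)) :
    coeff β L.sum = (L.map (coeff β)).sum := by
  induction L with
  | nil => simp
  | cons a L IH => rw [List.sum_cons, List.map_cons, List.sum_cons, MvPolynomial.coeff_add, IH]

/-- If the remainder of `f ∈ I` is standard, it vanishes. -/
theorem divrep_r_eq_zero {G : Finset (MvPolynomial (Fin n) k)} (hG : GB v I G)
    {f : MvPolynomial (Fin n) k} (hf : f ∈ I) {L r} (hrep : DivRep v I G f L r) :
    r = 0 := by
  have hrI : r ∈ I := by
    have := hrep.sum_eq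
    have hsum : (L.map fun t => monomial t.2.1 t.1 * t.2.2).sum ∈ I := by
      apply list_sum_mem
      intro a ha
      obtain ⟨t, htL, rfl⟩ := List.mem_map.1 ha
      exact Ideal.mul_mem_left _ _ (hG.mem _ (hrep.memG t htL))
    have : r = f - (L.map fun t => monomial t.2.1 t.1 * t.2.2).sum := by
      rw [this]; ring
    rw [this]
    exact Ideal.sub_mem _ hf hsum
  by_contra hr0
  exact not_std_vlead v I hrI hr0 (hrep.rstd _ (vlead_mem hr0))

theorem list_sum_map_ite {A M : Type*} [AddCommMonoid M] (q : A → Prop)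
    [DecidablePred q] (h h' : A → M) (L : List A)
    (hh : ∀ t ∈ L, h t = if q t then h' t else 0) :
    (L.map h).sum = ((L.filter (fun t => decide (q t))).map h').sum := by
  induction L with
  | nil => simp
  | cons a L IH =>
    rw [List.map_cons, List.sum_cons, hh a (List.mem_cons_self), List.filter_cons]
    by_cases hq : q a
    · rw [if_pos hq, if_pos (by simpa using hq), List.map_cons, List.sum_cons]
      congr 1
      exact IH (fun t ht => hh t (List.mem_cons_of_mem a ht))
    · rw [if_neg hq, if_neg (by simpa using hq), zero_add]
      exact IH (fun t ht => hh t (List.mem_cons_of_mem a ht))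

open Classical in
/-- Key representation: for `x ∈ Dbar`, the initial form of `f ∈ I` is a sum of
monomial multiples of initial forms of elements of `G`, with strictly decreasing
distinct key values. -/
theorem initialForm_rep (hv : ∀ i, 0 < v i) {G : Finset (MvPolynomial (Fin n) k)}
    (hG : GB v I G) {x : Fin n → ℝ} (hx : Dbar v G x) {f : MvPolynomial (Fin n) k}
    (hf : f ∈ I) (hf0 : f ≠ 0) :
    ∃ T : List (k × (Fin n →₀ ℕ) × MvPolynomial (Fin n) k),
      (∀ t ∈ T, t.2.2 ∈ G) ∧ (∀ t ∈ T, t.1 ≠ 0) ∧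
      T.Pairwise (fun s t => key v (t.2.1 + vlead v t.2.2) < key v (s.2.1 + vlead v s.2.2)) ∧
      initialForm x f = (T.map fun t => monomial t.2.1 t.1 * initialForm x t.2.2).sum := by
  obtain ⟨L, r, hrep⟩ := div2 hv hG f
  have hr0 : r = 0 := divrep_r_eq_zero hG hf hrep
  -- the top degree of f
  obtain ⟨β₀, hβ₀, hβ₀max⟩ := Finset.exists_max_image f.support (wdeg x)
    ((Finset.nonempty_iff_ne_empty.2 (mt MvPolynomial.support_eq_empty.1 hf0)))
  set D := wdeg x β₀ with hD
  have hsum : f = (L.map fun t => monomial t.2.1 t.1 * t.2.2).sum := by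
    have := hrep.sum_eq; rwa [hr0, add_zero] at this
  -- all terms in each product are bounded by D
  have hbnd : ∀ t ∈ L, ∀ α ∈ (t.2.2 : MvPolynomial (Fin n) k).support,
      wdeg x (t.2.1 + α) ≤ D := by
    intro t ht α hα
    obtain ⟨β, hβ, hle⟩ := hrep.bound x hx t ht α hα
    exact le_trans hle (hβ₀max β hβ)
  set T := L.filter (fun t =>
      decide (wdeg x (t.2.1) + wdeg x (vlead v t.2.2) = D)) with hT
  have hTsub : ∀ t ∈ T, t ∈ L := fun t ht => List.mem_of_mem_filter ht
  have hTmem : ∀ t, t ∈ T ↔ t ∈ L ∧ wdeg x (t.2.1) + wdeg x (vlead v t.2.2) = D := by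
    intro t
    rw [hT, List.mem_filter]
    simp
  refine ⟨T, fun t ht => hrep.memG t (hTsub t ht), fun t ht => hrep.cne t (hTsub t ht),
    hrep.pw.sublist (List.filter_sublist), ?_⟩
  have hinf : initialForm x f = comp x D f :=
    initialForm_eq_comp (fun β hβ => hβ₀max β hβ) ⟨β₀, hβ₀, rfl⟩
  rw [hinf, hsum, comp_list_sum, List.map_map]
  -- now compare the two list sums term by term
  have hterm : ∀ t ∈ L, comp x D (monomial t.2.1 t.1 * t.2.2) =
      if wdeg x (t.2.1) + wdeg x (vlead v t.2.2) = D
      then monomial t.2.1 t.1 * initialForm x t.2.2 else 0 := by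
    intro t ht
    have hg0 : (t.2.2 : MvPolynomial (Fin n) k) ≠ 0 := hG.ne _ (hrep.memG t ht)
    have hvl : vlead v t.2.2 ∈ (t.2.2 : MvPolynomial (Fin n) k).support := vlead_mem hg0
    rw [comp_monomial_mul]
    by_cases hcond : wdeg x (t.2.1) + wdeg x (vlead v t.2.2) = D
    · rw [if_pos hcond]
      congr 1
      have hdd : D - wdeg x (t.2.1) = wdeg x (vlead v t.2.2) := by linarith
      rw [hdd]
      exact (initialForm_eq_comp (fun β hβ => hx _ (hrep.memG t ht) β hβ)
        ⟨vlead v t.2.2, hvl, rfl⟩).symm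
    · rw [if_neg hcond]
      rw [comp_eq_zero, mul_zero]
      intro β hβ
      have h1 : wdeg x β ≤ wdeg x (vlead v t.2.2) := hx _ (hrep.memG t ht) β hβ
      have h2 : wdeg x (t.2.1 + vlead v t.2.2) ≤ D := hbnd t ht _ hvl
      rw [wdeg_add] at h2
      intro hc
      apply hcond
      have : wdeg x β = D - wdeg x (t.2.1) := hc
      have h3 : wdeg x (vlead v t.2.2) ≥ D - wdeg x (t.2.1) := by rw [← this]; exact h1
      linarith
  rw [hT]
  classical
  have := list_sum_map_ite (fun t : k × (Fin n →₀ ℕ) × MvPolynomial (Fin n) k =>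
      wdeg x (t.2.1) + wdeg x (vlead v t.2.2) = D)
    (comp x D ∘ fun t => monomial t.2.1 t.1 * t.2.2)
    (fun t => monomial t.2.1 t.1 * initialForm x t.2.2) L
    (fun t ht => by simpa using hterm t ht)
  convert this using 3

theorem list_sum_mem_span {S : Set (MvPolynomial (Fin n) k)}
    {L : List (MvPolynomial (Fin n) k)} (h : ∀ a ∈ L, a ∈ Ideal.span S) :
    L.sum ∈ Ideal.span S := by
  induction L with
  | nil => simpa using Ideal.zero_mem _
  | cons a L IH =>
    rw [List.sum_cons]
    exact Ideal.add_mem _ (h a (List.mem_cons_self))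
      (IH fun b hb => h b (List.mem_cons_of_mem a hb))

/-- For `x ∈ Dbar`, initial forms of elements of `I` lie in the span of the
initial forms of `G`. -/
theorem initialForm_mem_span (hv : ∀ i, 0 < v i) {G : Finset (MvPolynomial (Fin n) k)}
    (hG : GB v I G) {x : Fin n → ℝ} (hx : Dbar v G x) {f : MvPolynomial (Fin n) k}
    (hf : f ∈ I) :
    initialForm x f ∈ Ideal.span {q | ∃ g ∈ G, q = initialForm x g} := by
  by_cases hf0 : f = 0
  · rw [hf0, initialForm_zero]
    exact Ideal.zero_mem _
  obtain ⟨T, hTG, hTc, hTpw, hTsum⟩ := initialForm_rep hv hG hx hf hf0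
  rw [hTsum]
  apply list_sum_mem_span
  intro a ha
  obtain ⟨t, htT, rfl⟩ := List.mem_map.1 ha
  exact Ideal.mul_mem_left _ _ (Ideal.subset_span ⟨t.2.2, hTG t htT, rfl⟩)

/-- For `x ∈ Dbar`, the initial ideal of `I` is spanned by initial forms of `G`. -/
theorem initialFormIdeal_eq_span (hv : ∀ i, 0 < v i) {G : Finset (MvPolynomial (Fin n) k)}
    (hG : GB v I G) {x : Fin n → ℝ} (hx : Dbar v G x) :
    initialFormIdeal x I = Ideal.span {q | ∃ g ∈ G, q = initialForm x g} := by
  apply le_antisymm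
  · rw [initialFormIdeal, Ideal.span_le]
    rintro p ⟨f, hf, rfl⟩
    exact initialForm_mem_span hv hG hx hf
  · rw [Ideal.span_le]
    rintro q ⟨g, hgG, rfl⟩
    exact Ideal.subset_span ⟨g, hG.mem g hgG, rfl⟩

/-- The leading exponent of the initial form of a nonzero element of `I` is
not standard, provided `w ∈ Dbar`. -/
theorem not_std_vlead_initialForm (hv : ∀ i, 0 < v i) {G : Finset (MvPolynomial (Fin n) k)}
    (hG : GB v I G) {w : Fin n → ℝ} (hw : Dbar v G w) {f : MvPolynomial (Fin n) k}
    (hf : f ∈ I) (hf0 : f ≠ 0) :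
    ¬ Std v I (vlead v (initialForm w f)) := by
  classical
  obtain ⟨T, hTG, hTc, hTpw, hTsum⟩ := initialForm_rep hv hG hw hf hf0
  set kf : k × (Fin n →₀ ℕ) × MvPolynomial (Fin n) k → ℝ ×ₗ Lex (Fin n →₀ ℕ) :=
    fun t => key v (t.2.1 + vlead v t.2.2) with hkf
  -- T is nonempty
  have hTne : T.toFinset.Nonempty := by
    rcases T with - | ⟨a, T⟩
    · exfalso
      apply initialForm_ne_zero (x := w) hf0
      rw [hTsum]; simp
    · exact ⟨a, by simp⟩
  -- keys are injective on T
  have hmapnd : (T.map kf).Nodup := by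
    have h1 : (T.map kf).Pairwise (fun a b => b < a) := List.pairwise_map.2 hTpw
    exact h1.imp (fun h => ne_of_gt h)
  have hinj : ∀ ⦃s⦄, s ∈ T → ∀ ⦃t⦄, t ∈ T → kf s = kf t → s = t :=
    List.inj_on_of_nodup_map hmapnd
  have hnd : T.Nodup := by
    refine List.Pairwise.imp ?_ hTpw
    intro a b h hab
    rw [hab] at h
    exact lt_irrefl _ h
  -- the maximal key element
  obtain ⟨t0, ht0T, ht0max⟩ := Finset.exists_max_image T.toFinset kf hTne
  rw [List.mem_toFinset] at ht0T
  have hsum' : initialForm w f = ∑ t ∈ T.toFinset, monomial t.2.1 t.1 * initialForm w t.2.2 := by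
    rw [hTsum, List.sum_toFinset _ hnd]
  set mh := t0.2.1 + vlead v t0.2.2 with hmh
  -- coefficient of mh in each term
  have hvlmem : ∀ t ∈ T, vlead v t.2.2 ∈ mxS w t.2.2 := by
    intro t htT
    have hg0 : (t.2.2 : MvPolynomial (Fin n) k) ≠ 0 := hG.ne _ (hTG t htT)
    exact mem_mxS_iff.2 ⟨vlead_mem hg0, fun γ hγ => hw _ (hTG t htT) γ hγ⟩
  have hcoeffmh : coeff mh (initialForm w f) = t0.1 := by
    rw [hsum', MvPolynomial.coeff_sum]
    rw [Finset.sum_eq_single t0]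
    · rw [MvPolynomial.coeff_monomial_mul', if_pos (self_le_add_right _ _),
        add_tsub_cancel_left, coeff_initialForm, if_pos (hvlmem t0 ht0T),
        hG.monic _ (hTG t0 ht0T), mul_one]
    · intro t htT htne
      rw [List.mem_toFinset] at htT
      rw [MvPolynomial.coeff_monomial_mul']
      by_cases hle : t.2.1 ≤ mh
      · rw [if_pos hle]
        by_contra hne0
        have hne0' : coeff (mh - t.2.1) (initialForm w t.2.2) ≠ 0 := by
          intro hc; apply hne0; rw [hc, mul_zero]
        have hmem : mh - t.2.1 ∈ (initialForm w t.2.2).support :=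
          MvPolynomial.mem_support_iff.2 hne0'
        rw [support_initialForm] at hmem
        have hmem2 : mh - t.2.1 ∈ (t.2.2 : MvPolynomial (Fin n) k).support :=
          (Finset.mem_filter.1 hmem).1
        have h1 : key v (mh - t.2.1) ≤ key v (vlead v t.2.2) := key_le_vlead (v := v) hmem2
        have h2 : key v mh ≤ key v (t.2.1 + vlead v t.2.2) := by
          have := key_add_le_add_left h1 t.2.1
          rwa [add_tsub_cancel_of_le hle] at this
        have h3 : kf t ≤ kf t0 := ht0max t (List.mem_toFinset.2 htT)
        have h4 : kf t = kf t0 := le_antisymm h3 h2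
        exact htne (hinj htT ht0T h4)
      · rw [if_neg hle]
    · intro h
      exact absurd (List.mem_toFinset.2 ht0T) h
  have hc0 : coeff mh (initialForm w f) ≠ 0 := by rw [hcoeffmh]; exact hTc t0 ht0T
  -- mh is the key-maximal element of the support
  have hmax : ∀ γ ∈ (initialForm w f).support, key v γ ≤ key v mh := by
    intro γ hγ
    have : coeff γ (initialForm w f) ≠ 0 := MvPolynomial.mem_support_iff.1 hγ
    rw [hsum', MvPolynomial.coeff_sum] at this
    obtain ⟨t, htT, htne⟩ := Finset.exists_ne_zero_of_sum_ne_zero this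
    rw [List.mem_toFinset] at htT
    rw [MvPolynomial.coeff_monomial_mul'] at htne
    by_cases hle : t.2.1 ≤ γ
    · rw [if_pos hle] at htne
      have hne0' : coeff (γ - t.2.1) (initialForm w t.2.2) ≠ 0 := by
        intro hc; apply htne; rw [hc, mul_zero]
      have hmem : γ - t.2.1 ∈ (t.2.2 : MvPolynomial (Fin n) k).support := by
        have := MvPolynomial.mem_support_iff.2 hne0'
        rw [support_initialForm] at this
        exact (Finset.mem_filter.1 this).1
      have h1 : key v (γ - t.2.1) ≤ key v (vlead v t.2.2) := key_le_vlead (v := v) hmem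
      have h2 : key v γ ≤ key v (t.2.1 + vlead v t.2.2) := by
        have := key_add_le_add_left h1 t.2.1
        rwa [add_tsub_cancel_of_le hle] at this
      exact le_trans h2 (ht0max t (List.mem_toFinset.2 htT))
    · rw [if_neg hle] at htne
      exact absurd rfl htne
  have hvl : vlead v (initialForm w f) = mh :=
    vlead_unique (MvPolynomial.mem_support_iff.2 hc0) hmax
  rw [hvl, Std, not_not]
  refine ⟨vlead v t0.2.2, ⟨t0.2.2, hG.mem _ (hTG t0 ht0T), hG.ne _ (hTG t0 ht0T), rfl⟩, ?_⟩
  exact le_add_self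

theorem comp_zero' (x : Fin n → ℝ) (d : ℝ) : comp x d (0 : MvPolynomial (Fin n) k) = 0 := by
  ext β; rw [coeff_comp]; simp

theorem initialForm_neg (x : Fin n → ℝ) (f : MvPolynomial (Fin n) k) :
    initialForm x (-f) = - initialForm x f := by
  have hm : mxS x (-f) = mxS x f := by
    classical
    rw [mxS, mxS, MvPolynomial.support_neg]
  ext β
  rw [MvPolynomial.coeff_neg, coeff_initialForm, coeff_initialForm, hm]
  split <;> simp

theorem wdeg_mxS_const {x : Fin n → ℝ} {f : MvPolynomial (Fin n) k} {α β : Fin n →₀ ℕ}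
    (hα : α ∈ mxS x f) (hβ : β ∈ mxS x f) : wdeg x α = wdeg x β := by
  obtain ⟨hα1, hα2⟩ := mem_mxS_iff.1 hα
  obtain ⟨hβ1, hβ2⟩ := mem_mxS_iff.1 hβ
  exact le_antisymm (hβ2 α hα1) (hα2 β hβ1)

theorem comp_initialForm {x : Fin n → ℝ} {f : MvPolynomial (Fin n) k} (hf : f ≠ 0) (d : ℝ) :
    comp x d (initialForm x f) = 0 ∨
    (comp x d (initialForm x f) = initialForm x f ∧ ∀ β ∈ f.support, wdeg x β ≤ d) := by
  obtain ⟨m, hm⟩ := mxS_nonempty (x := x) hf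
  by_cases hd : wdeg x m = d
  · right
    constructor
    · ext β
      rw [coeff_comp]
      by_cases hβ : β ∈ (initialForm x f).support
      · rw [if_pos]
        rw [support_initialForm] at hβ
        rw [← hd]
        exact wdeg_mxS_const hβ hm
      · have h0 : coeff β (initialForm x f) = 0 := by simpa using hβ
        rw [h0]; split <;> rfl
    · intro β hβ
      rw [← hd]
      exact (mem_mxS_iff.1 hm).2 β hβ
  · left
    apply comp_eq_zero
    intro β hβ
    rw [support_initialForm] at hβ
    rw [wdeg_mxS_const hβ hm]
    exact hd

/-- The initial ideal is closed under taking `w`-homogeneous components. -/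
theorem comp_mem_initialFormIdeal {w : Fin n → ℝ} {p : MvPolynomial (Fin n) k}
    (hp : p ∈ initialFormIdeal w I) (d : ℝ) :
    comp w d p ∈ initialFormIdeal w I := by
  revert d
  refine Submodule.span_induction ?_ ?_ ?_ ?_ hp
  · rintro q ⟨f, hf, rfl⟩ d
    by_cases hf0 : f = 0
    · rw [hf0, initialForm_zero, comp_zero']
      exact Ideal.zero_mem _
    rcases comp_initialForm (x := w) hf0 d with h | ⟨h, -⟩
    · rw [h]; exact Ideal.zero_mem _
    · rw [h]; exact Ideal.subset_span ⟨f, hf, rfl⟩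
  · intro d; rw [comp_zero']; exact Ideal.zero_mem _
  · intro p q _ _ hp hq d
    rw [comp_add]
    exact Ideal.add_mem _ (hp d) (hq d)
  · intro a q _ hq
    rw [smul_eq_mul]
    induction a using MvPolynomial.induction_on' with
    | monomial u c =>
      intro d
      rw [comp_monomial_mul]
      exact Ideal.mul_mem_left _ _ (hq _)
    | add p1 p2 h1 h2 =>
      intro d
      rw [add_mul, comp_add]
      exact Ideal.add_mem _ (h1 d) (h2 d)

/-- Predicate: every `w`-component of `p` is an initial form of an element of `I`. -/
def HomP (w : Fin n → ℝ) (I : Ideal (MvPolynomial (Fin n) k)) (p : MvPolynomial (Fin n) k) : Prop :=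
  ∀ d : ℝ, comp w d p = 0 ∨ ∃ f, f ∈ I ∧ f ≠ 0 ∧ comp w d p = initialForm w f ∧
    ∀ β ∈ f.support, wdeg w β ≤ d

theorem homP_add {w : Fin n → ℝ} {p q : MvPolynomial (Fin n) k}
    (hp : HomP w I p) (hq : HomP w I q) : HomP w I (p + q) := by
  intro d
  rw [comp_add]
  rcases hp d with h1 | ⟨f1, hf1I, hf10, he1, hb1⟩
  · rcases hq d with h2 | ⟨f2, hf2I, hf20, he2, hb2⟩
    · left; rw [h1, h2, add_zero]
    · right
      exact ⟨f2, hf2I, hf20, by rw [h1, zero_add, he2], hb2⟩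
  · rcases hq d with h2 | ⟨f2, hf2I, hf20, he2, hb2⟩
    · right
      exact ⟨f1, hf1I, hf10, by rw [h2, add_zero, he1], hb1⟩
    · by_cases hz : comp w d p + comp w d q = 0
      · left; exact hz
      right
      have hf12 : f1 + f2 ≠ 0 := by
        intro hc
        apply hz
        have : f2 = -f1 := by linear_combination hc
        rw [he1, he2, this, initialForm_neg, add_neg_cancel]
      -- comp w d f1 = initialForm w f1
      have hc1 : comp w d f1 = initialForm w f1 := by
        symm
        apply initialForm_eq_comp hb1
        have hne1 : comp w d p ≠ 0 := by rw [he1]; exact initialForm_ne_zero hf10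
        obtain ⟨β, hβ⟩ := (Finset.nonempty_iff_ne_empty.2 (mt MvPolynomial.support_eq_empty.1 hne1))
        have hβd : wdeg w β = d := wdeg_of_mem_support_comp hβ
        have hβ' : β ∈ (initialForm w f1).support := by rw [← he1]; exact hβ
        rw [support_initialForm] at hβ'
        exact ⟨β, (mem_mxS_iff.1 hβ').1, hβd⟩
      have hc2 : comp w d f2 = initialForm w f2 := by
        symm
        apply initialForm_eq_comp hb2
        have hne2 : comp w d q ≠ 0 := by rw [he2]; exact initialForm_ne_zero hf20
        obtain ⟨β, hβ⟩ := (Finset.nonempty_iff_ne_empty.2 (mt MvPolynomial.support_eq_empty.1 hne2))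
        have hβd : wdeg w β = d := wdeg_of_mem_support_comp hβ
        have hβ' : β ∈ (initialForm w f2).support := by rw [← he2]; exact hβ
        rw [support_initialForm] at hβ'
        exact ⟨β, (mem_mxS_iff.1 hβ').1, hβd⟩
      have hcf : comp w d (f1 + f2) = initialForm w f1 + initialForm w f2 := by
        rw [comp_add, hc1, hc2]
      have hbound : ∀ β ∈ (f1 + f2).support, wdeg w β ≤ d := by
        intro β hβ
        rcases Finset.mem_union.1 (MvPolynomial.support_add hβ) with h | h
        · exact hb1 β h
        · exact hb2 β h
      refine ⟨f1 + f2, Ideal.add_mem _ hf1I hf2I, hf12, ?_, hbound⟩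
      rw [he1, he2, ← hcf]
      symm
      apply initialForm_eq_comp hbound
      have hne : comp w d (f1 + f2) ≠ 0 := by
        rw [hcf, ← he1, ← he2]; exact hz
      obtain ⟨β, hβ⟩ := (Finset.nonempty_iff_ne_empty.2 (mt MvPolynomial.support_eq_empty.1 hne))
      exact ⟨β, support_comp_subset _ _ _ hβ, wdeg_of_mem_support_comp hβ⟩

/-- Every element of the initial ideal has components which are initial forms. -/
theorem homP_of_mem {w : Fin n → ℝ} {p : MvPolynomial (Fin n) k}
    (hp : p ∈ initialFormIdeal w I) : HomP w I p := by
  refine Submodule.span_induction ?_ ?_ ?_ ?_ hp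
  · rintro q ⟨f, hf, rfl⟩ d
    by_cases hf0 : f = 0
    · left; rw [hf0, initialForm_zero, comp_zero']
    rcases comp_initialForm (x := w) hf0 d with h | ⟨h, hb⟩
    · left; exact h
    · right; exact ⟨f, hf, hf0, h, hb⟩
  · intro d; left; rw [comp_zero']
  · intro p q _ _ hp hq
    exact homP_add hp hq
  · intro a q _ hq
    rw [smul_eq_mul]
    induction a using MvPolynomial.induction_on' with
    | monomial u c =>
      by_cases hc : c = 0
      · intro d
        left
        rw [hc]
        simp only [map_zero, zero_mul, comp_zero']
      intro d
      rw [comp_monomial_mul]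
      rcases hq (d - wdeg w u) with h | ⟨f, hfI, hf0, he, hb⟩
      · left; rw [h, mul_zero]
      right
      refine ⟨monomial u c * f, Ideal.mul_mem_left _ _ hfI,
        mul_ne_zero (fun hm => hc (by simpa using (MvPolynomial.monomial_eq_zero).1 hm)) hf0,
        ?_, ?_⟩
      · rw [he]
        exact (initialForm_monomial_mul w u hc f).symm
      · intro β hβ
        rw [MvPolynomial.mem_support_iff, MvPolynomial.coeff_monomial_mul'] at hβ
        by_cases hle : u ≤ β
        · rw [if_pos hle] at hβ
          have hm : β - u ∈ f.support := by
            rw [MvPolynomial.mem_support_iff]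
            intro hc'
            rw [hc', mul_zero] at hβ
            exact hβ rfl
          have h1 : wdeg w (β - u) ≤ d - wdeg w u := hb _ hm
          have h2 : β = u + (β - u) := by rw [add_comm]; exact (tsub_add_cancel_of_le hle).symm
          rw [h2, wdeg_add]
          linarith
        · rw [if_neg hle] at hβ
          exact absurd rfl hβ
    | add p1 p2 h1 h2 =>
      rw [add_mul]
      exact homP_add h1 h2

/-- A nonzero element of the initial ideal cannot be supported on standard exponents. -/
theorem eq_zero_of_std_support (hv : ∀ i, 0 < v i) {G : Finset (MvPolynomial (Fin n) k)}
    (hG : GB v I G) {w : Fin n → ℝ} (hw : Dbar v G w) {p : MvPolynomial (Fin n) k}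
    (hp : p ∈ initialFormIdeal w I) (hstd : ∀ β ∈ p.support, Std v I β) : p = 0 := by
  by_contra hp0
  obtain ⟨β₀, hβ₀, hβ₀max⟩ := Finset.exists_max_image p.support (wdeg w)
    ((Finset.nonempty_iff_ne_empty.2 (mt MvPolynomial.support_eq_empty.1 hp0)))
  set D := wdeg w β₀ with hD
  have hq0 : comp w D p ≠ 0 := by
    intro hc
    have h := coeff_comp w D p β₀
    rw [hc] at h
    simp only [MvPolynomial.coeff_zero, if_pos (show wdeg w β₀ = D from rfl)] at h
    exact MvPolynomial.mem_support_iff.1 hβ₀ h.symm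
  rcases homP_of_mem hp D with h | ⟨f, hfI, hf0, he, -⟩
  · exact hq0 h
  · have hnot := not_std_vlead_initialForm hv hG hw hfI hf0
    apply hnot
    rw [← he]
    have hmem : vlead v (comp w D p) ∈ p.support :=
      support_comp_subset _ _ _ (vlead_mem hq0)
    exact hstd _ hmem

/-- Transfer: if `in_x(I) = in_w(I)` and `w ∈ Dbar`, then `x ∈ Dbar` and the
initial forms of the elements of `G` agree at `x` and `w`. -/
theorem dbar_transfer (hv : ∀ i, 0 < v i) {G : Finset (MvPolynomial (Fin n) k)}
    (hG : GB v I G) {w x : Fin n → ℝ} (hw : Dbar v G w)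
    (hJ : initialFormIdeal x I = initialFormIdeal w I) :
    Dbar v G x ∧ ∀ g ∈ G, initialForm x g = initialForm w g := by
  have hDx : Dbar v G x := by
    intro g hgG
    by_contra hcon
    push_neg at hcon
    obtain ⟨α, hα, hgt⟩ := hcon
    have hg0 : g ≠ 0 := hG.ne g hgG
    have hsub : ∀ β ∈ (initialForm x g).support, Std v I β := by
      intro β hβ
      rw [support_initialForm] at hβ
      obtain ⟨hβ1, hβ2⟩ := mem_mxS_iff.1 hβ
      refine hG.tail g hgG β hβ1 ?_
      intro hc
      have := hβ2 α hα
      rw [hc] at this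
      linarith
    have hmem : initialForm x g ∈ initialFormIdeal w I := by
      rw [← hJ]
      exact Ideal.subset_span ⟨g, hG.mem g hgG, rfl⟩
    exact initialForm_ne_zero hg0 (eq_zero_of_std_support hv hG hw hmem hsub)
  refine ⟨hDx, fun g hgG => ?_⟩
  have hg0 : g ≠ 0 := hG.ne g hgG
  set δ := initialForm x g - initialForm w g with hδ
  have hδJ : δ ∈ initialFormIdeal w I := by
    apply Ideal.sub_mem
    · rw [← hJ]; exact Ideal.subset_span ⟨g, hG.mem g hgG, rfl⟩
    · exact Ideal.subset_span ⟨g, hG.mem g hgG, rfl⟩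
  have hvlx : vlead v g ∈ mxS x g :=
    mem_mxS_iff.2 ⟨vlead_mem hg0, fun γ hγ => hDx g hgG γ hγ⟩
  have hvlw : vlead v g ∈ mxS w g :=
    mem_mxS_iff.2 ⟨vlead_mem hg0, fun γ hγ => hw g hgG γ hγ⟩
  have hstd : ∀ β ∈ δ.support, Std v I β := by
    intro β hβ
    have hne : coeff β δ ≠ 0 := MvPolynomial.mem_support_iff.1 hβ
    have hβvl : β ≠ vlead v g := by
      intro hc
      apply hne
      rw [hδ, MvPolynomial.coeff_sub, hc, coeff_initialForm, coeff_initialForm,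
        if_pos hvlx, if_pos hvlw, sub_self]
    have hβg : β ∈ g.support := by
      by_contra hcon
      apply hne
      have h1 : coeff β (initialForm x g) = 0 := by
        rw [coeff_initialForm]
        split
        · exact MvPolynomial.notMem_support_iff.1 hcon
        · rfl
      have h2 : coeff β (initialForm w g) = 0 := by
        rw [coeff_initialForm]
        split
        · exact MvPolynomial.notMem_support_iff.1 hcon
        · rfl
      rw [hδ, MvPolynomial.coeff_sub, h1, h2, sub_self]
    exact hG.tail g hgG β hβg hβvl
  have := eq_zero_of_std_support hv hG hw hδJ hstd
  rw [hδ, sub_eq_zero] at this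
  exact this

theorem wdeg_weight_lin (a b : ℝ) (x z : Fin n → ℝ) (α : Fin n →₀ ℕ) :
    wdeg (fun i => a * x i + b * z i) α = a * wdeg x α + b * wdeg z α := by
  simp only [wdeg, Finset.mul_sum]
  rw [← Finset.sum_add_distrib]
  congr 1; ext i; ring

theorem dbar_self (hv : ∀ i, 0 < v i) (G : Finset (MvPolynomial (Fin n) k)) :
    Dbar v G v := by
  intro g hgG α hα
  exact wdeg_le_of_key_le (key_le_vlead (v := v) hα)

theorem mem_mxS_iff_deg {x : Fin n → ℝ} {g : MvPolynomial (Fin n) k} (hg0 : g ≠ 0)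
    (hDg : ∀ γ ∈ g.support, wdeg x γ ≤ wdeg x (vlead v g)) {α : Fin n →₀ ℕ} :
    α ∈ mxS x g ↔ α ∈ g.support ∧ wdeg x α = wdeg x (vlead v g) := by
  rw [mem_mxS_iff]
  constructor
  · rintro ⟨h1, h2⟩
    exact ⟨h1, le_antisymm (hDg α h1) (h2 _ (vlead_mem hg0))⟩
  · rintro ⟨h1, h2⟩
    exact ⟨h1, fun γ hγ => h2 ▸ hDg γ hγ⟩

/-- Moving from a point of the closed cone towards `v` lands in the class of `v`. -/
theorem seg_mem_class (hv : ∀ i, 0 < v i) {G : Finset (MvPolynomial (Fin n) k)}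
    (hG : GB v I G) {x : Fin n → ℝ} (hx : Dbar v G x)
    (heq : ∀ g ∈ G, ∀ α ∈ (initialForm v g).support, wdeg x α = wdeg x (vlead v g))
    {t : ℝ} (ht0 : 0 < t) (ht1 : t ≤ 1) :
    initialFormIdeal (fun i => (1 - t) * x i + t * v i) I = initialFormIdeal v I := by
  set y : Fin n → ℝ := fun i => (1 - t) * x i + t * v i with hy
  have hyw : ∀ α, wdeg y α = (1 - t) * wdeg x α + t * wdeg v α := fun α =>
    wdeg_weight_lin (1 - t) t x v α
  have hDv : Dbar v G v := dbar_self hv G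
  have hDy : Dbar v G y := by
    intro g hgG α hα
    rw [hyw, hyw]
    have h1 := hx g hgG α hα
    have h2 := hDv g hgG α hα
    nlinarith
  have hmx : ∀ g ∈ G, mxS y g = mxS v g := by
    intro g hgG
    have hg0 : g ≠ 0 := hG.ne g hgG
    ext α
    rw [mem_mxS_iff_deg hg0 (fun γ hγ => hDy g hgG γ hγ),
      mem_mxS_iff_deg hg0 (fun γ hγ => hDv g hgG γ hγ)]
    constructor
    · rintro ⟨h1, h2⟩
      refine ⟨h1, ?_⟩
      rw [hyw, hyw] at h2
      have h3 := hx g hgG α h1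
      have h4 := hDv g hgG α h1
      by_contra hne
      have h5 : wdeg v α < wdeg v (vlead v g) := lt_of_le_of_ne h4 hne
      nlinarith
    · rintro ⟨h1, h2⟩
      refine ⟨h1, ?_⟩
      have h3 : α ∈ (initialForm v g).support := by
        rw [support_initialForm]
        exact (mem_mxS_iff_deg hg0 (fun γ hγ => hDv g hgG γ hγ)).2 ⟨h1, h2⟩
      have h4 := heq g hgG α h3
      rw [hyw, hyw, h4, h2]
  have hforms : ∀ g ∈ G, initialForm y g = initialForm v g := fun g hgG =>
    initialForm_congr (hmx g hgG)
  rw [initialFormIdeal_eq_span hv hG hDy, initialFormIdeal_eq_span hv hG hDv]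
  congr 1
  ext q
  constructor
  · rintro ⟨g, hgG, rfl⟩; exact ⟨g, hgG, hforms g hgG⟩
  · rintro ⟨g, hgG, rfl⟩; exact ⟨g, hgG, (hforms g hgG).symm⟩

/-- Membership in the closed cone via the segment to `v`. -/
theorem seg_mem_Cv (hv : ∀ i, 0 < v i) {G : Finset (MvPolynomial (Fin n) k)}
    (hG : GB v I G) {x : Fin n → ℝ} (hx : Dbar v G x)
    (heq : ∀ g ∈ G, ∀ α ∈ (initialForm v g).support, wdeg x α = wdeg x (vlead v g)) :
    x ∈ Cv I v := by
  rw [Cv]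
  have htend : Filter.Tendsto (fun t : ℝ => (fun i => (1 - t) * x i + t * v i))
      (nhdsWithin 0 (Set.Ioi 0)) (nhds x) := by
    apply Filter.Tendsto.mono_left _ nhdsWithin_le_nhds
    have hcont : Continuous (fun t : ℝ => (fun i => (1 - t) * x i + t * v i)) := by
      apply continuous_pi
      intro i
      continuity
    have := hcont.tendsto 0
    convert this using 2
    ext i
    ring
  apply mem_closure_of_tendsto htend
  filter_upwards [Ioc_mem_nhdsGT_of_mem (Set.mem_Ico.2 ⟨le_refl (0:ℝ), zero_lt_one⟩)]
  intro t ht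
  exact seg_mem_class hv hG hx heq ht.1 ht.2

/-- Positive scaling preserves initial form ideals. -/
theorem initialFormIdeal_smul {c : ℝ} (hc : 0 < c) (y : Fin n → ℝ) :
    initialFormIdeal (fun i => c * y i) I = initialFormIdeal y I := by
  have hw : ∀ α, wdeg (fun i => c * y i) α = c * wdeg y α := by
    intro α
    have := wdeg_weight_lin c 0 y y α
    simpa using this
  have hmx : ∀ f : MvPolynomial (Fin n) k, mxS (fun i => c * y i) f = mxS y f := by
    intro f
    ext α
    rw [mem_mxS_iff, mem_mxS_iff]
    constructor
    · rintro ⟨h1, h2⟩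
      refine ⟨h1, fun γ hγ => ?_⟩
      have := h2 γ hγ
      rw [hw, hw] at this
      nlinarith
    · rintro ⟨h1, h2⟩
      refine ⟨h1, fun γ hγ => ?_⟩
      rw [hw, hw]
      have := h2 γ hγ
      nlinarith
  rw [initialFormIdeal, initialFormIdeal]
  congr 1
  ext q
  constructor
  · rintro ⟨f, hf, rfl⟩; exact ⟨f, hf, initialForm_congr (hmx f)⟩
  · rintro ⟨f, hf, rfl⟩; exact ⟨f, hf, (initialForm_congr (hmx f)).symm⟩

/-- The closed cone is invariant under positive scaling. -/
theorem Cv_smul {c : ℝ} (hc : 0 < c) {y : Fin n → ℝ} (hy : y ∈ Cv I v) :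
    (fun i => c * y i) ∈ Cv I v := by
  rw [Cv] at hy ⊢
  have hcont : Continuous (fun z : Fin n → ℝ => (fun i => c * z i)) := by
    apply continuous_pi
    intro i
    exact continuous_const.mul (continuous_apply i)
  refine map_mem_closure hcont hy ?_
  intro z hz
  simp only [Set.mem_setOf_eq] at hz ⊢
  rw [initialFormIdeal_smul hc, hz]

/-- `0` lies in the closed cone. -/
theorem zero_mem_Cv (hv : ∀ i, 0 < v i) : (0 : Fin n → ℝ) ∈ Cv I v := by
  rw [Cv]
  have htend : Filter.Tendsto (fun t : ℝ => (fun i => t * v i))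
      (nhdsWithin 0 (Set.Ioi 0)) (nhds 0) := by
    apply Filter.Tendsto.mono_left _ nhdsWithin_le_nhds
    have hcont : Continuous (fun t : ℝ => (fun i => t * v i)) := by
      apply continuous_pi
      intro i
      continuity
    have := hcont.tendsto 0
    convert this using 2
    ext i
    simp
  apply mem_closure_of_tendsto htend
  filter_upwards [self_mem_nhdsWithin]
  intro t ht
  exact initialFormIdeal_smul (Set.mem_Ioi.1 ht) v

theorem continuous_wdeg (α : Fin n →₀ ℕ) : Continuous (fun x : Fin n → ℝ => wdeg x α) := by
  unfold wdeg
  exact continuous_finset_sum _ (fun i _ => (continuous_apply i).mul continuous_const)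

/-- Points of the closed cone satisfy the polyhedral description. -/
theorem mem_E_of_mem_Cv (hv : ∀ i, 0 < v i) {G : Finset (MvPolynomial (Fin n) k)}
    (hG : GB v I G) {w : Fin n → ℝ} (hw : w ∈ Cv I v) :
    Dbar v G w ∧ ∀ g ∈ G, ∀ α ∈ (initialForm v g).support,
      wdeg w α = wdeg w (vlead v g) := by
  set E : Set (Fin n → ℝ) := {x | Dbar v G x ∧ ∀ g ∈ G, ∀ α ∈ (initialForm v g).support,
      wdeg x α = wdeg x (vlead v g)} with hE
  have hclosed : IsClosed E := by
    have hrw : E = (⋂ g ∈ G, ⋂ α ∈ g.support,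
        {x : Fin n → ℝ | wdeg x α ≤ wdeg x (vlead v g)}) ∩
        (⋂ g ∈ G, ⋂ α ∈ (initialForm v g).support,
        {x : Fin n → ℝ | wdeg x α = wdeg x (vlead v g)}) := by
      ext x
      simp only [hE, Set.mem_setOf_eq, Set.mem_inter_iff, Set.mem_iInter, Dbar]
    rw [hrw]
    apply IsClosed.inter
    · exact isClosed_iInter fun g => isClosed_iInter fun _ => isClosed_iInter fun α =>
        isClosed_iInter fun _ => isClosed_le (continuous_wdeg α) (continuous_wdeg _)
    · exact isClosed_iInter fun g => isClosed_iInter fun _ => isClosed_iInter fun α =>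
        isClosed_iInter fun _ => isClosed_eq (continuous_wdeg α) (continuous_wdeg _)
  have hsub : {z : Fin n → ℝ | initialFormIdeal z I = initialFormIdeal v I} ⊆ E := by
    intro z hz
    obtain ⟨hD, hforms⟩ := dbar_transfer hv hG (dbar_self hv G) hz
    refine ⟨hD, fun g hgG α hα => ?_⟩
    rw [← hforms g hgG, support_initialForm] at hα
    exact ((mem_mxS_iff_deg (hG.ne g hgG) (fun γ hγ => hD g hgG γ hγ)).1 hα).2
  exact closure_minimal hsub hclosed hw

/-- The main theorem, in terms of the auxiliary development. -/
theorem main (hv : ∀ i, 0 < v i)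
    (C : Set (Fin n → ℝ)) (hC : IsFaceOf (Cv I v) C) (hCne : C.Nonempty)
    (w : Fin n → ℝ) (hw : w ∈ C)
    (u : Fin n → ℝ) (hu : initialFormIdeal u I = initialFormIdeal w I) :
    u ∈ C := by
  classical
  obtain ⟨G, hG⟩ := exists_GB (v := v) (I := I) hv
  rcases hC with hCempty | ⟨L, hCeq⟩
  · obtain ⟨x₀, hx₀⟩ := hCne
    rw [hCempty] at hx₀
    exact absurd hx₀ (Set.notMem_empty x₀)
  set ℓ : (Fin n → ℝ) → ℝ := fun y => ∑ i, L i * y i with hℓ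
  rw [hCeq] at hw
  obtain ⟨hwCv, hwmax⟩ := hw
  have hℓ0 : ℓ 0 = 0 := by simp [hℓ]
  have hwge : (0:ℝ) ≤ ℓ w := by
    have := hwmax 0 (zero_mem_Cv hv)
    rwa [show ∑ i, L i * (0:Fin n → ℝ) i = ℓ 0 from rfl, hℓ0] at this
  have hneg : ∀ y ∈ Cv I v, ℓ y ≤ 0 := by
    intro y hy
    by_contra hcon
    push_neg at hcon
    set c := (ℓ w + 1) / ℓ y with hc
    have hcpos : 0 < c := div_pos (by linarith) hcon
    have h1 := hwmax _ (Cv_smul hcpos hy)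
    have h2 : (∑ i, L i * ((fun i => c * y i) i)) = c * ℓ y := by
      rw [hℓ, Finset.mul_sum]
      apply Finset.sum_congr rfl
      intro i _
      ring
    rw [h2, hc, div_mul_cancel₀ _ (ne_of_gt hcon)] at h1
    have : ℓ w + 1 ≤ ℓ w := h1
    linarith
  have hw0 : ℓ w = 0 := le_antisymm (hneg w hwCv) hwge
  -- polyhedral data for w and u
  obtain ⟨hwD, hweq⟩ := mem_E_of_mem_Cv hv hG hwCv
  obtain ⟨huD, huforms⟩ := dbar_transfer hv hG hwD hu
  have hsupwu : ∀ g ∈ G, (initialForm w g).support = (initialForm u g).support := by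
    intro g hgG
    rw [huforms g hgG]
  have hueq : ∀ g ∈ G, ∀ α ∈ (initialForm v g).support, wdeg u α = wdeg u (vlead v g) := by
    intro g hgG α hα
    have hαg : α ∈ g.support := by
      rw [support_initialForm] at hα
      exact (mem_mxS_iff.1 hα).1
    have h1 : α ∈ (initialForm w g).support := by
      rw [support_initialForm]
      exact (mem_mxS_iff_deg (hG.ne g hgG) (fun γ hγ => hwD g hgG γ hγ)).2
        ⟨hαg, hweq g hgG α hα⟩
    rw [hsupwu g hgG, support_initialForm] at h1
    exact ((mem_mxS_iff_deg (hG.ne g hgG) (fun γ hγ => huD g hgG γ hγ)).1 h1).2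
  have huCv : u ∈ Cv I v := seg_mem_Cv hv hG huD hueq
  -- choose ε
  have hevent : ∀ᶠ ε in nhdsWithin (0:ℝ) (Set.Ioi 0), ∀ g ∈ G, ∀ α ∈ g.support,
      0 ≤ (1 + ε) * (wdeg w (vlead v g) - wdeg w α) - ε * (wdeg u (vlead v g) - wdeg u α) := by
    rw [Finset.eventually_all]
    intro g hgG
    rw [Finset.eventually_all]
    intro α hα
    set aw := wdeg w (vlead v g) - wdeg w α with haw'
    set au := wdeg u (vlead v g) - wdeg u α with hau'
    have haw : 0 ≤ aw := by
      have := hwD g hgG α hα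
      rw [haw']; linarith
    rcases eq_or_lt_of_le haw with heq0 | hpos
    · have hau0 : au = 0 := by
        have h1 : α ∈ (initialForm w g).support := by
          rw [support_initialForm]
          refine (mem_mxS_iff_deg (hG.ne g hgG) (fun γ hγ => hwD g hgG γ hγ)).2 ⟨hα, ?_⟩
          rw [haw'] at heq0; linarith
        rw [hsupwu g hgG, support_initialForm] at h1
        have := ((mem_mxS_iff_deg (hG.ne g hgG) (fun γ hγ => huD g hgG γ hγ)).1 h1).2
        rw [hau']; linarith
      filter_upwards with ε
      rw [← heq0, hau0]
      ring_nf
      exact le_refl 0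
    · have htend : Filter.Tendsto (fun ε : ℝ => (1 + ε) * aw - ε * au)
          (nhdsWithin (0:ℝ) (Set.Ioi 0)) (nhds aw) := by
        apply Filter.Tendsto.mono_left _ nhdsWithin_le_nhds
        have hcont : Continuous (fun ε : ℝ => (1 + ε) * aw - ε * au) := by continuity
        have := hcont.tendsto 0
        simpa using this
      have := htend.eventually (eventually_gt_nhds hpos)
      filter_upwards [this] with ε hε
      exact hε.le
  obtain ⟨ε, hεcond, hεpos⟩ := (hevent.and self_mem_nhdsWithin).exists
  set p : Fin n → ℝ := fun i => (1 + ε) * w i + (-ε) * u i with hp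
  have hpw : ∀ α, wdeg p α = (1 + ε) * wdeg w α - ε * wdeg u α := by
    intro α
    have := wdeg_weight_lin (1 + ε) (-ε) w u α
    rw [hp]
    rw [this]
    ring
  have hpD : Dbar v G p := by
    intro g hgG α hα
    have := hεcond g hgG α hα
    rw [hpw, hpw]
    linarith
  have hpeq : ∀ g ∈ G, ∀ α ∈ (initialForm v g).support, wdeg p α = wdeg p (vlead v g) := by
    intro g hgG α hα
    rw [hpw, hpw, hweq g hgG α hα, hueq g hgG α hα]
  have hpCv : p ∈ Cv I v := seg_mem_Cv hv hG hpD hpeq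
  have hlp : ℓ p ≤ 0 := hneg p hpCv
  have hlpcalc : ℓ p = (1 + ε) * ℓ w - ε * ℓ u := by
    rw [hℓ]
    simp only [hp]
    rw [Finset.mul_sum, Finset.mul_sum, ← Finset.sum_sub_distrib]
    apply Finset.sum_congr rfl
    intro i _
    ring
  have hlu : ℓ u = 0 := by
    have h1 : ℓ u ≤ 0 := hneg u huCv
    have h2 : 0 ≤ ℓ u := by
      rw [hlpcalc, hw0] at hlp
      nlinarith
    linarith
  rw [hCeq]
  refine ⟨huCv, fun y hy => ?_⟩
  have := hneg y hy
  show ∑ i, L i * y i ≤ ∑ i, L i * u i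
  rw [show ∑ i, L i * u i = ℓ u from rfl, hlu]
  exact this

end GFaux

/-- If `C` is a cone in the Gröbner fan of `I` (a nonempty face of some
`C_v(I)`, `v ∈ ℝ^n_{>0}`), `w ∈ C` and `in_u(I) = in_w(I)`, then `u ∈ C`. -/
theorem mem_cone_of_initialFormIdeal_eq (I : Ideal (MvPolynomial (Fin n) k))
    (v : Fin n → ℝ) (hv : ∀ i, 0 < v i)
    (C : Set (Fin n → ℝ)) (hC : IsFaceOf (Cv I v) C) (hCne : C.Nonempty)
    (w : Fin n → ℝ) (hw : w ∈ C)
    (u : Fin n → ℝ) (hu : initialFormIdeal u I = initialFormIdeal w I) :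
    u ∈ C :=
  GFaux.main hv C hC hCne w hw u hu
end

section
/- Let (A, 𝒜) be a grading on R = k[x_1,…,x_n], let I ⊆ R be an 𝒜-homogeneous ideal, let ≤_1 and ≤_2 be two term orders, and let a ∈ A. If f_1^1, …, f_s^1 is a k-vector space basis of I_a such that in_{≤_1}(f_1^1), …, in_{≤_1}(f_s^1) is a basis of (in_{≤_1}(I))_a, then there exists a basis f_1^2, …, f_s^2 of I_a such that in_{≤_2}(f_1^2), …, in_{≤_2}(f_s^2) is a basis of (in_{≤_2}(I))_a and in_{≤_2}(f_i^2) ≤_1 in_{≤_1}(f_i^1) for every i = 1, …, s. -/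
open MvPolynomial

variable {n : ℕ} {k : Type*} [Field k]

/-- For a grading `𝒜 : ℕ^n → A`, the `k`-subspace `R_a` of `𝒜`-homogeneous
polynomials of degree `a` (all monomials in the support have `𝒜`-degree `a`). -/
def gradedPiece {A : Type*} (𝒜 : (Fin n →₀ ℕ) → A) (a : A) :
    Submodule k (MvPolynomial (Fin n) k) where
  carrier := {f | ∀ b ∈ f.support, 𝒜 b = a}
  add_mem' := by
    intro f g hf hg b hb
    rcases Finset.mem_union.mp (MvPolynomial.support_add hb) with h | h
    · exact hf b h
    · exact hg b h
  zero_mem' := by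
    intro b hb
    simp at hb
  smul_mem' := by
    intro c f hf b hb
    exact hf b (MvPolynomial.support_smul hb)

/-- An ideal is `𝒜`-homogeneous if it is generated by `𝒜`-homogeneous polynomials. -/
def IsHomogeneousIdeal {A : Type*} (𝒜 : (Fin n →₀ ℕ) → A)
    (I : Ideal (MvPolynomial (Fin n) k)) : Prop :=
  ∃ S : Set (MvPolynomial (Fin n) k), I = Ideal.span S ∧
    ∀ f ∈ S, ∃ a : A, ∀ b ∈ f.support, 𝒜 b = a

section Basic
variable {n : ℕ} {k : Type*} [Field k] (τ : TermOrder n)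

theorem TermOrder.asymm_s14 {a b : Fin n →₀ ℕ} (h : τ.lt a b) : ¬ τ.lt b a :=
  fun h' => τ.irrefl a (τ.trans _ _ _ h h')

/-- any nonempty finset has a τ-maximum -/
theorem TermOrder.exists_max {s : Finset (Fin n →₀ ℕ)} (hs : s.Nonempty) :
    ∃ α ∈ s, ∀ β ∈ s, β ≠ α → τ.lt β α := by
  classical
  induction s using Finset.induction with
  | empty => exact absurd hs (by simp)
  | @insert a s hnotmem ih =>
    rcases s.eq_empty_or_nonempty with rfl | hs'
    · exact ⟨a, by simp, by simp +contextual⟩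
    · obtain ⟨α, hα, hmax⟩ := ih hs'
      rcases eq_or_ne a α with rfl | hne
      · exact absurd hα hnotmem
      rcases τ.total a α hne with h | h
      · refine ⟨α, Finset.mem_insert_of_mem hα, ?_⟩
        intro β hβ hβne
        rcases Finset.mem_insert.mp hβ with rfl | hβ
        · exact h
        · exact hmax β hβ hβne
      · refine ⟨a, Finset.mem_insert_self a s, ?_⟩
        intro β hβ hβne
        rcases Finset.mem_insert.mp hβ with rfl | hβ
        · exact absurd rfl hβne
        · rcases eq_or_ne β α with rfl | h2
          · exact h
          · exact τ.trans _ _ _ (hmax β hβ h2) h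

variable {f : MvPolynomial (Fin n) k}

theorem TermOrder.leadExp_spec_s14 (hf : f ≠ 0) :
    τ.leadExp f ∈ f.support ∧ ∀ β ∈ f.support, β ≠ τ.leadExp f → τ.lt β (τ.leadExp f) := by
  have hne : f.support.Nonempty := MvPolynomial.support_nonempty.mpr hf
  have h : ∃ α, α ∈ f.support ∧ ∀ β ∈ f.support, β ≠ α → τ.lt β α := τ.exists_max hne
  rw [TermOrder.leadExp]
  simp only [dif_pos h]
  exact h.choose_spec

theorem TermOrder.leadExp_mem (hf : f ≠ 0) : τ.leadExp f ∈ f.support :=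
  (τ.leadExp_spec_s14 hf).1

theorem TermOrder.leadCoeff_ne_zero (hf : f ≠ 0) : f.coeff (τ.leadExp f) ≠ 0 :=
  MvPolynomial.mem_support_iff.mp (τ.leadExp_mem hf)

theorem TermOrder.lt_leadExp (hf : f ≠ 0) {β : Fin n →₀ ℕ} (hβ : β ∈ f.support)
    (hne : β ≠ τ.leadExp f) : τ.lt β (τ.leadExp f) :=
  (τ.leadExp_spec_s14 hf).2 β hβ hne

theorem TermOrder.not_leadExp_lt (hf : f ≠ 0) {β : Fin n →₀ ℕ} (hβ : β ∈ f.support) :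
    ¬ τ.lt (τ.leadExp f) β := by
  rcases eq_or_ne β (τ.leadExp f) with rfl | hne
  · exact τ.irrefl _
  · exact τ.asymm_s14 (τ.lt_leadExp hf hβ hne)

/-- uniqueness of the maximum -/
theorem TermOrder.leadExp_eq_of (hf : f ≠ 0) {α : Fin n →₀ ℕ} (hα : α ∈ f.support)
    (hmax : ∀ β ∈ f.support, β ≠ α → τ.lt β α) : τ.leadExp f = α := by
  by_contra hne
  exact τ.asymm_s14 (hmax _ (τ.leadExp_mem hf) hne) (τ.lt_leadExp hf hα (Ne.symm hne))

theorem TermOrder.initialTerm_ne_zero (hf : f ≠ 0) : τ.initialTerm f ≠ 0 := by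
  rw [TermOrder.initialTerm]
  simpa [MvPolynomial.monomial_eq_zero] using τ.leadCoeff_ne_zero hf

theorem TermOrder.leadExp_monomial {α : Fin n →₀ ℕ} {c : k} (hc : c ≠ 0) :
    τ.leadExp (MvPolynomial.monomial α c) = α := by
  apply τ.leadExp_eq_of (by simp [MvPolynomial.monomial_eq_zero, hc])
  · simp [MvPolynomial.support_monomial, hc]
  · simp +contextual [MvPolynomial.support_monomial, hc]

theorem TermOrder.leadExp_initialTerm (hf : f ≠ 0) :
    τ.leadExp (τ.initialTerm f) = τ.leadExp f :=
  τ.leadExp_monomial (τ.leadCoeff_ne_zero hf)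

end Basic
section Mul
variable {n : ℕ} {k : Type*} [Field k] (τ : TermOrder n)
open MvPolynomial

theorem mem_support_monomial_mul_s14 {γ β : Fin n →₀ ℕ} {c : k} (hc : c ≠ 0)
    {f : MvPolynomial (Fin n) k} :
    β ∈ (monomial γ c * f).support ↔ ∃ δ ∈ f.support, β = γ + δ := by
  rw [MvPolynomial.mem_support_iff, MvPolynomial.coeff_monomial_mul']
  constructor
  · intro h
    split_ifs at h with hle
    · exact ⟨β - γ, MvPolynomial.mem_support_iff.mpr (by
        intro h0; rw [h0, mul_zero] at h; exact h rfl), (add_tsub_cancel_of_le hle).symm⟩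
    · exact absurd rfl h
  · rintro ⟨δ, hδ, rfl⟩
    have hle : γ ≤ γ + δ := le_self_add
    rw [if_pos hle, add_tsub_cancel_left]
    exact mul_ne_zero hc (MvPolynomial.mem_support_iff.mp hδ)

theorem TermOrder.leadExp_monomial_mul {γ : Fin n →₀ ℕ} {c : k} (hc : c ≠ 0)
    {f : MvPolynomial (Fin n) k} (hf : f ≠ 0) :
    τ.leadExp (monomial γ c * f) = γ + τ.leadExp f := by
  have hmem : γ + τ.leadExp f ∈ (monomial γ c * f).support :=
    (mem_support_monomial_mul_s14 hc).mpr ⟨τ.leadExp f, τ.leadExp_mem hf, rfl⟩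
  have hne : monomial γ c * f ≠ 0 := by
    intro h; rw [h] at hmem; simp at hmem
  apply τ.leadExp_eq_of hne
  · exact hmem
  · intro β hβ hne'
    obtain ⟨δ, hδ, rfl⟩ := (mem_support_monomial_mul_s14 hc).mp hβ
    have hδne : δ ≠ τ.leadExp f := fun h => hne' (by rw [h])
    have := τ.add_right _ _ γ (τ.lt_leadExp hf hδ hδne)
    rwa [add_comm δ γ, add_comm (τ.leadExp f) γ] at this

theorem coeff_monomial_mul_lead {γ : Fin n →₀ ℕ} {c : k}
    (f : MvPolynomial (Fin n) k) {δ : Fin n →₀ ℕ} :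
    (monomial γ c * f).coeff (γ + δ) = c * f.coeff δ :=
  MvPolynomial.coeff_monomial_mul _ _ _ _

end Mul

section HomComp
variable {n : ℕ} {k : Type*} [Field k] {A : Type*} [AddCommMonoid A]
open MvPolynomial

/-- the degree-`a` homogeneous component of `f` -/
noncomputable def homComp (𝒜 : (Fin n →₀ ℕ) → A) (a : A) (f : MvPolynomial (Fin n) k) :
    MvPolynomial (Fin n) k := by
  classical
  exact ∑ b ∈ f.support.filter (fun b => 𝒜 b = a), monomial b (f.coeff b)

variable (𝒜 : (Fin n →₀ ℕ) → A)

theorem coeff_homComp [DecidableEq A] (a : A) (f : MvPolynomial (Fin n) k) (δ : Fin n →₀ ℕ) :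
    (homComp 𝒜 a f).coeff δ = if 𝒜 δ = a then f.coeff δ else 0 := by
  classical
  rw [homComp, MvPolynomial.coeff_sum]
  simp only [MvPolynomial.coeff_monomial]
  rw [Finset.sum_ite_eq']
  by_cases h1 : 𝒜 δ = a <;> by_cases h2 : δ ∈ f.support <;>
    simp_all [Finset.mem_filter, MvPolynomial.notMem_support_iff]

theorem homComp_add (a : A) (f g : MvPolynomial (Fin n) k) :
    homComp 𝒜 a (f + g) = homComp 𝒜 a f + homComp 𝒜 a g := by
  classical
  ext δ
  simp only [coeff_homComp, MvPolynomial.coeff_add]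
  split_ifs <;> simp

theorem homComp_smul (a : A) (c : k) (f : MvPolynomial (Fin n) k) :
    homComp 𝒜 a (c • f) = c • homComp 𝒜 a f := by
  classical
  ext δ
  simp only [coeff_homComp, MvPolynomial.smul_eq_C_mul, MvPolynomial.coeff_C_mul]
  split_ifs <;> simp

theorem support_homComp (a : A) (f : MvPolynomial (Fin n) k) :
    (homComp 𝒜 a f).support ⊆ f.support := by
  classical
  intro δ hδ
  rw [MvPolynomial.mem_support_iff, coeff_homComp] at hδ
  rw [MvPolynomial.mem_support_iff]
  intro h; rw [h] at hδ; simp at hδ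

theorem homComp_degree (a : A) (f : MvPolynomial (Fin n) k) :
    ∀ b ∈ (homComp 𝒜 a f).support, 𝒜 b = a := by
  classical
  intro b hb
  rw [MvPolynomial.mem_support_iff, coeff_homComp] at hb
  by_contra h
  rw [if_neg h] at hb; exact hb rfl

theorem homComp_self {a : A} {f : MvPolynomial (Fin n) k} (hf : ∀ b ∈ f.support, 𝒜 b = a) :
    homComp 𝒜 a f = f := by
  classical
  ext δ
  rw [coeff_homComp]
  split_ifs with h
  · rfl
  · rcases eq_or_ne (f.coeff δ) 0 with h0 | h0
    · exact h0.symm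
    · exact absurd (hf δ (MvPolynomial.mem_support_iff.mpr h0)) h

theorem homComp_zero (a : A) : homComp 𝒜 a (0 : MvPolynomial (Fin n) k) = 0 := by
  simp [homComp]

theorem homComp_eq_zero {a : A} {f : MvPolynomial (Fin n) k}
    (hf : ∀ b ∈ f.support, 𝒜 b ≠ a) : homComp 𝒜 a f = 0 := by
  classical
  ext δ
  rw [coeff_homComp]
  split_ifs with h
  · rcases eq_or_ne (f.coeff δ) 0 with hc | hc
    · simp [hc]
    · exact absurd h (hf δ (MvPolynomial.mem_support_iff.mpr hc))
  · simp

theorem homComp_zero_of_ne {a a' : A} {f : MvPolynomial (Fin n) k}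
    (hf : ∀ b ∈ f.support, 𝒜 b = a') (hne : a' ≠ a) : homComp 𝒜 a f = 0 ∨ f = 0 := by
  classical
  rcases eq_or_ne f 0 with rfl | h0
  · right; rfl
  left
  ext δ
  rw [coeff_homComp]
  split_ifs with h
  · rcases eq_or_ne (f.coeff δ) 0 with hc | hc
    · simp [hc]
    · exact absurd (hf δ (MvPolynomial.mem_support_iff.mpr hc) ▸ h) hne
  · simp

end HomComp
set_option linter.unusedSectionVars false

section HomIdeal
variable {n : ℕ} {k : Type*} [Field k] {A : Type*} [AddCommMonoid A]
open MvPolynomial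

variable {𝒜 : (Fin n →₀ ℕ) → A}

theorem homComp_monomial_mul_of_eq (hadd : ∀ x y, 𝒜 (x + y) = 𝒜 x + 𝒜 y)
    {a a' : A} {s : MvPolynomial (Fin n) k} (hs : ∀ b ∈ s.support, 𝒜 b = a')
    {γ : Fin n →₀ ℕ} {c : k} (h : 𝒜 γ + a' = a) :
    homComp 𝒜 a (monomial γ c * s) = monomial γ c * s := by
  rcases eq_or_ne c 0 with rfl | hc
  · simp [homComp_zero]
  apply homComp_self
  intro b hb
  obtain ⟨β, hβ, rfl⟩ := (mem_support_monomial_mul_s14 hc).mp hb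
  rw [hadd, hs β hβ, h]

theorem homComp_monomial_mul_of_ne (hadd : ∀ x y, 𝒜 (x + y) = 𝒜 x + 𝒜 y)
    {a a' : A} {s : MvPolynomial (Fin n) k} (hs : ∀ b ∈ s.support, 𝒜 b = a')
    {γ : Fin n →₀ ℕ} {c : k} (h : 𝒜 γ + a' ≠ a) :
    homComp 𝒜 a (monomial γ c * s) = 0 := by
  rcases eq_or_ne c 0 with rfl | hc
  · simp [homComp_zero]
  apply homComp_eq_zero
  intro b hb
  obtain ⟨β, hβ, rfl⟩ := (mem_support_monomial_mul_s14 hc).mp hb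
  rw [hadd, hs β hβ]
  exact h

theorem homComp_mem (hadd : ∀ x y, 𝒜 (x + y) = 𝒜 x + 𝒜 y)
    {I : Ideal (MvPolynomial (Fin n) k)} (hI : IsHomogeneousIdeal 𝒜 I)
    {f : MvPolynomial (Fin n) k} (hf : f ∈ I) (a : A) : homComp 𝒜 a f ∈ I := by
  classical
  obtain ⟨S, rfl, hS⟩ := hI
  revert a
  refine Submodule.span_induction ?_ ?_ ?_ ?_ hf
  · intro s hs a
    obtain ⟨a', ha'⟩ := hS s hs
    rcases eq_or_ne a' a with rfl | hne
    · rw [homComp_self 𝒜 ha']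
      exact Ideal.subset_span hs
    · rcases homComp_zero_of_ne 𝒜 ha' hne with h | h
      · rw [h]; exact Submodule.zero_mem _
      · rw [h, homComp_zero]; exact Submodule.zero_mem _
  · intro a; rw [homComp_zero]; exact Submodule.zero_mem _
  · intro x y _ _ hx hy a
    rw [homComp_add]
    exact Submodule.add_mem _ (hx a) (hy a)
  · intro c x _ hx a
    rw [smul_eq_mul]
    have hcx : c * x = ∑ γ ∈ c.support, monomial γ (c.coeff γ) * x := by
      rw [← Finset.sum_mul, ← MvPolynomial.as_sum c]
    rw [hcx]
    have hsum : ∀ (t : Finset (Fin n →₀ ℕ)),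
        homComp 𝒜 a (∑ γ ∈ t, monomial γ (c.coeff γ) * x) =
        ∑ γ ∈ t, homComp 𝒜 a (monomial γ (c.coeff γ) * x) := by
      intro t
      induction t using Finset.induction with
      | empty => simp [homComp_zero]
      | @insert γ t hγ ih => rw [Finset.sum_insert hγ, Finset.sum_insert hγ, homComp_add, ih]
    rw [hsum]
    apply Submodule.sum_mem
    intro γ _
    have key : homComp 𝒜 a (monomial γ (c.coeff γ) * x) =
        ∑ b ∈ (x.support.image 𝒜).filter (fun b => 𝒜 γ + b = a),
          monomial γ (c.coeff γ) * homComp 𝒜 b x := by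
      ext δ
      rw [coeff_homComp, MvPolynomial.coeff_sum]
      by_cases hle : γ ≤ δ
      · obtain ⟨β, rfl⟩ := exists_add_of_le hle
        rw [hadd]
        simp only [coeff_monomial_mul_lead, coeff_homComp, mul_ite, mul_zero]
        rw [Finset.sum_ite_eq]
        by_cases hβ : β ∈ x.support
        · have hmem : 𝒜 β ∈ Finset.image 𝒜 x.support := Finset.mem_image_of_mem _ hβ
          by_cases hcond : 𝒜 γ + 𝒜 β = a <;>
            simp [Finset.mem_filter, hmem, hcond]
        · have h0 : x.coeff β = 0 := MvPolynomial.notMem_support_iff.mp hβ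
          simp [h0]
      · have h1 : (monomial γ (c.coeff γ) * x).coeff δ = 0 := by
          rw [MvPolynomial.coeff_monomial_mul', if_neg hle]
        have h2 : ∀ b, (monomial γ (c.coeff γ) * homComp 𝒜 b x).coeff δ = 0 := by
          intro b
          rw [MvPolynomial.coeff_monomial_mul', if_neg hle]
        simp [h1, h2]
    rw [key]
    apply Submodule.sum_mem
    intro b _
    exact Ideal.mul_mem_left _ _ (hx b)

end HomIdeal
section LemmaA
variable {n : ℕ} {k : Type*} [Field k] {A : Type*} [AddCommMonoid A]
open MvPolynomial

variable {𝒜 : (Fin n →₀ ℕ) → A}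

theorem ideal_span_subset_span_monomial_mul (S : Set (MvPolynomial (Fin n) k))
    {p : MvPolynomial (Fin n) k} (hp : p ∈ Ideal.span S) :
    p ∈ Submodule.span k {q | ∃ γ : Fin n →₀ ℕ, ∃ s ∈ S, q = monomial γ 1 * s} := by
  classical
  set T : Set (MvPolynomial (Fin n) k) := {q | ∃ γ : Fin n →₀ ℕ, ∃ s ∈ S, q = monomial γ 1 * s}
  have hmulT : ∀ f ∈ Submodule.span k T, ∀ c : MvPolynomial (Fin n) k,
      c * f ∈ Submodule.span k T := by
    intro f hf
    refine Submodule.span_induction ?_ ?_ ?_ ?_ hf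
    · rintro q ⟨γ, s, hs, rfl⟩ c
      have : c * (monomial γ 1 * s) =
          ∑ δ ∈ c.support, c.coeff δ • (monomial (δ + γ) 1 * s) := by
        conv_lhs => rw [MvPolynomial.as_sum c]
        rw [Finset.sum_mul]
        refine Finset.sum_congr rfl fun δ _ => ?_
        rw [smul_eq_C_mul, ← mul_assoc, ← mul_assoc, MvPolynomial.C_mul_monomial,
          MvPolynomial.monomial_mul, mul_one]
      rw [this]
      exact Submodule.sum_mem _ fun δ _ => Submodule.smul_mem _ _
        (Submodule.subset_span ⟨δ + γ, s, hs, rfl⟩)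
    · intro c; rw [mul_zero]; exact Submodule.zero_mem _
    · intro x y _ _ hx hy c
      rw [mul_add]; exact Submodule.add_mem _ (hx c) (hy c)
    · intro d x _ hx c
      rw [mul_smul_comm]
      exact Submodule.smul_mem _ _ (hx c)
  refine Submodule.span_induction ?_ ?_ ?_ ?_ hp
  · intro s hs
    have : s = monomial 0 1 * s := by rw [MvPolynomial.monomial_zero', MvPolynomial.C_1, one_mul]
    rw [this]
    exact Submodule.subset_span ⟨0, s, hs, rfl⟩
  · exact Submodule.zero_mem _
  · intro x y _ _ hx hy; exact Submodule.add_mem _ hx hy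
  · intro c x _ hx
    rw [smul_eq_mul]
    exact hmulT x hx c

/-- Lemma A: the degree-`a` piece of `in_τ(I)` is spanned by initial terms of
degree-`a` homogeneous elements of `I`. -/
theorem initialIdeal_gradedPiece (τ : TermOrder n)
    (hadd : ∀ x y, 𝒜 (x + y) = 𝒜 x + 𝒜 y)
    {I : Ideal (MvPolynomial (Fin n) k)} (hI : IsHomogeneousIdeal 𝒜 I) (a : A) :
    Submodule.restrictScalars k (τ.initialIdeal I) ⊓ gradedPiece (k := k) 𝒜 a =
    Submodule.span k {p | ∃ g, (g ∈ I ∧ g ≠ 0 ∧ ∀ b ∈ g.support, 𝒜 b = a) ∧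
      p = τ.initialTerm g} := by
  classical
  apply le_antisymm
  · rintro p ⟨hp1, hp2⟩
    have hp1' : p ∈ Submodule.span k {q | ∃ γ : Fin n →₀ ℕ,
        ∃ s ∈ {p | ∃ f ∈ I, f ≠ 0 ∧ p = τ.initialTerm f}, q = monomial γ 1 * s} :=
      ideal_span_subset_span_monomial_mul _ hp1
    have hhom : ∀ b ∈ p.support, 𝒜 b = a := hp2
    have hcomp : homComp 𝒜 a p = p := homComp_self 𝒜 hhom
    rw [← hcomp]
    clear hcomp hhom hp2 hp1
    refine Submodule.span_induction ?_ ?_ ?_ ?_ hp1'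
    · rintro q ⟨γ, s, ⟨f, hfI, hf0, rfl⟩, rfl⟩
      set α := τ.leadExp f with hα
      set c := f.coeff α with hc
      have hc0 : c ≠ 0 := τ.leadCoeff_ne_zero hf0
      have hsupp : ∀ b ∈ (τ.initialTerm f).support, 𝒜 b = 𝒜 α := by
        intro b hb
        rw [TermOrder.initialTerm] at hb
        have := MvPolynomial.support_monomial_subset hb
        simp only [Finset.mem_singleton] at this
        rw [this]
      by_cases hcond : 𝒜 γ + 𝒜 α = a
      · rw [homComp_monomial_mul_of_eq hadd hsupp hcond]
        -- the element is `monomial (γ+α) c = in_τ(g)` for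
        -- `g := homComp 𝒜 a (monomial γ 1 * f)`
        set h := monomial γ (1 : k) * f with hh
        have hh0 : h ≠ 0 := by
          intro hz
          have : (monomial γ (1:k) * f).coeff (γ + α) = 1 * c := coeff_monomial_mul_lead f
          rw [← hh, hz] at this
          simp only [MvPolynomial.coeff_zero] at this
          exact hc0 (by rw [← one_mul c, ← this])
        have hlead : τ.leadExp h = γ + α := τ.leadExp_monomial_mul one_ne_zero hf0
        have hdeg : 𝒜 (γ + α) = a := by rw [hadd]; exact hcond
        set g := homComp 𝒜 a h with hg
        have hgcoeff : g.coeff (γ + α) = c := by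
          rw [hg, coeff_homComp, if_pos hdeg, hh, coeff_monomial_mul_lead, one_mul]
        have hg0 : g ≠ 0 := by
          intro hz; rw [hz] at hgcoeff; exact hc0 (by simp at hgcoeff; exact hgcoeff.symm)
        have hgsupp : g.support ⊆ h.support := support_homComp 𝒜 a h
        have hglead : τ.leadExp g = γ + α := by
          apply τ.leadExp_eq_of hg0
          · exact MvPolynomial.mem_support_iff.mpr (by rw [hgcoeff]; exact hc0)
          · intro β hβ hβne
            have hβne' : β ≠ τ.leadExp h := by rw [hlead]; exact hβne
            have h2 := τ.lt_leadExp hh0 (hgsupp hβ) hβne'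
            rwa [hlead] at h2
        have hin : τ.initialTerm g = monomial (γ + α) c := by
          rw [TermOrder.initialTerm, hglead, hgcoeff]
        have hq : monomial γ (1:k) * τ.initialTerm f = monomial (γ + α) c := by
          rw [TermOrder.initialTerm, ← hα, ← hc, MvPolynomial.monomial_mul, one_mul]
        rw [hq, ← hin]
        refine Submodule.subset_span ⟨g, ⟨?_, hg0, homComp_degree 𝒜 a h⟩, rfl⟩
        exact homComp_mem hadd hI (Ideal.mul_mem_left I _ hfI) a
      · rw [homComp_monomial_mul_of_ne hadd hsupp hcond]
        exact Submodule.zero_mem _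
    · rw [homComp_zero]; exact Submodule.zero_mem _
    · intro x y _ _ hx hy; rw [homComp_add]; exact Submodule.add_mem _ hx hy
    · intro c x _ hx; rw [homComp_smul]; exact Submodule.smul_mem _ _ hx
  · rw [Submodule.span_le]
    rintro p ⟨g, ⟨hgI, hg0, hghom⟩, rfl⟩
    constructor
    · exact Ideal.subset_span ⟨g, hgI, hg0, rfl⟩
    · intro b hb
      rw [TermOrder.initialTerm] at hb
      have := MvPolynomial.support_monomial_subset hb
      simp only [Finset.mem_singleton] at this
      rw [this]
      exact hghom _ (τ.leadExp_mem hg0)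
end LemmaA
section LemmaB
variable {n : ℕ} {k : Type*} [Field k] {A : Type*} [AddCommMonoid A]
open MvPolynomial

/-- the set of lead exponents of nonzero elements of `W` -/
def LSet (τ : TermOrder n) (W : Submodule k (MvPolynomial (Fin n) k)) : Set (Fin n →₀ ℕ) :=
  {α | ∃ f, f ∈ W ∧ f ≠ 0 ∧ τ.leadExp f = α}

variable {𝒜 : (Fin n →₀ ℕ) → A} {a : A} {W : Submodule k (MvPolynomial (Fin n) k)}

theorem LSet_subset_fiber (τ : TermOrder n) (hW : ∀ f ∈ W, ∀ b ∈ f.support, 𝒜 b = a) :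
    LSet τ W ⊆ {b | 𝒜 b = a} := by
  rintro α ⟨f, hfW, hf0, rfl⟩
  exact hW f hfW _ (τ.leadExp_mem hf0)

theorem LSet_finite (τ : TermOrder n) (hfib : ∀ a : A, {b : Fin n →₀ ℕ | 𝒜 b = a}.Finite)
    (hW : ∀ f ∈ W, ∀ b ∈ f.support, 𝒜 b = a) : (LSet τ W).Finite :=
  (hfib a).subset (LSet_subset_fiber τ hW)

theorem exists_leadBasis (τ : TermOrder n)
    (hfib : ∀ a : A, {b : Fin n →₀ ℕ | 𝒜 b = a}.Finite)
    (hW : ∀ f ∈ W, ∀ b ∈ f.support, 𝒜 b = a) :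
    ∃ g : LSet τ W → MvPolynomial (Fin n) k,
      (∀ α, g α ∈ W) ∧ (∀ α, g α ≠ 0) ∧ (∀ α, τ.leadExp (g α) = (α : Fin n →₀ ℕ)) ∧
      LinearIndependent k g ∧ Submodule.span k (Set.range g) = W := by
  classical
  have hchoice : ∀ α : LSet τ W, ∃ f, f ∈ W ∧ f ≠ 0 ∧ τ.leadExp f = (α : Fin n →₀ ℕ) :=
    fun α => α.2
  choose g hgW hg0 hglead using hchoice
  refine ⟨g, hgW, hg0, hglead, ?_, ?_⟩
  · -- linear independence
    rw [linearIndependent_iff]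
    intro l hl
    by_contra hlne
    have hsupp : l.support.Nonempty := Finsupp.support_nonempty_iff.mpr hlne
    have himg : (l.support.image (fun i : LSet τ W => (i : Fin n →₀ ℕ))).Nonempty :=
      hsupp.image _
    obtain ⟨β, hβmem, hβmax⟩ := τ.exists_max himg
    obtain ⟨i0, hi0, hβ⟩ := Finset.mem_image.mp hβmem
    have hcoeff : (Finsupp.linearCombination k g l).coeff β = l i0 * (g i0).coeff β := by
      rw [Finsupp.linearCombination_apply, Finsupp.sum, MvPolynomial.coeff_sum]
      rw [Finset.sum_eq_single i0]
      · rw [MvPolynomial.coeff_smul, smul_eq_mul]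
      · intro i hi hine
        rw [MvPolynomial.coeff_smul, smul_eq_mul]
        have hβnot : β ∉ (g i).support := by
          intro hmem
          have hne2 : β ≠ τ.leadExp (g i) := by
            rw [hglead i]
            intro h
            exact hine (Subtype.ext (by rw [← h, ← hβ]))
          have h1 : τ.lt β (τ.leadExp (g i)) := τ.lt_leadExp (hg0 i) hmem hne2
          have h2 : τ.lt (τ.leadExp (g i)) β := by
            rw [hglead i]
            apply hβmax _ (Finset.mem_image_of_mem _ hi)
            intro h
            rw [hglead i] at hne2
            exact hne2 h.symm
          exact τ.asymm_s14 h1 h2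
        rw [MvPolynomial.notMem_support_iff.mp hβnot, mul_zero]
      · intro h; exact absurd hi0 h
    rw [hl, MvPolynomial.coeff_zero] at hcoeff
    have hgc : (g i0).coeff β ≠ 0 := by
      rw [← hβ, ← hglead i0]
      exact τ.leadCoeff_ne_zero (hg0 i0)
    exact (Finsupp.mem_support_iff.mp hi0) ((mul_eq_zero.mp hcoeff.symm).resolve_right hgc)
  · apply le_antisymm
    · rw [Submodule.span_le]
      rintro q ⟨α, rfl⟩
      exact hgW α
    · intro f hf
      set Fa := (hfib a).toFinset with hFa
      have key : ∀ N : ℕ, ∀ f, f ∈ W →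
          (Fa.filter (fun β => β = τ.leadExp f ∨ τ.lt β (τ.leadExp f))).card < N →
          f ∈ Submodule.span k (Set.range g) := by
        intro N
        induction N with
        | zero => intro f _ h; exact absurd h (by simp)
        | succ N ih =>
          intro f hfW hcard
          rcases eq_or_ne f 0 with rfl | hf0
          · exact Submodule.zero_mem _
          have hαL : τ.leadExp f ∈ LSet τ W := ⟨f, hfW, hf0, rfl⟩
          set α : LSet τ W := ⟨τ.leadExp f, hαL⟩ with hαdef
          have hgla : τ.leadExp (g α) = τ.leadExp f := hglead α
          have hgc0 : (g α).coeff (τ.leadExp f) ≠ 0 := by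
            have := τ.leadCoeff_ne_zero (hg0 α); rwa [hgla] at this
          set c : k := f.coeff (τ.leadExp f) / (g α).coeff (τ.leadExp f) with hc
          set f' := f - c • g α with hf'
          have hf'W : f' ∈ W := Submodule.sub_mem _ hfW (Submodule.smul_mem _ _ (hgW α))
          have hf'coeff : f'.coeff (τ.leadExp f) = 0 := by
            rw [hf', MvPolynomial.coeff_sub, MvPolynomial.coeff_smul, smul_eq_mul, hc,
              div_mul_cancel₀ _ hgc0, sub_self]
          have hfeq : f = f' + c • g α := by rw [hf']; ring
          have hlt : ∀ β ∈ f'.support, τ.lt β (τ.leadExp f) := by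
            intro β hβ
            have hβne : β ≠ τ.leadExp f := by
              intro h
              rw [h] at hβ
              exact (MvPolynomial.mem_support_iff.mp hβ) hf'coeff
            have hβ' : β ∈ f.support ∪ (c • g α).support := by
              rw [hf'] at hβ
              exact MvPolynomial.support_sub _ _ _ hβ
            rcases Finset.mem_union.mp hβ' with h | h
            · exact τ.lt_leadExp hf0 h hβne
            · have h2 : β ∈ (g α).support := MvPolynomial.support_smul h
              have := τ.lt_leadExp (hg0 α) h2 (by rw [hgla]; exact hβne)
              rwa [hgla] at this
          rcases eq_or_ne f' 0 with h0 | hf'0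
          · rw [hfeq, h0, zero_add]
            exact Submodule.smul_mem _ _ (Submodule.subset_span ⟨α, rfl⟩)
          have hltlead : τ.lt (τ.leadExp f') (τ.leadExp f) := hlt _ (τ.leadExp_mem hf'0)
          have hsubset : Fa.filter (fun β => β = τ.leadExp f' ∨ τ.lt β (τ.leadExp f'))
              ⊆ Fa.filter (fun β => β = τ.leadExp f ∨ τ.lt β (τ.leadExp f)) := by
            intro β hβ
            rw [Finset.mem_filter] at hβ ⊢
            refine ⟨hβ.1, Or.inr ?_⟩
            rcases hβ.2 with rfl | h
            · exact hltlead
            · exact τ.trans _ _ _ h hltlead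
          have hmem2 : τ.leadExp f ∈
              Fa.filter (fun β => β = τ.leadExp f ∨ τ.lt β (τ.leadExp f)) := by
            rw [Finset.mem_filter]
            refine ⟨?_, Or.inl rfl⟩
            rw [hFa, Set.Finite.mem_toFinset]
            exact hW f hfW _ (τ.leadExp_mem hf0)
          have hnotmem : τ.leadExp f ∉
              Fa.filter (fun β => β = τ.leadExp f' ∨ τ.lt β (τ.leadExp f')) := by
            rw [Finset.mem_filter]
            rintro ⟨-, h | h⟩
            · rw [h] at hltlead; exact τ.irrefl _ hltlead
            · exact τ.asymm_s14 hltlead h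
          have hcard' := Finset.card_lt_card
            ((Finset.ssubset_iff_of_subset hsubset).mpr ⟨_, hmem2, hnotmem⟩)
          have hrec := ih f' hf'W (lt_of_lt_of_le hcard' (Nat.lt_succ_iff.mp hcard))
          rw [hfeq]
          exact Submodule.add_mem _ hrec
            (Submodule.smul_mem _ _ (Submodule.subset_span ⟨α, rfl⟩))
      exact key _ f hf (Nat.lt_succ_self _)

end LemmaB
section Order
variable {n : ℕ}


/-- `τ.lt` is a strict total order -/
theorem TermOrder.isSTO (τ : TermOrder n) : IsStrictTotalOrder (Fin n →₀ ℕ) τ.lt where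
  trichotomous a b := by
    rcases eq_or_ne a b with rfl | hne
    · exact fun _ _ => rfl
    · rcases τ.total a b hne with h | h
      · exact fun h' _ => absurd h h'
      · exact fun _ h' => absurd h h'
  irrefl := τ.irrefl
  trans := τ.trans

/-- the linear order induced by a term order -/
noncomputable def TermOrder.toLinearOrder (τ : TermOrder n) : LinearOrder (Fin n →₀ ℕ) :=
  haveI := τ.isSTO
  haveI : DecidableRel τ.lt := fun _ _ => Classical.dec _
  linearOrderOfSTO τ.lt

theorem TermOrder.toLinearOrder_le (τ : TermOrder n) (a b : Fin n →₀ ℕ) :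
    τ.toLinearOrder.le a b ↔ (a = b ∨ τ.lt a b) := Iff.rfl

end Order

section Helpers
variable {n : ℕ} {k : Type*} [Field k]
open MvPolynomial

/-- a family with distinct lead exponents has linearly independent initial terms -/
theorem li_initialTerms (τ : TermOrder n) {ι : Type*} {v : ι → MvPolynomial (Fin n) k}
    (h0 : ∀ i, v i ≠ 0) (hinj : Function.Injective (fun i => τ.leadExp (v i))) :
    LinearIndependent k (fun i => τ.initialTerm (v i)) := by
  have hli : LinearIndependent k (fun i =>
      (monomial (τ.leadExp (v i)) 1 : MvPolynomial (Fin n) k)) := by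
    have hb := (MvPolynomial.basisMonomials (Fin n) k).linearIndependent
    have := hb.comp _ hinj
    rwa [MvPolynomial.coe_basisMonomials] at this
  have h2 := hli.units_smul (fun i => Units.mk0 ((v i).coeff (τ.leadExp (v i)))
    (τ.leadCoeff_ne_zero (h0 i)))
  convert h2 using 1
  funext i
  show τ.initialTerm (v i) =
    (Units.mk0 ((v i).coeff (τ.leadExp (v i))) (τ.leadCoeff_ne_zero (h0 i)) : kˣ) •
      monomial (τ.leadExp (v i)) (1:k)
  rw [TermOrder.initialTerm]
  simp [Units.smul_def, MvPolynomial.smul_monomial]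

/-- a finite li family contained in `W` and spanning `W` computes the finrank of `W` -/
theorem finrank_eq_card_of_family {ι : Type*} [Fintype ι]
    {W : Submodule k (MvPolynomial (Fin n) k)}
    {v : ι → MvPolynomial (Fin n) k} (hmem : ∀ i, v i ∈ W) (hli : LinearIndependent k v)
    (hspan : Submodule.span k (Set.range v) = W) :
    Module.finrank k W = Fintype.card ι := by
  let v' : ι → W := fun i => ⟨v i, hmem i⟩
  have hcomp : W.subtype ∘ v' = v := rfl
  have hli' : LinearIndependent k v' := by
    apply LinearIndependent.of_comp W.subtype
    rw [hcomp]; exact hli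
  have hspan' : ⊤ ≤ Submodule.span k (Set.range v') := by
    have : Submodule.span k (Set.range v') = ⊤ := by
      apply Submodule.map_injective_of_injective W.injective_subtype
      rw [Submodule.map_span, ← Set.range_comp, hcomp, hspan, Submodule.map_top,
        Submodule.range_subtype]
    rw [this]
  exact Module.finrank_eq_card_basis (Module.Basis.mk hli' hspan')

/-- matching: if every lower set catches at least as many elements of `t` as of `s`,
then the `i`-th smallest element of `t` is at most the `i`-th smallest of `s`. -/
theorem orderIsoOfFin_le_of_counts {X : Type*} [LinearOrder X] {m : ℕ} (s t : Finset X)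
    (hs : s.card = m) (ht : t.card = m)
    (h : ∀ β : X, (s.filter (· ≤ β)).card ≤ (t.filter (· ≤ β)).card) (i : Fin m) :
    (t.orderIsoOfFin ht i : X) ≤ (s.orderIsoOfFin hs i : X) := by
  classical
  by_contra hc
  push_neg at hc
  set β := (s.orderIsoOfFin hs i : X) with hβ
  have h1 : i + 1 ≤ (s.filter (· ≤ β)).card := by
    have hsub : (Finset.Iic i).card ≤ (s.filter (· ≤ β)).card := by
      apply Finset.card_le_card_of_injOn (fun j => (s.orderIsoOfFin hs j : X))
      · intro j hj
        rw [Finset.mem_coe, Finset.mem_Iic] at hj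
        rw [Finset.mem_coe, Finset.mem_filter]
        exact ⟨(s.orderIsoOfFin hs j).2, (s.orderIsoOfFin hs).monotone hj⟩
      · intro j₁ _ j₂ _ hj
        exact (s.orderIsoOfFin hs).injective (Subtype.ext hj)
    rwa [Fin.card_Iic] at hsub
  have h2 : (t.filter (· ≤ β)).card ≤ i := by
    have himg : t.filter (· ≤ β) =
        (Finset.univ.filter (fun j : Fin m => (t.orderIsoOfFin ht j : X) ≤ β)).image
          (fun j => (t.orderIsoOfFin ht j : X)) := by
      ext x
      simp only [Finset.mem_filter, Finset.mem_image, Finset.mem_univ, true_and]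
      constructor
      · rintro ⟨hx, hxle⟩
        exact ⟨(t.orderIsoOfFin ht).symm ⟨x, hx⟩, by simp [hxle], by simp⟩
      · rintro ⟨j, hj, rfl⟩
        exact ⟨(t.orderIsoOfFin ht j).2, hj⟩
    rw [himg]
    calc ((Finset.univ.filter (fun j : Fin m => (t.orderIsoOfFin ht j : X) ≤ β)).image
          (fun j => (t.orderIsoOfFin ht j : X))).card
        ≤ (Finset.univ.filter (fun j : Fin m => (t.orderIsoOfFin ht j : X) ≤ β)).card :=
          Finset.card_image_le
      _ ≤ (Finset.Iio i).card := by
          apply Finset.card_le_card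
          intro j hj
          rw [Finset.mem_filter] at hj
          rw [Finset.mem_Iio]
          by_contra hji
          push_neg at hji
          have h3 : ((t.orderIsoOfFin ht) i : X) ≤ ((t.orderIsoOfFin ht) j : X) :=
            (t.orderIsoOfFin ht).monotone hji
          exact absurd (lt_of_le_of_lt (le_trans h3 hj.2) hc) (lt_irrefl _)
      _ = i := Fin.card_Iio i
  have := h β
  omega

end Helpers

open scoped Classical in
/-- matching through an explicit linear order -/
theorem matching_term {X : Type*} (lo : LinearOrder X) {m : ℕ} (s t : Finset X)
    (hs : s.card = m) (ht : t.card = m)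
    (h : ∀ β : X, (s.filter (fun α => lo.le α β)).card ≤ (t.filter (fun α => lo.le α β)).card)
    (φ : Fin m → {x // x ∈ s}) (hφ : Function.Injective φ) :
    ∃ σ : Fin m → {x // x ∈ t}, Function.Injective σ ∧
      ∀ i, lo.le (σ i : X) (φ i : X) := by
  letI := lo
  have h' : ∀ β : X, (s.filter (· ≤ β)).card ≤ (t.filter (· ≤ β)).card := by
    intro β
    have e1 : s.filter (· ≤ β) = s.filter (fun α => lo.le α β) :=
      Finset.filter_congr (fun α _ => Iff.rfl)
    have e2 : t.filter (· ≤ β) = t.filter (fun α => lo.le α β) :=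
      Finset.filter_congr (fun α _ => Iff.rfl)
    rw [e1, e2]; exact h β
  refine ⟨fun i => t.orderIsoOfFin ht ((s.orderIsoOfFin hs).symm (φ i)), ?_, ?_⟩
  · intro i j hij
    exact hφ ((s.orderIsoOfFin hs).symm.injective ((t.orderIsoOfFin ht).injective hij))
  · intro i
    have h3 := orderIsoOfFin_le_of_counts s t hs ht h' ((s.orderIsoOfFin hs).symm (φ i))
    have h2 : (s.orderIsoOfFin hs ((s.orderIsoOfFin hs).symm (φ i)) : X) = (φ i : X) := by
      rw [OrderIso.apply_symm_apply]
    show (t.orderIsoOfFin ht ((s.orderIsoOfFin hs).symm (φ i)) : X) ≤ (φ i : X)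
    rw [← h2]
    exact h3
section LemmaC
variable {n : ℕ} {k : Type*} [Field k] {A : Type*} [AddCommMonoid A]
open MvPolynomial
variable {𝒜 : (Fin n →₀ ℕ) → A} {a : A}

/-- polynomials all of whose exponents are `τ`-bounded by `β` -/
def expBounded (τ : TermOrder n) (β : Fin n →₀ ℕ) : Submodule k (MvPolynomial (Fin n) k) where
  carrier := {f | ∀ γ ∈ f.support, γ = β ∨ τ.lt γ β}
  add_mem' := by
    intro f g hf hg γ hγ
    rcases Finset.mem_union.mp (MvPolynomial.support_add hγ) with h | h
    exacts [hf γ h, hg γ h]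
  zero_mem' := by intro γ hγ; simp at hγ
  smul_mem' := by intro c f hf γ hγ; exact hf γ (MvPolynomial.support_smul hγ)

theorem mem_expBounded {τ : TermOrder n} {β : Fin n →₀ ℕ} {f : MvPolynomial (Fin n) k} :
    f ∈ expBounded τ β ↔ ∀ γ ∈ f.support, γ = β ∨ τ.lt γ β := Iff.rfl

open scoped Classical in
theorem count_le (τ₁ τ₂ : TermOrder n)
    (hfib : ∀ a : A, {b : Fin n →₀ ℕ | 𝒜 b = a}.Finite)
    {V : Submodule k (MvPolynomial (Fin n) k)}
    (hV : ∀ f ∈ V, ∀ b ∈ f.support, 𝒜 b = a)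
    (L1 L2 : Finset (Fin n →₀ ℕ)) (hL1 : ↑L1 = LSet τ₁ V) (hL2 : ↑L2 = LSet τ₂ V)
    (β : Fin n →₀ ℕ) :
    (L1.filter (fun α => α = β ∨ τ₁.lt α β)).card ≤
    (L2.filter (fun α => α = β ∨ τ₁.lt α β)).card := by
  classical
  set U := V ⊓ expBounded (k := k) τ₁ β with hU
  have hUdeg : ∀ f ∈ U, ∀ b ∈ f.support, 𝒜 b = a := fun f hf => hV f hf.1
  obtain ⟨g1, hg1W, hg10, hg1lead, hg1li, hg1span⟩ := exists_leadBasis τ₁ hfib hUdeg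
  obtain ⟨g2, hg2W, hg20, hg2lead, hg2li, hg2span⟩ := exists_leadBasis τ₂ hfib hUdeg
  haveI F1 : Fintype (LSet τ₁ U) := (LSet_finite τ₁ hfib hUdeg).fintype
  haveI F2 : Fintype (LSet τ₂ U) := (LSet_finite τ₂ hfib hUdeg).fintype
  have e1 : Module.finrank k U = Fintype.card (LSet τ₁ U) :=
    finrank_eq_card_of_family hg1W hg1li hg1span
  have e2 : Module.finrank k U = Fintype.card (LSet τ₂ U) :=
    finrank_eq_card_of_family hg2W hg2li hg2span
  have hcardeq : (LSet τ₁ U).ncard = (LSet τ₂ U).ncard := by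
    rw [← Nat.card_coe_set_eq, ← Nat.card_coe_set_eq, Nat.card_eq_fintype_card,
      Nat.card_eq_fintype_card, ← e1, ← e2]
  have ha : LSet τ₁ U = {α | α ∈ LSet τ₁ V ∧ (α = β ∨ τ₁.lt α β)} := by
    ext α
    constructor
    · rintro ⟨f, hfU, hf0, rfl⟩
      exact ⟨⟨f, hfU.1, hf0, rfl⟩, hfU.2 _ (τ₁.leadExp_mem hf0)⟩
    · rintro ⟨⟨f, hfV, hf0, rfl⟩, hle⟩
      refine ⟨f, ⟨hfV, ?_⟩, hf0, rfl⟩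
      intro γ hγ
      rcases eq_or_ne γ (τ₁.leadExp f) with rfl | hne
      · exact hle
      · rcases hle with rfl | hlt
        · exact Or.inr (τ₁.lt_leadExp hf0 hγ hne)
        · exact Or.inr (τ₁.trans _ _ _ (τ₁.lt_leadExp hf0 hγ hne) hlt)
  have hb : LSet τ₂ U ⊆ {α | α ∈ LSet τ₂ V ∧ (α = β ∨ τ₁.lt α β)} := by
    rintro α ⟨f, hfU, hf0, rfl⟩
    exact ⟨⟨f, hfU.1, hf0, rfl⟩, hfU.2 _ (τ₂.leadExp_mem hf0)⟩
  have hL1eq : ((L1.filter (fun α => α = β ∨ τ₁.lt α β) : Finset _) : Set _) = LSet τ₁ U := by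
    rw [ha]
    ext α
    simp only [Finset.coe_filter, Set.mem_setOf_eq]
    rw [← hL1]
    simp
  have hL2sub : LSet τ₂ U ⊆ ((L2.filter (fun α => α = β ∨ τ₁.lt α β) : Finset _) : Set _) := by
    intro α hα
    have := hb hα
    simp only [Finset.coe_filter, Set.mem_setOf_eq]
    rw [← hL2] at this
    simpa using this
  have c1 : (L1.filter (fun α => α = β ∨ τ₁.lt α β)).card = (LSet τ₁ U).ncard := by
    rw [← hL1eq, Set.ncard_coe_finset]
  have c2 : (LSet τ₂ U).ncard ≤ (L2.filter (fun α => α = β ∨ τ₁.lt α β)).card := by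
    rw [← Set.ncard_coe_finset (L2.filter (fun α => α = β ∨ τ₁.lt α β))]
    exact Set.ncard_le_ncard hL2sub (Finset.finite_toSet _)
  omega

end LemmaC

/-- Lemma 4.1 of Lauritzen: given two term orders `≤₁`, `≤₂` and a basis of
`I_a` whose `≤₁`-initial terms form a basis of `(in_{≤₁}(I))_a`, there is a
basis of `I_a` whose `≤₂`-initial terms form a basis of `(in_{≤₂}(I))_a` and
whose `≤₂`-initial terms are `≤₁`-bounded by the respective `≤₁`-initial terms. -/
theorem exists_basis_initialTerms_le {A : Type*} [AddCommMonoid A]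
    (𝒜 : (Fin n →₀ ℕ) → A) (hadd : ∀ x y, 𝒜 (x + y) = 𝒜 x + 𝒜 y)
    (hfib : ∀ a : A, {b : Fin n →₀ ℕ | 𝒜 b = a}.Finite)
    (I : Ideal (MvPolynomial (Fin n) k)) (hI : IsHomogeneousIdeal 𝒜 I)
    (τ₁ τ₂ : TermOrder n) (a : A) (s : ℕ)
    (f₁ : Fin s → MvPolynomial (Fin n) k)
    (hmem₁ : ∀ i, f₁ i ∈ Submodule.restrictScalars k I ⊓ gradedPiece (k := k) 𝒜 a)
    (hli₁ : LinearIndependent k f₁)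
    (hspan₁ : Submodule.span k (Set.range f₁) =
      Submodule.restrictScalars k I ⊓ gradedPiece (k := k) 𝒜 a)
    (hliIn₁ : LinearIndependent k (fun i => τ₁.initialTerm (f₁ i)))
    (hspanIn₁ : Submodule.span k (Set.range fun i => τ₁.initialTerm (f₁ i)) =
      Submodule.restrictScalars k (τ₁.initialIdeal I) ⊓ gradedPiece (k := k) 𝒜 a) :
    ∃ f₂ : Fin s → MvPolynomial (Fin n) k,
      (∀ i, f₂ i ∈ Submodule.restrictScalars k I ⊓ gradedPiece (k := k) 𝒜 a) ∧
      LinearIndependent k f₂ ∧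
      Submodule.span k (Set.range f₂) =
        Submodule.restrictScalars k I ⊓ gradedPiece (k := k) 𝒜 a ∧
      LinearIndependent k (fun i => τ₂.initialTerm (f₂ i)) ∧
      Submodule.span k (Set.range fun i => τ₂.initialTerm (f₂ i)) =
        Submodule.restrictScalars k (τ₂.initialIdeal I) ⊓ gradedPiece (k := k) 𝒜 a ∧
      ∀ i, ¬ τ₁.lt (τ₁.leadExp (f₁ i)) (τ₂.leadExp (f₂ i)) := by
  classical
  set V := Submodule.restrictScalars k I ⊓ gradedPiece (k := k) 𝒜 a with hVdef
  have hVdeg : ∀ f ∈ V, ∀ b ∈ f.support, 𝒜 b = a := fun f hf => hf.2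
  have hL1fin : (LSet τ₁ V).Finite := LSet_finite τ₁ hfib hVdeg
  have hL2fin : (LSet τ₂ V).Finite := LSet_finite τ₂ hfib hVdeg
  haveI F1 : Fintype (LSet τ₁ V) := hL1fin.fintype
  haveI F2 : Fintype (LSet τ₂ V) := hL2fin.fintype
  set L1 := hL1fin.toFinset with hL1def
  set L2 := hL2fin.toFinset with hL2def
  have hfr : Module.finrank k V = s := by
    rw [finrank_eq_card_of_family hmem₁ hli₁ hspan₁, Fintype.card_fin]
  obtain ⟨g1, hg1W, hg10, hg1lead, hg1li, hg1span⟩ := exists_leadBasis τ₁ hfib hVdeg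
  obtain ⟨g2, hg2W, hg20, hg2lead, hg2li, hg2span⟩ := exists_leadBasis τ₂ hfib hVdeg
  have hcard1 : L1.card = s := by
    rw [hL1def, Set.Finite.card_toFinset, ← finrank_eq_card_of_family hg1W hg1li hg1span, hfr]
  have hcard2 : L2.card = s := by
    rw [hL2def, Set.Finite.card_toFinset, ← finrank_eq_card_of_family hg2W hg2li hg2span, hfr]
  have hne0 : ∀ i, f₁ i ≠ 0 := fun i => hli₁.ne_zero i
  -- the map i ↦ leadExp₁ (f₁ i) is injective
  have hφinj0 : Function.Injective (fun i => τ₁.leadExp (f₁ i)) := by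
    intro i j hij
    by_contra hne
    simp only at hij
    have hci : (f₁ i).coeff (τ₁.leadExp (f₁ i)) ≠ 0 := τ₁.leadCoeff_ne_zero (hne0 i)
    have hcj : (f₁ j).coeff (τ₁.leadExp (f₁ j)) ≠ 0 := τ₁.leadCoeff_ne_zero (hne0 j)
    have hrel : Finsupp.linearCombination k (fun i => τ₁.initialTerm (f₁ i))
        (Finsupp.single i ((f₁ j).coeff (τ₁.leadExp (f₁ j))) -
         Finsupp.single j ((f₁ i).coeff (τ₁.leadExp (f₁ i)))) = 0 := by
      rw [map_sub, Finsupp.linearCombination_single, Finsupp.linearCombination_single,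
        TermOrder.initialTerm, TermOrder.initialTerm, ← hij, MvPolynomial.smul_monomial,
        MvPolynomial.smul_monomial, smul_eq_mul, smul_eq_mul, mul_comm, sub_self]
    have hz := linearIndependent_iff.mp hliIn₁ _ hrel
    have := DFunLike.congr_fun hz i
    rw [Finsupp.sub_apply, Finsupp.single_apply, Finsupp.single_apply] at this
    rw [if_pos rfl, if_neg (Ne.symm hne)] at this
    simp only [Finsupp.coe_zero, Pi.zero_apply, sub_zero] at this
    exact hcj this
  set φ : Fin s → {x // x ∈ L1} := fun i =>
    ⟨τ₁.leadExp (f₁ i), by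
      rw [hL1def, Set.Finite.mem_toFinset]
      exact ⟨f₁ i, hmem₁ i, hne0 i, rfl⟩⟩ with hφdef
  have hφinj : Function.Injective φ := by
    intro i j h
    exact hφinj0 (congrArg Subtype.val h)
  -- matching via the τ₁-linear order
  have hcount : ∀ β : Fin n →₀ ℕ,
      (L1.filter (fun α => (τ₁.toLinearOrder).le α β)).card ≤
      (L2.filter (fun α => (τ₁.toLinearOrder).le α β)).card := by
    intro β
    have hc := count_le τ₁ τ₂ hfib hVdeg L1 L2 (Set.Finite.coe_toFinset _)
      (Set.Finite.coe_toFinset _) β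
    have e1 : L1.filter (fun α => (τ₁.toLinearOrder).le α β) =
        L1.filter (fun α => α = β ∨ τ₁.lt α β) :=
      Finset.filter_congr (fun α _ => τ₁.toLinearOrder_le α β)
    have e2 : L2.filter (fun α => (τ₁.toLinearOrder).le α β) =
        L2.filter (fun α => α = β ∨ τ₁.lt α β) :=
      Finset.filter_congr (fun α _ => τ₁.toLinearOrder_le α β)
    rw [e1, e2]
    exact hc
  obtain ⟨σ, hσinj, hσle⟩ := matching_term τ₁.toLinearOrder L1 L2 hcard1 hcard2 hcount φ hφinj
  set ψ : Fin s → LSet τ₂ V := fun i =>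
    ⟨(σ i : Fin n →₀ ℕ), (Set.Finite.mem_toFinset _).mp (σ i).2⟩ with hψdef
  have hψinj : Function.Injective ψ := by
    intro i j h
    apply hσinj
    apply Subtype.ext
    have h2 : (ψ i : Fin n →₀ ℕ) = (ψ j : Fin n →₀ ℕ) := congrArg Subtype.val h
    exact h2
  have hψbij : Function.Bijective ψ := by
    rw [Fintype.bijective_iff_injective_and_card]
    refine ⟨hψinj, ?_⟩
    rw [Fintype.card_fin]
    rw [← hcard2, hL2def, Set.Finite.card_toFinset]
  set f₂ : Fin s → MvPolynomial (Fin n) k := fun i => g2 (ψ i) with hf₂def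
  have hleadf₂ : ∀ i, τ₂.leadExp (f₂ i) = (σ i : Fin n →₀ ℕ) := fun i => hg2lead (ψ i)
  have hmem₂ : ∀ i, f₂ i ∈ V := fun i => hg2W (ψ i)
  have hli₂ : LinearIndependent k f₂ := hg2li.comp ψ hψinj
  have hrange : Set.range f₂ = Set.range g2 := by
    ext x
    constructor
    · rintro ⟨i, rfl⟩; exact ⟨ψ i, rfl⟩
    · rintro ⟨α, rfl⟩
      obtain ⟨i, rfl⟩ := hψbij.2 α
      exact ⟨i, rfl⟩
  have hspan₂ : Submodule.span k (Set.range f₂) = V := by rw [hrange, hg2span]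
  have hleadinj₂ : Function.Injective (fun i => τ₂.leadExp (f₂ i)) := by
    intro i j h
    have h' : (σ i : Fin n →₀ ℕ) = (σ j : Fin n →₀ ℕ) := by
      rw [← hleadf₂ i, ← hleadf₂ j]; exact h
    exact hσinj (Subtype.ext h')
  have hliIn₂ : LinearIndependent k (fun i => τ₂.initialTerm (f₂ i)) :=
    li_initialTerms τ₂ (fun i => hg20 (ψ i)) hleadinj₂
  have hspanIn₂ : Submodule.span k (Set.range fun i => τ₂.initialTerm (f₂ i)) =
      Submodule.restrictScalars k (τ₂.initialIdeal I) ⊓ gradedPiece (k := k) 𝒜 a := by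
    rw [initialIdeal_gradedPiece τ₂ hadd hI a]
    apply le_antisymm
    · rw [Submodule.span_le]
      rintro p ⟨i, rfl⟩
      exact Submodule.subset_span
        ⟨f₂ i, ⟨(hmem₂ i).1, hg20 (ψ i), (hmem₂ i).2⟩, rfl⟩
    · rw [Submodule.span_le]
      rintro p ⟨g, ⟨hgI, hg0, hghom⟩, rfl⟩
      have hgV : g ∈ V := ⟨hgI, hghom⟩
      have hαL : τ₂.leadExp g ∈ LSet τ₂ V := ⟨g, hgV, hg0, rfl⟩
      obtain ⟨i, hi⟩ := hψbij.2 ⟨τ₂.leadExp g, hαL⟩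
      have hle : τ₂.leadExp (f₂ i) = τ₂.leadExp g := by
        rw [hf₂def]
        simp only
        rw [hg2lead (ψ i), hi]
      have hci : (f₂ i).coeff (τ₂.leadExp g) ≠ 0 := by
        rw [← hle]
        exact τ₂.leadCoeff_ne_zero (hg20 (ψ i))
      have hkey : τ₂.initialTerm g =
          (g.coeff (τ₂.leadExp g) / (f₂ i).coeff (τ₂.leadExp g)) • τ₂.initialTerm (f₂ i) := by
        rw [TermOrder.initialTerm, TermOrder.initialTerm, hle, MvPolynomial.smul_monomial,
          smul_eq_mul, div_mul_cancel₀ _ hci]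
      rw [SetLike.mem_coe, hkey]
      exact Submodule.smul_mem _ _ (Submodule.subset_span ⟨i, rfl⟩)
  refine ⟨f₂, hmem₂, hli₂, hspan₂, hliIn₂, hspanIn₂, ?_⟩
  intro i
  have hb' : (σ i : Fin n →₀ ℕ) = (φ i : Fin n →₀ ℕ) ∨
      τ₁.lt (σ i : Fin n →₀ ℕ) (φ i : Fin n →₀ ℕ) :=
    (τ₁.toLinearOrder_le _ _).mp (hσle i)
  have hφval : (φ i : Fin n →₀ ℕ) = τ₁.leadExp (f₁ i) := rfl
  rw [hφval] at hb'
  rw [hleadf₂ i]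
  rcases hb' with heq | hlt
  · rw [heq]; exact τ₁.irrefl _
  · exact τ₁.asymm_s14 hlt
end
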